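/- arXiv:2012.11094 — 7 statements merged into one kernel-verified Lean document; each statement's English description precedes it below -/
import Mathlib

section
/- Let α and β be measurable spaces, let μ be a probability measure on α, ν a probability measure on β, and let π be a probability measure on α × β that is absolutely continuous with respect to the product measure μ ⊗ ν. Let π_X denote the pushforward of π under the first projection. Then ∫ (dπ_X/dμ)² dμ ≤ ∫ (dπ/d(μ⊗ν))² d(μ⊗ν); equivalently, the chi-square divergence satisfies χ²(π_X ‖ μ) ≤ χ²(π ‖ μ⊗ν). -/
open MeasureTheory
open scoped ENNReal

open ENNReal in
lemma sq_lintegral_le {β : Type*} [MeasurableSpace β] (ν : Measure β) [IsProbabilityMeasure ν]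
    {f : β → ℝ≥0∞} (hf : AEMeasurable f ν) :
    (∫⁻ y, f y ∂ν) ^ 2 ≤ ∫⁻ y, f y ^ 2 ∂ν := by
  have h := ENNReal.lintegral_mul_le_Lp_mul_Lq ν (p := 2) (q := 2) Real.HolderConjugate.two_two
      hf aemeasurable_const (g := fun _ => (1 : ℝ≥0∞))
  simp only [mul_one, Pi.mul_apply, ENNReal.one_rpow, lintegral_const, measure_univ,
    ENNReal.one_rpow, one_mul] at h
  have h2 : ∫⁻ y, f y ∂ν ≤ (∫⁻ y, f y ^ (2:ℝ) ∂ν) ^ (1/(2:ℝ)) := by simpa using h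
  calc (∫⁻ y, f y ∂ν) ^ 2 ≤ ((∫⁻ y, f y ^ (2:ℝ) ∂ν) ^ (1/(2:ℝ))) ^ 2 := pow_le_pow_left' h2 2
    _ = ∫⁻ y, f y ^ 2 ∂ν := by
        rw [← ENNReal.rpow_natCast _ 2, ← ENNReal.rpow_mul]
        norm_num

lemma map_fst_withDensity {α β : Type*} [MeasurableSpace α] [MeasurableSpace β]
    (μ : Measure α) (ν : Measure β) [SFinite μ] [SFinite ν] {f : α × β → ℝ≥0∞} (hf : Measurable f) :
    ((μ.prod ν).withDensity f).map Prod.fst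
      = μ.withDensity (fun x => ∫⁻ y, f (x, y) ∂ν) := by
  ext s hs
  rw [Measure.map_apply measurable_fst hs, withDensity_apply _ (measurable_fst hs),
    withDensity_apply _ hs]
  have hpre : Prod.fst ⁻¹' s = s ×ˢ (Set.univ : Set β) := by ext p; simp
  rw [hpre, ← Measure.restrict_prod_eq_prod_univ,
    lintegral_prod _ hf.aemeasurable]

/-- For probability measures `π ≪ μ ⊗ ν` on a product space, the chi-square
divergence of the first marginal `π_X = π ∘ fst⁻¹` with respect to `μ` is bounded by the
chi-square divergence of `π` with respect to `μ ⊗ ν`; in integral form,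
`∫ (dπ_X/dμ)² dμ ≤ ∫ (dπ/d(μ⊗ν))² d(μ⊗ν)`. -/
theorem chiSq_marginal_le {α β : Type*} [MeasurableSpace α] [MeasurableSpace β]
    (μ : Measure α) (ν : Measure β) (π : Measure (α × β))
    [IsProbabilityMeasure μ] [IsProbabilityMeasure ν] [IsProbabilityMeasure π]
    (hac : π ≪ μ.prod ν) :
    ∫⁻ x, ((π.map Prod.fst).rnDeriv μ x) ^ 2 ∂μ
      ≤ ∫⁻ p, (π.rnDeriv (μ.prod ν) p) ^ 2 ∂(μ.prod ν) := by
  set f := π.rnDeriv (μ.prod ν) with hfdef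
  have hf : Measurable f := Measure.measurable_rnDeriv _ _
  have hπ : (μ.prod ν).withDensity f = π := Measure.withDensity_rnDeriv_eq π (μ.prod ν) hac
  set g : α → ℝ≥0∞ := fun x => ∫⁻ y, f (x, y) ∂ν with hgdef
  have hg : Measurable g := hf.lintegral_prod_right'
  have hmap : π.map Prod.fst = μ.withDensity g := by
    rw [← hπ]; exact map_fst_withDensity μ ν hf
  have hrn : (π.map Prod.fst).rnDeriv μ =ᵐ[μ] g := by
    rw [hmap]; exact Measure.rnDeriv_withDensity μ hg
  calc ∫⁻ x, ((π.map Prod.fst).rnDeriv μ x) ^ 2 ∂μ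
      = ∫⁻ x, g x ^ 2 ∂μ := lintegral_congr_ae (hrn.mono fun x hx => by dsimp only; rw [hx])
    _ ≤ ∫⁻ x, ∫⁻ y, f (x, y) ^ 2 ∂ν ∂μ :=
        lintegral_mono fun x => sq_lintegral_le ν (hf.comp (measurable_prodMk_left)).aemeasurable
    _ = ∫⁻ p, f p ^ 2 ∂(μ.prod ν) := (lintegral_prod _ ((hf.pow_const 2).aemeasurable)).symm
end

section
/- There exists a universal constant C with the following property. Let r > 0 and T > 0 with rT ≥ C. Let (t_k)_{k≥1} be i.i.d. random variables with the exponential distribution of rate r (density r e^{−rs} on s > 0). Let N = #{n ≥ 1 : t_1 + ⋯ + t_n ≤ T} be the number of arrivals before time T, and set Ξ = Σ_{k=1}^{N} t_k² + (T − Σ_{k=1}^{N} t_k)². Then P(Ξ ≥ 4T/r) ≤ 2/(rT). -/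
open MeasureTheory ProbabilityTheory
open Real Set Filter
open scoped ENNReal NNReal

section ExpFacts

variable {r : ℝ}

lemma expPDFReal_eq (r x : ℝ) :
    exponentialPDFReal r x = if 0 ≤ x then r * exp (-(r * x)) else 0 := by
  unfold exponentialPDFReal gammaPDFReal
  simp [Real.rpow_one, Real.Gamma_one]

lemma expMeasure_eq' (r : ℝ) :
    expMeasure r
      = volume.withDensity (fun x => ((exponentialPDFReal r x).toNNReal : ℝ≥0∞)) := rfl

lemma integral_expMeasure (hr : 0 < r) (g : ℝ → ℝ) :
    ∫ x, g x ∂(expMeasure r) = ∫ x in Ioi 0, g x * (r * exp (-(r * x))) := by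
  rw [expMeasure_eq' r,
    integral_withDensity_eq_integral_smul
      ((measurable_exponentialPDFReal r).real_toNNReal) g]
  rw [← integral_indicator measurableSet_Ioi]
  apply integral_congr_ae
  have h0 : ∀ᵐ x : ℝ, x ≠ 0 :=
    ae_iff.2 (by simpa using (volume_singleton (a := (0:ℝ))))
  filter_upwards [h0] with x hx
  rcases lt_trichotomy x 0 with h | h | h
  · simp [indicator, expPDFReal_eq, not_le.2 h, h.not_gt]
  · exact absurd h hx
  · simp only [indicator, mem_Ioi, h, if_pos]
    rw [NNReal.smul_def, smul_eq_mul, Real.coe_toNNReal _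
      (by rw [expPDFReal_eq]; positivity), expPDFReal_eq, if_pos h.le]
    ring

lemma integrable_expMeasure_iff (hr : 0 < r) (g : ℝ → ℝ) :
    Integrable g (expMeasure r)
      ↔ IntegrableOn (fun x => g x * (r * exp (-(r * x)))) (Ioi 0) := by
  rw [expMeasure_eq' r]
  rw [show (fun x : ℝ => ((exponentialPDFReal r x).toNNReal : ℝ≥0∞))
      = fun x : ℝ => ENNReal.ofReal (exponentialPDFReal r x) from rfl]
  rw [integrable_withDensity_iff ((measurable_exponentialPDFReal r).ennreal_ofReal) (ae_of_all _ fun x => ENNReal.ofReal_lt_top)]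
  rw [← integrable_indicator_iff (measurableSet_Ioi (a := (0:ℝ)))]
  apply integrable_congr
  have h0 : ∀ᵐ x : ℝ, x ≠ 0 :=
    ae_iff.2 (by simpa using (volume_singleton (a := (0:ℝ))))
  filter_upwards [h0] with x hx
  rcases lt_trichotomy x 0 with h | h | h
  · simp [indicator, expPDFReal_eq, not_le.2 h, h.not_gt]
  · exact absurd h hx
  · simp only [indicator, mem_Ioi, h, if_pos]
    rw [ENNReal.toReal_ofReal (by rw [expPDFReal_eq]; positivity), expPDFReal_eq, if_pos h.le]

end ExpFacts

section Moments
variable {r : ℝ}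

lemma integrableOn_pow_mul_exp (hr : 0 < r) (n : ℕ) :
    IntegrableOn (fun x : ℝ => x ^ n * exp (-(r * x))) (Ioi 0) := by
  have h := integrableOn_rpow_mul_exp_neg_mul_rpow (s := (n : ℝ)) (b := r)
    (p := 1) (by exact lt_of_lt_of_le neg_one_lt_zero (Nat.cast_nonneg n)) one_pos hr
  apply h.congr_fun ?_ measurableSet_Ioi
  intro x hx
  simp only [Real.rpow_one, Real.rpow_natCast]
  ring_nf

lemma integral_pow_exp (hr : 0 < r) (n : ℕ) :
    ∫ x in Ioi 0, x ^ n * exp (-(r * x)) = (Nat.factorial n : ℝ) / r ^ (n + 1) := by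
  have h := integral_rpow_mul_exp_neg_mul_Ioi (a := (n : ℝ) + 1) (by positivity) hr
  rw [show ((n : ℝ) + 1 - 1) = (n : ℝ) by ring] at h
  rw [show (∫ x in Ioi 0, x ^ n * exp (-(r * x)))
      = ∫ x in Ioi 0, x ^ ((n : ℝ)) * exp (-(r * x)) from
    setIntegral_congr_fun measurableSet_Ioi (fun x hx => by
      rw [Real.rpow_natCast])]
  rw [h, Real.Gamma_nat_eq_factorial,
    show ((n : ℝ) + 1) = ((n + 1 : ℕ) : ℝ) by push_cast; ring,
    Real.rpow_natCast, div_pow, one_pow]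
  field_simp

lemma integrable_pow_expMeasure (hr : 0 < r) (n : ℕ) :
    Integrable (fun x : ℝ => x ^ n) (expMeasure r) := by
  rw [integrable_expMeasure_iff hr]
  have h := (integrableOn_pow_mul_exp hr n).const_mul r
  exact IntegrableOn.congr_fun h (fun x _ => by ring) measurableSet_Ioi

lemma integral_pow_expMeasure (hr : 0 < r) (n : ℕ) :
    ∫ x, x ^ n ∂(expMeasure r) = (Nat.factorial n : ℝ) / r ^ n := by
  rw [integral_expMeasure hr]
  rw [show (∫ x in Ioi 0, x ^ n * (r * exp (-(r * x))))
      = ∫ x in Ioi 0, r * (x ^ n * exp (-(r * x))) from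
    setIntegral_congr_fun measurableSet_Ioi (fun x _ => by ring)]
  rw [integral_const_mul, integral_pow_exp hr n, pow_succ]
  field_simp

lemma integrable_exp_neg_expMeasure (hr : 0 < r) :
    Integrable (fun x : ℝ => exp (-(r * x))) (expMeasure r) := by
  rw [integrable_expMeasure_iff hr]
  have h := ((exp_neg_integrableOn_Ioi 0 (by positivity : (0:ℝ) < 2 * r)).const_mul r)
  refine IntegrableOn.congr_fun h (fun x _ => ?_) measurableSet_Ioi
  show r * rexp (-(2 * r) * x) = _
  rw [show -(2 * r) * x = -(r * x) + -(r * x) by ring, Real.exp_add]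
  ring

lemma integral_exp_neg_expMeasure (hr : 0 < r) :
    ∫ x, exp (-(r * x)) ∂(expMeasure r) = 1 / 2 := by
  rw [integral_expMeasure hr]
  rw [show (∫ x in Ioi 0, exp (-(r * x)) * (r * exp (-(r * x))))
      = ∫ x in Ioi 0, r * (x ^ 0 * exp (-((2 * r) * x))) from
    setIntegral_congr_fun measurableSet_Ioi (fun x _ => by
      rw [pow_zero, one_mul, show -(2 * r * x) = -(r * x) + -(r * x) by ring, Real.exp_add]
      ring)]
  rw [integral_const_mul, integral_pow_exp (by positivity) 0]
  rw [Nat.factorial_zero, pow_one]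
  push_cast
  field_simp

lemma expMeasure_Iic_zero (hr : 0 < r) : expMeasure r (Iic 0) = 0 := by
  rw [expMeasure, gammaMeasure, withDensity_apply _ measurableSet_Iic]
  rw [setLIntegral_congr (Iio_ae_eq_Iic (a := (0:ℝ))).symm]
  exact lintegral_gammaPDF_of_nonpos le_rfl

end Moments
section FourthMoment

lemma pow_abs_mul_pow_abs_le (x y : ℝ) {a b : ℕ} (h : a + b ≤ 4) :
    |x| ^ a * |y| ^ b ≤ 2 + x ^ 4 + y ^ 4 := by
  have hx4 : (0:ℝ) ≤ x ^ 4 := by positivity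
  have hy4 : (0:ℝ) ≤ y ^ 4 := by positivity
  have habs : ∀ z : ℝ, |z| ^ (a + b) ≤ 1 + z ^ 4 := by
    intro z
    rcases le_total |z| 1 with h1 | h1
    · have := pow_le_one₀ (abs_nonneg z) h1 (n := a + b)
      nlinarith [sq_nonneg (z^2)]
    · have h2 : |z| ^ (a + b) ≤ |z| ^ 4 := pow_le_pow_right₀ h1 h
      have h3 : |z| ^ 4 = z ^ 4 := by
        rw [← abs_pow, abs_of_nonneg (by positivity)]
      nlinarith
  rcases le_total |x| |y| with hxy | hxy
  · have h1 : |x| ^ a * |y| ^ b ≤ |y| ^ a * |y| ^ b := by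
      apply mul_le_mul_of_nonneg_right (pow_le_pow_left₀ (abs_nonneg x) hxy a) (by positivity)
    rw [← pow_add] at h1
    have := habs y
    nlinarith
  · have h1 : |x| ^ a * |y| ^ b ≤ |x| ^ a * |x| ^ b := by
      apply mul_le_mul_of_nonneg_left (pow_le_pow_left₀ (abs_nonneg y) hxy b) (by positivity)
    rw [← pow_add] at h1
    have := habs x
    nlinarith

lemma integrable_pow_mul_pow {Ω : Type} [MeasurableSpace Ω] {P : MeasureTheory.Measure Ω}
    [MeasureTheory.IsFiniteMeasure P]
    {f g : Ω → ℝ} (hf : MeasureTheory.AEStronglyMeasurable f P)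
    (hg : MeasureTheory.AEStronglyMeasurable g P)
    (hf4 : MeasureTheory.Integrable (fun ω => f ω ^ 4) P)
    (hg4 : MeasureTheory.Integrable (fun ω => g ω ^ 4) P)
    (a b : ℕ) (hab : a + b ≤ 4) :
    MeasureTheory.Integrable (fun ω => f ω ^ a * g ω ^ b) P := by
  refine MeasureTheory.Integrable.mono'
    ((hf4.add hg4).add (MeasureTheory.integrable_const 2)) ?_ (Filter.Eventually.of_forall fun ω => ?_)
  · exact (hf.pow a).mul (hg.pow b)
  · have := pow_abs_mul_pow_abs_le (f ω) (g ω) hab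
    calc ‖f ω ^ a * g ω ^ b‖ = |f ω| ^ a * |g ω| ^ b := by
          rw [Real.norm_eq_abs, abs_mul, abs_pow, abs_pow]
    _ ≤ 2 + f ω ^ 4 + g ω ^ 4 := this
    _ = (fun ω => f ω ^ 4 + g ω ^ 4 + 2) ω := by ring
    _ = _ := rfl

lemma fourth_moment_bound {Ω : Type} [MeasurableSpace Ω] (P : MeasureTheory.Measure Ω)
    [MeasureTheory.IsProbabilityMeasure P]
    (Y : ℕ → Ω → ℝ) (hmeas : ∀ i, Measurable (Y i))
    (hindep : ProbabilityTheory.iIndepFun Y P)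
    {m2 m4 : ℝ}
    (hint : ∀ i, MeasureTheory.Integrable (fun ω => (Y i ω) ^ 4) P)
    (h1 : ∀ i, ∫ ω, Y i ω ∂P = 0)
    (h2 : ∀ i, ∫ ω, (Y i ω) ^ 2 ∂P = m2)
    (h4 : ∀ i, ∫ ω, (Y i ω) ^ 4 ∂P = m4) :
    ∀ n : ℕ,
      MeasureTheory.Integrable (fun ω => (∑ i ∈ Finset.range n, Y i ω) ^ 4) P ∧
      (∫ ω, (∑ i ∈ Finset.range n, Y i ω) ∂P) = 0 ∧
      (∫ ω, (∑ i ∈ Finset.range n, Y i ω) ^ 2 ∂P) = n * m2 ∧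
      (∫ ω, (∑ i ∈ Finset.range n, Y i ω) ^ 4 ∂P) ≤ n * m4 + 3 * n ^ 2 * m2 ^ 2 := by
  intro n
  induction n with
  | zero => simp
  | succ n ih =>
    obtain ⟨ih4, ihE, ihV, ihF⟩ := ih
    set S : Ω → ℝ := fun ω => ∑ i ∈ Finset.range n, Y i ω with hSdef
    set Z : Ω → ℝ := Y n with hZdef
    have hSmeas : Measurable S := Finset.measurable_sum _ (fun i _ => hmeas i)
    have hZmeas : Measurable Z := hmeas n
    have hsum : ∀ ω, (∑ i ∈ Finset.range (n+1), Y i ω) = S ω + Z ω := fun ω => by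
      rw [Finset.sum_range_succ]
    have hSZ : ProbabilityTheory.IndepFun S Z P := by
      have h := hindep.indepFun_finsetSum_of_notMem hmeas (Finset.notMem_range_self (n := n))
      have heq : (∑ i ∈ Finset.range n, Y i) = S := by
        funext ω; simp [hSdef, Finset.sum_apply]
      rwa [heq] at h
    have hZ4 : MeasureTheory.Integrable (fun ω => Z ω ^ 4) P := hint n
    have hab : ∀ a b : ℕ, a + b ≤ 4 →
        MeasureTheory.Integrable (fun ω => S ω ^ a * Z ω ^ b) P := fun a b h =>
      integrable_pow_mul_pow hSmeas.aestronglyMeasurable hZmeas.aestronglyMeasurable ih4 hZ4 a b h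
    have key : ∀ a b : ℕ,
        (∫ ω, S ω ^ a * Z ω ^ b ∂P) = (∫ ω, S ω ^ a ∂P) * (∫ ω, Z ω ^ b ∂P) := by
      intro a b
      exact (hSZ.comp (measurable_id.pow_const a) (measurable_id.pow_const b)).integral_mul_eq_mul_integral
        ((hSmeas.pow_const a).aestronglyMeasurable) ((hZmeas.pow_const b).aestronglyMeasurable)
    have hS1 : MeasureTheory.Integrable S P := by
      have := hab 1 0 (by norm_num); simpa using this
    have hZ1 : MeasureTheory.Integrable Z P := by
      have := hab 0 1 (by norm_num); simpa using this
    have hS2 : MeasureTheory.Integrable (fun ω => S ω ^ 2) P := by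
      have := hab 2 0 (by norm_num); simpa using this
    have hZ2 : MeasureTheory.Integrable (fun ω => Z ω ^ 2) P := by
      have := hab 0 2 (by norm_num); simpa using this
    refine ⟨?_, ?_, ?_, ?_⟩
    · have hrw : (fun ω => (∑ i ∈ Finset.range (n+1), Y i ω) ^ 4)
          = fun ω => S ω ^ 4 * Z ω ^ 0 + (4 * (S ω ^ 3 * Z ω ^ 1) + (6 * (S ω ^ 2 * Z ω ^ 2)
            + (4 * (S ω ^ 1 * Z ω ^ 3) + S ω ^ 0 * Z ω ^ 4))) := by
        funext ω; rw [hsum ω]; ring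
      rw [hrw]
      exact (hab 4 0 (by norm_num)).add (((hab 3 1 (by norm_num)).const_mul 4).add
        (((hab 2 2 (by norm_num)).const_mul 6).add
          (((hab 1 3 (by norm_num)).const_mul 4).add (hab 0 4 (by norm_num)))))
    · simp_rw [hsum]
      rw [MeasureTheory.integral_add hS1 hZ1, ihE, h1 n]
      simp
    · have hrw : ∀ ω, (S ω + Z ω) ^ 2 = S ω ^ 2 + (2 * (S ω ^ 1 * Z ω ^ 1) + Z ω ^ 2) := by
        intro ω; ring
      simp_rw [hsum, hrw]
      have hi11 : MeasureTheory.Integrable (fun ω => 2 * (S ω ^ 1 * Z ω ^ 1)) P :=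
        (hab 1 1 (by norm_num)).const_mul 2
      have hi11z : MeasureTheory.Integrable (fun ω => 2 * (S ω ^ 1 * Z ω ^ 1) + Z ω ^ 2) P :=
        hi11.add hZ2
      rw [MeasureTheory.integral_add hS2 hi11z,
        MeasureTheory.integral_add hi11 hZ2,
        MeasureTheory.integral_const_mul, key 1 1]
      simp_rw [pow_one]
      rw [ihV, ihE, h2 n]
      push_cast; ring
    · have hrw : ∀ ω, (S ω + Z ω) ^ 4 = S ω ^ 4 + (4 * (S ω ^ 3 * Z ω ^ 1)
          + (6 * (S ω ^ 2 * Z ω ^ 2) + (4 * (S ω ^ 1 * Z ω ^ 3) + Z ω ^ 4))) := by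
        intro ω; ring
      simp_rw [hsum, hrw]
      have hi31 : MeasureTheory.Integrable (fun ω => 4 * (S ω ^ 3 * Z ω ^ 1)) P :=
        (hab 3 1 (by norm_num)).const_mul 4
      have hi22 : MeasureTheory.Integrable (fun ω => 6 * (S ω ^ 2 * Z ω ^ 2)) P :=
        (hab 2 2 (by norm_num)).const_mul 6
      have hi13 : MeasureTheory.Integrable (fun ω => 4 * (S ω ^ 1 * Z ω ^ 3)) P :=
        (hab 1 3 (by norm_num)).const_mul 4
      have ha : MeasureTheory.Integrable (fun ω => 4 * (S ω ^ 1 * Z ω ^ 3) + Z ω ^ 4) P :=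
        hi13.add hZ4
      have hb : MeasureTheory.Integrable
          (fun ω => 6 * (S ω ^ 2 * Z ω ^ 2) + (4 * (S ω ^ 1 * Z ω ^ 3) + Z ω ^ 4)) P :=
        hi22.add ha
      have hc : MeasureTheory.Integrable (fun ω => 4 * (S ω ^ 3 * Z ω ^ 1)
          + (6 * (S ω ^ 2 * Z ω ^ 2) + (4 * (S ω ^ 1 * Z ω ^ 3) + Z ω ^ 4))) P :=
        hi31.add hb
      rw [MeasureTheory.integral_add ih4 hc,
        MeasureTheory.integral_add hi31 hb,
        MeasureTheory.integral_add hi22 ha,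
        MeasureTheory.integral_add hi13 hZ4,
        MeasureTheory.integral_const_mul, MeasureTheory.integral_const_mul,
        MeasureTheory.integral_const_mul, key 3 1, key 2 2, key 1 3]
      have hZ1val : (∫ ω, Z ω ^ 1 ∂P) = 0 := by simpa using h1 n
      have hS1val : (∫ ω, S ω ^ 1 ∂P) = 0 := by simpa using ihE
      rw [hZ1val, hS1val, h4 n, h2 n, ihV]
      have hm2 : 0 ≤ m2 ^ 2 := sq_nonneg m2
      push_cast
      nlinarith [ihF]
  done

end FourthMoment
section Det

lemma det_split (a : ℕ → ℝ) (ha : ∀ k, 0 < a k) (T c : ℝ) (hT : 0 ≤ T) (M : ℕ) (hM : 1 ≤ M)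
    (h : c ≤ (∑ k ∈ Finset.range
          (Set.ncard {n : ℕ | 0 < n ∧ ∑ j ∈ Finset.range n, a j ≤ T}), a k ^ 2)
        + (T - ∑ k ∈ Finset.range
          (Set.ncard {n : ℕ | 0 < n ∧ ∑ j ∈ Finset.range n, a j ≤ T}), a k) ^ 2) :
    (∑ j ∈ Finset.range M, a j) ≤ T ∨ c ≤ ∑ k ∈ Finset.range M, a k ^ 2 := by
  by_cases hSM : (∑ j ∈ Finset.range M, a j) ≤ T
  · exact Or.inl hSM
  push_neg at hSM
  right
  set A : Set ℕ := {n : ℕ | 0 < n ∧ ∑ j ∈ Finset.range n, a j ≤ T} with hA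
  have mono : ∀ {p q : ℕ}, p ≤ q →
      (∑ j ∈ Finset.range p, a j) ≤ ∑ j ∈ Finset.range q, a j := by
    intro p q hpq
    apply Finset.sum_le_sum_of_subset_of_nonneg (Finset.range_subset_range.2 hpq)
    exact fun i _ _ => (ha i).le
  have hAsub : ∀ n ∈ A, n < M := by
    intro n hn
    by_contra hc2
    push_neg at hc2
    exact absurd (le_trans (mono hc2) hn.2) (not_le.2 hSM)
  rcases eq_or_ne A ∅ with hAe | hAe
  · rw [hAe] at h
    simp only [Set.ncard_empty, Finset.range_zero, Finset.sum_empty, sub_zero, zero_add] at h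
    have h1 : (1 : ℕ) ∉ A := by rw [hAe]; simp
    have h1' : T < a 0 := by
      by_contra hc2
      push_neg at hc2
      exact h1 ⟨one_pos, by simpa using hc2⟩
    have hT2 : T ^ 2 ≤ a 0 ^ 2 := by
      apply pow_le_pow_left₀ hT h1'.le
    have h0M : (0 : ℕ) ∈ Finset.range M := Finset.mem_range.2 hM
    have h5 := Finset.single_le_sum (f := fun k => a k ^ 2)
      (fun i _ => sq_nonneg (a i)) h0M
    linarith
  · have hfin : A.Finite := Set.Finite.subset (Set.finite_Iio M) (fun n hn => hAsub n hn)
    have hne : hfin.toFinset.Nonempty := by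
      rw [Set.Finite.toFinset_nonempty]
      exact Set.nonempty_iff_ne_empty.2 hAe
    set m : ℕ := hfin.toFinset.max' hne with hm
    have hmA : m ∈ A := by
      have := hfin.toFinset.max'_mem hne
      rwa [Set.Finite.mem_toFinset] at this
    have hle : ∀ n ∈ A, n ≤ m := by
      intro n hn
      exact hfin.toFinset.le_max' n (by rwa [Set.Finite.mem_toFinset])
    have hAeq : A = Set.Icc 1 m := by
      ext n
      constructor
      · intro hn; exact ⟨hn.1, hle n hn⟩
      · rintro ⟨h1, h2⟩
        exact ⟨h1, le_trans (mono h2) hmA.2⟩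
    have hcard : A.ncard = m := by
      rw [hAeq, ← Finset.coe_Icc, Set.ncard_coe_finset, Nat.card_Icc]
      omega
    have hm1 : m + 1 ∉ A := by
      intro hc2
      have := hle _ hc2
      omega
    have hm1' : T < (∑ j ∈ Finset.range m, a j) + a m := by
      by_contra hc2
      push_neg at hc2
      exact hm1 ⟨Nat.succ_pos m, by rwa [Finset.sum_range_succ]⟩
    have hTm : 0 ≤ T - ∑ j ∈ Finset.range m, a j := sub_nonneg.2 hmA.2
    have hsq : (T - ∑ j ∈ Finset.range m, a j) ^ 2 ≤ a m ^ 2 := by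
      apply pow_le_pow_left₀ hTm (by linarith)
    have hmM : m + 1 ≤ M := hAsub m hmA
    have hsum : (∑ k ∈ Finset.range (m + 1), a k ^ 2) ≤ ∑ k ∈ Finset.range M, a k ^ 2 := by
      apply Finset.sum_le_sum_of_subset_of_nonneg (Finset.range_subset_range.2 hmM)
      exact fun i _ _ => sq_nonneg (a i)
    rw [hcard] at h
    rw [Finset.sum_range_succ] at hsum
    linarith

end Det
section Arith

lemma arith1 {u : ℝ} (hu : 1000000 ≤ u) {M : ℕ} (hM : 3 * u / 2 ≤ M) :
    Real.exp u * (1 / 2 : ℝ) ^ M ≤ 1 / u := by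
  have hu0 : (0:ℝ) < u := by linarith
  have hlog : (0.6931471803 : ℝ) < Real.log 2 := Real.log_two_gt_d9
  have h2pow : (2:ℝ) ^ M = Real.exp (M * Real.log 2) := by
    rw [Real.exp_nat_mul, Real.exp_log two_pos]
  have hhalf : ((1:ℝ)/2) ^ M = Real.exp (-(M * Real.log 2)) := by
    rw [div_pow, one_pow, h2pow, Real.exp_neg, one_div]
  rw [hhalf, ← Real.exp_add]
  have hMl : 3 * u / 2 * Real.log 2 ≤ M * Real.log 2 :=
    mul_le_mul_of_nonneg_right hM (by linarith)
  have hexp1 : u + -(M * Real.log 2) ≤ -(39/1000 * u) := by nlinarith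
  have key : u ≤ Real.exp (39/1000 * u) := by
    have h := Real.add_one_le_exp (39/2000 * u)
    have hsq : Real.exp (39/1000 * u) = Real.exp (39/2000 * u) ^ 2 := by
      rw [sq, ← Real.exp_add]; ring_nf
    rw [hsq]
    nlinarith [Real.exp_pos (39/2000 * u)]
  calc Real.exp (u + -(M * Real.log 2)) ≤ Real.exp (-(39/1000 * u)) := Real.exp_le_exp.2 hexp1
  _ = (Real.exp (39/1000 * u))⁻¹ := Real.exp_neg _
  _ ≤ u⁻¹ := by
      apply inv_anti₀ hu0 key
  _ = 1 / u := (one_div u).symm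

lemma arith2 {u m : ℝ} (hu : 1000000 ≤ u) (hm1 : 3 * u / 2 ≤ m) (hm2 : m ≤ 3 * u / 2 + 1) :
    u * (35088 * m + 1200 * m ^ 2) ≤ (4 * u - 2 * m) ^ 4 := by
  have hu0 : (0:ℝ) < u := by linarith
  have h1 : (0:ℝ) ≤ u - 2 := by linarith
  have h2 : u - 2 ≤ 4 * u - 2 * m := by linarith
  have h3 : (u - 2) ^ 4 ≤ (4 * u - 2 * m) ^ 4 := pow_le_pow_left₀ h1 h2 4
  have hm0 : (0:ℝ) ≤ m := by linarith
  have hb : 35088 * m + 1200 * m ^ 2 ≤ 2700 * u ^ 2 + 56232 * u + 36288 := by nlinarith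
  have hb2 : u * (35088 * m + 1200 * m ^ 2) ≤ u * (2700 * u ^ 2 + 56232 * u + 36288) :=
    mul_le_mul_of_nonneg_left hb hu0.le
  have hu' : (0:ℝ) ≤ u - 1000000 := by linarith
  have hfin : u * (2700 * u ^ 2 + 56232 * u + 36288) ≤ (u - 2) ^ 4 := by
    nlinarith [mul_nonneg (mul_nonneg hu' hu0.le) hu0.le,
      mul_nonneg (mul_nonneg (mul_nonneg hu' hu0.le) hu0.le) hu0.le,
      mul_nonneg hu' hu0.le]
  linarith

end Arith

/-- Lemma 2 of the paper: there is a universal constant `C` such that for any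
rate `r > 0` and horizon `T > 0` with `rT ≥ C`, if `(t_k)` are i.i.d. exponential
inter-arrival times of rate `r`, `N` is the number of arrivals in `[0, T]`, and
`Ξ = Σ_{k=1}^N t_k² + (T − Σ_{k=1}^N t_k)²`, then `P(Ξ ≥ 4T/r) ≤ 2/(rT)`. -/
theorem sum_squares_interarrival_bound :
    ∃ C : ℝ, 0 < C ∧
      ∀ (r T : ℝ), 0 < r → 0 < T → C ≤ r * T →
      ∀ (Ω : Type) (_ : MeasurableSpace Ω) (P : Measure Ω), IsProbabilityMeasure P →
      ∀ (t : ℕ → Ω → ℝ), (∀ n, Measurable (t n)) →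
      (∀ n, P.map (t n) = expMeasure r) →
      iIndepFun t P →
      P {ω | 4 * T / r ≤
              (∑ k ∈ Finset.range
                  (Set.ncard {n : ℕ | 0 < n ∧ ∑ j ∈ Finset.range n, t j ω ≤ T}),
                (t k ω) ^ 2)
              + (T - ∑ k ∈ Finset.range
                  (Set.ncard {n : ℕ | 0 < n ∧ ∑ j ∈ Finset.range n, t j ω ≤ T}),
                  t k ω) ^ 2}
        ≤ ENNReal.ofReal (2 / (r * T)) := by
  refine ⟨1000000, by norm_num, ?_⟩
  intro r T hr hT hC Ω mΩ P hP t ht hmap hindep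
  haveI := hP
  set u : ℝ := r * T with hu
  have hu0 : (0:ℝ) < u := mul_pos hr hT
  have huC : (1000000:ℝ) ≤ u := hC
  set M : ℕ := ⌈3 * u / 2⌉₊ with hMdef
  have hM1 : 3 * u / 2 ≤ (M : ℝ) := Nat.le_ceil _
  have hM2 : (M : ℝ) ≤ 3 * u / 2 + 1 := (Nat.ceil_lt_add_one (by positivity)).le
  have hM0 : 1 ≤ M := Nat.one_le_iff_ne_zero.2 (by
    intro h0
    rw [h0] at hM1
    norm_num at hM1
    linarith)
  -- the null set
  have hnull : P {ω | ¬ ∀ k, 0 < t k ω} = 0 := by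
    have heq : {ω | ¬ ∀ k, 0 < t k ω} = ⋃ k, {ω | t k ω ≤ 0} := by
      ext ω; simp [not_forall, not_lt]
    rw [heq]
    refine MeasureTheory.measure_iUnion_null fun k => ?_
    have hpre : {ω | t k ω ≤ 0} = t k ⁻¹' (Set.Iic 0) := rfl
    rw [hpre, ← MeasureTheory.Measure.map_apply (ht k) measurableSet_Iic, hmap k]
    exact expMeasure_Iic_zero hr
  -- inclusion into three events
  have hincl : {ω | 4 * T / r ≤
              (∑ k ∈ Finset.range
                  (Set.ncard {n : ℕ | 0 < n ∧ ∑ j ∈ Finset.range n, t j ω ≤ T}),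
                (t k ω) ^ 2)
              + (T - ∑ k ∈ Finset.range
                  (Set.ncard {n : ℕ | 0 < n ∧ ∑ j ∈ Finset.range n, t j ω ≤ T}),
                  t k ω) ^ 2}
      ⊆ ({ω | (∑ j ∈ Finset.range M, t j ω) ≤ T}
          ∪ {ω | 4 * T / r ≤ ∑ k ∈ Finset.range M, (t k ω) ^ 2})
          ∪ {ω | ¬ ∀ k, 0 < t k ω} := by
    intro ω hω
    by_cases hpos : ∀ k, 0 < t k ω
    · rcases det_split (fun k => t k ω) hpos T (4 * T / r) hT.le M hM0 hω with h | h
      · exact Or.inl (Or.inl h)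
      · exact Or.inl (Or.inr h)
    · exact Or.inr hpos
  -- Chernoff bound for the first event
  have hb1 : P {ω | (∑ j ∈ Finset.range M, t j ω) ≤ T} ≤ ENNReal.ofReal (1 / u) := by
    have hmgf_one : ∀ i, ProbabilityTheory.mgf (t i) P (-r) = 1 / 2 := by
      intro i
      have h0 : ProbabilityTheory.mgf (t i) P (-r)
          = ∫ ω, Real.exp (-r * t i ω) ∂P := rfl
      have h1 : ∫ ω, Real.exp (-r * t i ω) ∂P
          = ∫ x, Real.exp (-r * x) ∂(P.map (t i)) :=
        (MeasureTheory.integral_map (ht i).aemeasurable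
          (Real.measurable_exp.comp (measurable_id.const_mul (-r))).aestronglyMeasurable).symm
      rw [h0, h1, hmap i]
      simp_rw [neg_mul]
      exact integral_exp_neg_expMeasure hr
    have hint_exp : ∀ i, MeasureTheory.Integrable (fun ω => Real.exp (-r * t i ω)) P := by
      intro i
      have h1 : MeasureTheory.Integrable (fun x => Real.exp (-r * x)) (P.map (t i)) := by
        rw [hmap i]
        simp_rw [neg_mul]
        exact integrable_exp_neg_expMeasure hr
      exact (MeasureTheory.integrable_map_measure
        (Real.measurable_exp.comp (measurable_id.const_mul (-r))).aestronglyMeasurable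
        (ht i).aemeasurable).1 h1
    have hintS : MeasureTheory.Integrable
        (fun ω => Real.exp (-r * (∑ i ∈ Finset.range M, t i) ω)) P :=
      hindep.integrable_exp_mul_sum ht (fun i _ => hint_exp i)
    have hmgfS : ProbabilityTheory.mgf (∑ i ∈ Finset.range M, t i) P (-r) = (1/2 : ℝ) ^ M := by
      rw [hindep.mgf_sum ht (Finset.range M),
        Finset.prod_congr rfl (fun i _ => hmgf_one i), Finset.prod_const, Finset.card_range]
    have hcher := ProbabilityTheory.measure_le_le_exp_mul_mgf (μ := P)
      (X := ∑ i ∈ Finset.range M, t i) T (by linarith : -r ≤ 0) hintS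
    rw [hmgfS] at hcher
    have hseteq : {ω | (∑ i ∈ Finset.range M, t i) ω ≤ T}
        = {ω | (∑ j ∈ Finset.range M, t j ω) ≤ T} := by
      ext ω; simp [Finset.sum_apply]
    rw [hseteq] at hcher
    have harith : Real.exp (-(-r) * T) * (1/2 : ℝ) ^ M ≤ 1 / u := by
      rw [neg_neg, ← hu]
      exact arith1 huC hM1
    have hfin := ENNReal.ofReal_le_ofReal (le_trans hcher harith)
    rwa [measureReal_def, ENNReal.ofReal_toReal (MeasureTheory.measure_ne_top P _)] at hfin
  -- moments of t i
  have hmomI : ∀ (i : ℕ) (n : ℕ), MeasureTheory.Integrable (fun ω => (t i ω) ^ n) P := by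
    intro i n
    have h1 : MeasureTheory.Integrable (fun x : ℝ => x ^ n) (P.map (t i)) := by
      rw [hmap i]; exact integrable_pow_expMeasure hr n
    exact (MeasureTheory.integrable_map_measure
      (measurable_id.pow_const n).aestronglyMeasurable (ht i).aemeasurable).1 h1
  have hmomV : ∀ (i : ℕ) (n : ℕ),
      ∫ ω, (t i ω) ^ n ∂P = (Nat.factorial n : ℝ) / r ^ n := by
    intro i n
    have h1 : ∫ ω, (t i ω) ^ n ∂P = ∫ x, x ^ n ∂(P.map (t i)) :=
      (MeasureTheory.integral_map (ht i).aemeasurable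
        (measurable_id.pow_const n).aestronglyMeasurable).symm
    rw [h1, hmap i]
    exact integral_pow_expMeasure hr n
  set c : ℝ := 2 / r ^ 2 with hc
  set Y : ℕ → Ω → ℝ := fun i ω => (t i ω) ^ 2 - c with hY
  have hYmeas : ∀ i, Measurable (Y i) := fun i => ((ht i).pow_const 2).sub measurable_const
  have hYindep : ProbabilityTheory.iIndepFun Y P :=
    hindep.comp (g := fun _ : ℕ => fun x : ℝ => x ^ 2 - c)
      (fun _ => (measurable_id.pow_const 2).sub measurable_const)
  have hYexp4 : ∀ i, (fun ω => (Y i ω) ^ 4) = fun ω => (t i ω) ^ 8 - (4 * c) * (t i ω) ^ 6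
      + (6 * c ^ 2) * (t i ω) ^ 4 - (4 * c ^ 3) * (t i ω) ^ 2 + c ^ 4 := by
    intro i; funext ω; simp only [hY]; ring
  have hYint4 : ∀ i, MeasureTheory.Integrable (fun ω => (Y i ω) ^ 4) P := by
    intro i
    rw [hYexp4 i]
    exact ((((hmomI i 8).sub ((hmomI i 6).const_mul (4 * c))).add
      ((hmomI i 4).const_mul (6 * c ^ 2))).sub
        ((hmomI i 2).const_mul (4 * c ^ 3))).add (MeasureTheory.integrable_const (c ^ 4))
  have hrne : r ≠ 0 := hr.ne'
  have hYval1 : ∀ i, ∫ ω, Y i ω ∂P = 0 := by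
    intro i
    have hexp : (fun ω => Y i ω) = fun ω => (t i ω) ^ 2 - c := by
      funext ω; simp only [hY]
    rw [hexp, MeasureTheory.integral_sub (hmomI i 2) (MeasureTheory.integrable_const c),
      MeasureTheory.integral_const, hmomV i 2]
    simp only [hc, MeasureTheory.measure_univ, ENNReal.toReal_one, MeasureTheory.probReal_univ, smul_eq_mul, one_mul]
    norm_num
  have hYval2 : ∀ i, ∫ ω, (Y i ω) ^ 2 ∂P = 20 / r ^ 4 := by
    intro i
    have hexp : (fun ω => (Y i ω) ^ 2)
        = fun ω => (t i ω) ^ 4 - (2 * c) * (t i ω) ^ 2 + c ^ 2 := by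
      funext ω; simp only [hY]; ring
    have i2 : MeasureTheory.Integrable (fun ω => (2 * c) * (t i ω) ^ 2) P :=
      (hmomI i 2).const_mul (2 * c)
    have i42 : MeasureTheory.Integrable (fun ω => (t i ω) ^ 4 - (2 * c) * (t i ω) ^ 2) P :=
      (hmomI i 4).sub i2
    rw [hexp, MeasureTheory.integral_add i42 (MeasureTheory.integrable_const (c ^ 2)),
      MeasureTheory.integral_sub (hmomI i 4) i2,
      MeasureTheory.integral_const_mul, MeasureTheory.integral_const,
      hmomV i 4, hmomV i 2]
    simp only [hc, MeasureTheory.measure_univ, ENNReal.toReal_one, MeasureTheory.probReal_univ, smul_eq_mul, one_mul]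
    show (24:ℝ) / r ^ 4 - 2 * (2 / r ^ 2) * (2 / r ^ 2) + (2 / r ^ 2) ^ 2 = 20 / r ^ 4
    field_simp
    ring
  have hYval4 : ∀ i, ∫ ω, (Y i ω) ^ 4 ∂P = 35088 / r ^ 8 := by
    intro i
    have j6 : MeasureTheory.Integrable (fun ω => (4 * c) * (t i ω) ^ 6) P :=
      (hmomI i 6).const_mul (4 * c)
    have j4 : MeasureTheory.Integrable (fun ω => (6 * c ^ 2) * (t i ω) ^ 4) P :=
      (hmomI i 4).const_mul (6 * c ^ 2)
    have j2 : MeasureTheory.Integrable (fun ω => (4 * c ^ 3) * (t i ω) ^ 2) P :=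
      (hmomI i 2).const_mul (4 * c ^ 3)
    have k1 : MeasureTheory.Integrable (fun ω => (t i ω) ^ 8 - (4 * c) * (t i ω) ^ 6) P :=
      (hmomI i 8).sub j6
    have k2 : MeasureTheory.Integrable
        (fun ω => (t i ω) ^ 8 - (4 * c) * (t i ω) ^ 6 + (6 * c ^ 2) * (t i ω) ^ 4) P :=
      k1.add j4
    have k3 : MeasureTheory.Integrable (fun ω => (t i ω) ^ 8 - (4 * c) * (t i ω) ^ 6
        + (6 * c ^ 2) * (t i ω) ^ 4 - (4 * c ^ 3) * (t i ω) ^ 2) P := k2.sub j2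
    rw [hYexp4 i,
      MeasureTheory.integral_add k3 (MeasureTheory.integrable_const (c ^ 4)),
      MeasureTheory.integral_sub k2 j2,
      MeasureTheory.integral_add k1 j4,
      MeasureTheory.integral_sub (hmomI i 8) j6,
      MeasureTheory.integral_const_mul, MeasureTheory.integral_const_mul,
      MeasureTheory.integral_const_mul, MeasureTheory.integral_const,
      hmomV i 8, hmomV i 6, hmomV i 4, hmomV i 2]
    simp only [hc, MeasureTheory.measure_univ, ENNReal.toReal_one, MeasureTheory.probReal_univ, smul_eq_mul, one_mul]
    show (40320:ℝ) / r ^ 8 - 4 * (2 / r ^ 2) * (720 / r ^ 6)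
        + 6 * (2 / r ^ 2) ^ 2 * (24 / r ^ 4) - 4 * (2 / r ^ 2) ^ 3 * (2 / r ^ 2)
        + (2 / r ^ 2) ^ 4 = 35088 / r ^ 8
    field_simp
    ring
  obtain ⟨hSint4, _, _, hSbound⟩ :=
    fourth_moment_bound P Y hYmeas hYindep hYint4 hYval1 hYval2 hYval4 M
  -- Markov bound for the second event
  set d : ℝ := 4 * T / r - M * c with hd
  have hdeq : d = (4 * u - 2 * M) / r ^ 2 := by
    rw [hd, hc, hu]
    field_simp
  have hd0 : 0 < d := by
    rw [hdeq]
    apply div_pos _ (by positivity)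
    linarith
  have hb2 : P {ω | 4 * T / r ≤ ∑ k ∈ Finset.range M, (t k ω) ^ 2}
      ≤ ENNReal.ofReal (1 / u) := by
    have hsub2 : {ω | 4 * T / r ≤ ∑ k ∈ Finset.range M, (t k ω) ^ 2}
        ⊆ {ω | d ^ 4 ≤ (∑ i ∈ Finset.range M, Y i ω) ^ 4} := by
      intro ω hω
      simp only [Set.mem_setOf_eq] at hω ⊢
      have hsumY : ∑ i ∈ Finset.range M, Y i ω
          = (∑ k ∈ Finset.range M, (t k ω) ^ 2) - M * c := by
        simp only [hY]
        rw [Finset.sum_sub_distrib, Finset.sum_const, Finset.card_range, nsmul_eq_mul]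
      have h1 : d ≤ ∑ i ∈ Finset.range M, Y i ω := by
        rw [hsumY, hd]; linarith
      exact pow_le_pow_left₀ hd0.le h1 4
    have hmark := MeasureTheory.mul_meas_ge_le_integral_of_nonneg (μ := P)
      (f := fun ω => (∑ i ∈ Finset.range M, Y i ω) ^ 4)
      (Filter.Eventually.of_forall fun ω => by positivity) hSint4 (d ^ 4)
    have hd4 : (0:ℝ) < d ^ 4 := by positivity
    have htoReal : (P {ω | d ^ 4 ≤ (∑ i ∈ Finset.range M, Y i ω) ^ 4}).toReal ≤ 1 / u := by
      have hq1 : (P {ω | d ^ 4 ≤ (∑ i ∈ Finset.range M, Y i ω) ^ 4}).toReal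
          ≤ (∫ ω, (∑ i ∈ Finset.range M, Y i ω) ^ 4 ∂P) / d ^ 4 := by
        rw [le_div_iff₀ hd4]
        rw [measureReal_def] at hmark
        linarith [hmark]
      have hq2 : (∫ ω, (∑ i ∈ Finset.range M, Y i ω) ^ 4 ∂P)
          ≤ (35088 * M + 1200 * M ^ 2) / r ^ 8 := by
        have : (M:ℝ) * (35088 / r ^ 8) + 3 * (M:ℝ) ^ 2 * (20 / r ^ 4) ^ 2
            = (35088 * M + 1200 * M ^ 2) / r ^ 8 := by
          field_simp; ring
        linarith [hSbound, this.symm.le]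
      have hq3 : (35088 * (M:ℝ) + 1200 * M ^ 2) / r ^ 8 / d ^ 4 ≤ 1 / u := by
        have hr8d : r ^ 8 * d ^ 4 = (4 * u - 2 * M) ^ 4 := by
          rw [hdeq, div_pow]
          field_simp
        rw [div_div, div_le_div_iff₀ (by positivity) hu0, one_mul, hr8d]
        have := arith2 huC hM1 hM2
        nlinarith [this]
      calc (P {ω | d ^ 4 ≤ (∑ i ∈ Finset.range M, Y i ω) ^ 4}).toReal
          ≤ (∫ ω, (∑ i ∈ Finset.range M, Y i ω) ^ 4 ∂P) / d ^ 4 := hq1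
      _ ≤ (35088 * M + 1200 * M ^ 2) / r ^ 8 / d ^ 4 := by gcongr
      _ ≤ 1 / u := hq3
    calc P {ω | 4 * T / r ≤ ∑ k ∈ Finset.range M, (t k ω) ^ 2}
        ≤ P {ω | d ^ 4 ≤ (∑ i ∈ Finset.range M, Y i ω) ^ 4} :=
          MeasureTheory.measure_mono hsub2
    _ ≤ ENNReal.ofReal (1 / u) := by
        rw [← ENNReal.ofReal_toReal (MeasureTheory.measure_ne_top P _)]
        exact ENNReal.ofReal_le_ofReal htoReal
  -- combine
  calc P {ω | 4 * T / r ≤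
          (∑ k ∈ Finset.range
              (Set.ncard {n : ℕ | 0 < n ∧ ∑ j ∈ Finset.range n, t j ω ≤ T}),
            (t k ω) ^ 2)
          + (T - ∑ k ∈ Finset.range
              (Set.ncard {n : ℕ | 0 < n ∧ ∑ j ∈ Finset.range n, t j ω ≤ T}),
              t k ω) ^ 2}
      ≤ P (({ω | (∑ j ∈ Finset.range M, t j ω) ≤ T}
          ∪ {ω | 4 * T / r ≤ ∑ k ∈ Finset.range M, (t k ω) ^ 2})
          ∪ {ω | ¬ ∀ k, 0 < t k ω}) := MeasureTheory.measure_mono hincl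
  _ ≤ P ({ω | (∑ j ∈ Finset.range M, t j ω) ≤ T}
          ∪ {ω | 4 * T / r ≤ ∑ k ∈ Finset.range M, (t k ω) ^ 2})
        + P {ω | ¬ ∀ k, 0 < t k ω} := MeasureTheory.measure_union_le _ _
  _ = P ({ω | (∑ j ∈ Finset.range M, t j ω) ≤ T}
          ∪ {ω | 4 * T / r ≤ ∑ k ∈ Finset.range M, (t k ω) ^ 2}) := by
        rw [hnull, add_zero]
  _ ≤ P {ω | (∑ j ∈ Finset.range M, t j ω) ≤ T}
      + P {ω | 4 * T / r ≤ ∑ k ∈ Finset.range M, (t k ω) ^ 2} :=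
        MeasureTheory.measure_union_le _ _
  _ ≤ ENNReal.ofReal (1 / u) + ENNReal.ofReal (1 / u) := add_le_add hb1 hb2
  _ = ENNReal.ofReal (2 / (r * T)) := by
        rw [← ENNReal.ofReal_add (by positivity) (by positivity), ← hu]
        congr 1
        ring
end

section
/- For every integer N ≥ 0 and every real T > 0, the integral over the open simplex {(t_1,…,t_N) ∈ ℝ^N : t_i > 0 for all i, t_1 + ⋯ + t_N < T} of the function (Σ_{k=1}^N t_k² + (T − Σ_{k=1}^N t_k)²)² equals 4(N+1)(N+6) T^{N+4} / (N+4)!. (For N = 0 the integral is interpreted as the value T⁴, which equals 4·1·6·T⁴/4!.) -/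
open MeasureTheory Finset

def SS (N : ℕ) (T : ℝ) : Set (Fin N → ℝ) := {t | (∀ i, 0 < t i) ∧ ∑ i, t i < T}

lemma measurableSet_SS (N : ℕ) (T : ℝ) : MeasurableSet (SS N T) := by
  have : SS N T = (⋂ i, {t : Fin N → ℝ | 0 < t i}) ∩ {t | ∑ i, t i < T} := by
    ext t; simp [SS, Set.mem_iInter]
  rw [this]
  exact (MeasurableSet.iInter fun i =>
    measurableSet_lt measurable_const (measurable_pi_apply i)).inter
    (measurableSet_lt (Finset.measurable_sum _ fun i _ => measurable_pi_apply i) measurable_const)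

lemma SS_subset (N : ℕ) (T : ℝ) : SS N T ⊆ Set.pi Set.univ (fun _ : Fin N => Set.Icc 0 T) := by
  rintro t ⟨hpos, hsum⟩ i _
  refine ⟨(hpos i).le, ?_⟩
  calc t i ≤ ∑ j, t j := Finset.single_le_sum (fun j _ => (hpos j).le) (Finset.mem_univ i)
    _ ≤ T := hsum.le

lemma integrableOn_SS {N : ℕ} {T : ℝ} {f : (Fin N → ℝ) → ℝ} (hf : Continuous f) :
    IntegrableOn f (SS N T) := by
  exact ((hf.continuousOn).integrableOn_compact (isCompact_univ_pi fun _ => isCompact_Icc)).mono_set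
    (SS_subset N T)

lemma mem_SS_cons {N : ℕ} {T u : ℝ} {y : Fin N → ℝ} :
    Fin.cons u y ∈ SS (N+1) T ↔ 0 < u ∧ y ∈ SS N (T - u) := by
  simp only [SS, Set.mem_setOf_eq, Fin.forall_fin_succ, Fin.cons_zero, Fin.cons_succ,
    Fin.sum_cons]
  constructor
  · rintro ⟨⟨h0, hi⟩, hs⟩; exact ⟨h0, hi, by linarith⟩
  · rintro ⟨h0, hi, hs⟩; exact ⟨⟨h0, hi⟩, by linarith⟩

lemma sum_nonneg_of_mem_SS {N : ℕ} {T : ℝ} {y : Fin N → ℝ} (hy : y ∈ SS N T) :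
    0 ≤ ∑ i, y i := Finset.sum_nonneg fun i _ => (hy.1 i).le

lemma slice_SS (N : ℕ) (T : ℝ) (f : (Fin (N+1) → ℝ) → ℝ) (hf : Continuous f) :
    ∫ t in SS (N+1) T, f t
      = ∫ u in Set.Ioo 0 T, ∫ y in SS N (T - u), f (Fin.cons u y) := by
  have hmp := (volume_preserving_piFinSuccAbove (fun _ : Fin (N+1) => ℝ) 0).symm
  set e := MeasurableEquiv.piFinSuccAbove (fun _ : Fin (N+1) => ℝ) 0 with he
  have hes : ∀ p : ℝ × (Fin N → ℝ), e.symm p = Fin.cons p.1 p.2 := by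
    intro p
    rw [MeasurableEquiv.piFinSuccAbove_symm_apply]
    simp [Fin.insertNthEquiv, Fin.insertNth_zero']
  have hint : Integrable (Set.indicator (SS (N+1) T) f) := by
    rw [integrable_indicator_iff (measurableSet_SS _ _)]
    exact integrableOn_SS hf
  rw [← integral_indicator (measurableSet_SS _ _)]
  rw [← hmp.integral_comp e.symm.measurableEmbedding]
  have hmp' : MeasurePreserving (⇑e.symm) (volume.prod volume) volume := by
    rw [← MeasureTheory.Measure.volume_eq_prod ℝ (Fin N → ℝ)]; exact hmp
  have hint2 : Integrable ((Set.indicator (SS (N+1) T) f) ∘ ⇑e.symm) (volume.prod volume) :=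
    (hmp'.integrable_comp_emb e.symm.measurableEmbedding).2 hint
  rw [show (volume : Measure (ℝ × (Fin N → ℝ))) = volume.prod volume from
    MeasureTheory.Measure.volume_eq_prod ℝ (Fin N → ℝ)]
  rw [show (fun p : ℝ × (Fin N → ℝ) => Set.indicator (SS (N+1) T) f (e.symm p))
    = (Set.indicator (SS (N+1) T) f) ∘ ⇑e.symm from rfl]
  rw [integral_prod _ hint2]
  simp only [Function.comp_apply]
  rw [← integral_indicator measurableSet_Ioo]
  congr 1
  ext u
  rcases le_or_gt u 0 with hu | hu
  · have h1 : ∀ y : Fin N → ℝ, Set.indicator (SS (N+1) T) f (e.symm (u, y)) = 0 := by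
      intro y
      rw [hes]
      apply Set.indicator_of_notMem
      rw [mem_SS_cons]
      rintro ⟨h, -⟩; linarith
    simp only [h1, integral_zero]
    rw [Set.indicator_of_notMem]
    simp [Set.mem_Ioo]; intro h; linarith
  rcases le_or_gt T u with hu2 | hu2
  · have h1 : ∀ y : Fin N → ℝ, Set.indicator (SS (N+1) T) f (e.symm (u, y)) = 0 := by
      intro y
      rw [hes]
      apply Set.indicator_of_notMem
      rw [mem_SS_cons]
      rintro ⟨h0, hy⟩
      have := sum_nonneg_of_mem_SS hy
      have := hy.2
      linarith
    simp only [h1, integral_zero]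
    rw [Set.indicator_of_notMem]
    simp [Set.mem_Ioo]; intro h; linarith
  · rw [Set.indicator_of_mem (Set.mem_Ioo.2 ⟨hu, hu2⟩)]
    have h1 : ∀ y : Fin N → ℝ, Set.indicator (SS (N+1) T) f (e.symm (u, y))
        = Set.indicator (SS N (T - u)) (fun y => f (Fin.cons u y)) y := by
      intro y
      rw [hes]
      by_cases hy : y ∈ SS N (T - u)
      · rw [Set.indicator_of_mem (mem_SS_cons.2 ⟨hu, hy⟩), Set.indicator_of_mem hy]
      · rw [Set.indicator_of_notMem, Set.indicator_of_notMem hy]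
        rw [mem_SS_cons]; tauto
    simp only [h1]
    exact integral_indicator (measurableSet_SS _ _)

lemma integrableOn_Ioo_cont {f : ℝ → ℝ} (hf : Continuous f) (a b : ℝ) :
    IntegrableOn f (Set.Ioo a b) :=
  (hf.continuousOn.integrableOn_compact isCompact_Icc).mono_set Set.Ioo_subset_Icc_self

lemma int_base (b : ℕ) (T : ℝ) (hT : 0 < T) :
    ∫ u in Set.Ioo 0 T, (T - u) ^ b = T ^ (b + 1) / (b + 1) := by
  rw [← MeasureTheory.integral_Ioc_eq_integral_Ioo,
    ← intervalIntegral.integral_of_le hT.le,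
    intervalIntegral.integral_comp_sub_left (fun x => x ^ b) T]
  simp only [sub_self, sub_zero]
  rw [integral_pow]
  ring

lemma int_beta2 (b : ℕ) (T : ℝ) (hT : 0 < T) :
    ∫ u in Set.Ioo 0 T, u ^ 2 * (T - u) ^ b
      = 2 * b.factorial / (b + 3).factorial * T ^ (b + 3) := by
  have key : ∀ u : ℝ, u ^ 2 * (T - u) ^ b
      = T ^ 2 * (T - u) ^ b - 2 * T * (T - u) ^ (b + 1) + (T - u) ^ (b + 2) := by
    intro u
    have h1 : (T - u) ^ (b + 1) = (T - u) ^ b * (T - u) := pow_succ _ _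
    have h2 : (T - u) ^ (b + 2) = (T - u) ^ b * (T - u) ^ 2 := by ring
    rw [h1, h2]; ring
  simp_rw [key]
  rw [integral_add, integral_sub]
  · rw [integral_const_mul, integral_const_mul, int_base b T hT, int_base (b+1) T hT,
      int_base (b+2) T hT]
    have hb1 : ((b : ℝ) + 1) ≠ 0 := by positivity
    have hb2 : ((b : ℝ) + 2) ≠ 0 := by positivity
    have hb3 : ((b : ℝ) + 3) ≠ 0 := by positivity
    have hfb : (b.factorial : ℝ) ≠ 0 := Nat.cast_ne_zero.2 b.factorial_ne_zero
    have hf3 : ((b + 3).factorial : ℝ) = ((b:ℝ) + 3) * ((b:ℝ) + 2) * ((b:ℝ) + 1) * b.factorial := by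
      have : (b + 3).factorial = (b + 3) * ((b + 2) * ((b + 1) * b.factorial)) := by
        simp [Nat.factorial_succ, show b+3 = (b+2)+1 by ring, show b+2 = (b+1)+1 by ring]
      rw [this]; push_cast; ring
    rw [hf3]
    field_simp
    push_cast
    ring
  · exact (integrableOn_Ioo_cont (by continuity) 0 T)
  · exact (integrableOn_Ioo_cont (by continuity) 0 T)
  · exact ((integrableOn_Ioo_cont (by continuity) 0 T).sub (integrableOn_Ioo_cont (by continuity) 0 T))
  · exact (integrableOn_Ioo_cont (by continuity) 0 T)

set_option maxHeartbeats 1000000 in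
lemma int_beta4 (b : ℕ) (T : ℝ) (hT : 0 < T) :
    ∫ u in Set.Ioo 0 T, u ^ 4 * (T - u) ^ b
      = 24 * b.factorial / (b + 5).factorial * T ^ (b + 5) := by
  have key : ∀ u : ℝ, u ^ 4 * (T - u) ^ b
      = T ^ 4 * (T - u) ^ b - 4 * T ^ 3 * (T - u) ^ (b + 1) + 6 * T ^ 2 * (T - u) ^ (b + 2)
        - (4 * T * (T - u) ^ (b + 3) - (T - u) ^ (b + 4)) := by
    intro u
    have h1 : (T - u) ^ (b + 1) = (T - u) ^ b * (T - u) := pow_succ _ _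
    have h2 : (T - u) ^ (b + 2) = (T - u) ^ b * (T - u) ^ 2 := by ring
    have h3 : (T - u) ^ (b + 3) = (T - u) ^ b * (T - u) ^ 3 := by ring
    have h4 : (T - u) ^ (b + 4) = (T - u) ^ b * (T - u) ^ 4 := by ring
    rw [h1, h2, h3, h4]; ring
  simp_rw [key]
  rw [integral_sub, integral_add, integral_sub, integral_sub]
  · rw [integral_const_mul, integral_const_mul, integral_const_mul, integral_const_mul,
      int_base b T hT, int_base (b+1) T hT, int_base (b+2) T hT, int_base (b+3) T hT,
      int_base (b+4) T hT]
    have hb1 : ((b : ℝ) + 1) ≠ 0 := by positivity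
    have hb2 : ((b : ℝ) + 2) ≠ 0 := by positivity
    have hb3 : ((b : ℝ) + 3) ≠ 0 := by positivity
    have hb4 : ((b : ℝ) + 4) ≠ 0 := by positivity
    have hb5 : ((b : ℝ) + 5) ≠ 0 := by positivity
    have hfb : (b.factorial : ℝ) ≠ 0 := Nat.cast_ne_zero.2 b.factorial_ne_zero
    have hf5 : ((b + 5).factorial : ℝ)
        = ((b:ℝ) + 5) * ((b:ℝ) + 4) * ((b:ℝ) + 3) * ((b:ℝ) + 2) * ((b:ℝ) + 1) * b.factorial := by
      have : (b + 5).factorial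
          = (b + 5) * ((b + 4) * ((b + 3) * ((b + 2) * ((b + 1) * b.factorial)))) := by
        simp [Nat.factorial_succ, show b+5 = (b+4)+1 by ring, show b+4 = (b+3)+1 by ring,
          show b+3 = (b+2)+1 by ring, show b+2 = (b+1)+1 by ring]
      rw [this]; push_cast; ring
    rw [hf5]
    field_simp
    push_cast
    ring
  all_goals exact (integrableOn_Ioo_cont (by continuity) 0 T)

lemma cont_sum {M : ℕ} : Continuous fun t : Fin M → ℝ => ∑ i, t i :=
  continuous_finset_sum _ fun i _ => continuous_apply i

lemma cont_sumsq {M : ℕ} : Continuous fun t : Fin M → ℝ => ∑ i, (t i) ^ 2 :=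
  continuous_finset_sum _ fun i _ => (continuous_apply i).pow 2

lemma cont_K {M : ℕ} (T' : ℝ) :
    Continuous fun t : Fin M → ℝ => (∑ i, (t i) ^ 2) + (T' - ∑ i, t i) ^ 2 :=
  cont_sumsq.add ((continuous_const.sub cont_sum).pow 2)

lemma cont_J {M : ℕ} (T' : ℝ) :
    Continuous fun t : Fin M → ℝ => ((∑ i, (t i) ^ 2) + (T' - ∑ i, t i) ^ 2) ^ 2 :=
  (cont_K T').pow 2

lemma vol_univ0 : (volume : Measure (Fin 0 → ℝ)) Set.univ = 1 := by
  rw [MeasureTheory.volume_pi, MeasureTheory.Measure.pi_univ]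
  simp

lemma setInt_const_SS {N : ℕ} {T c : ℝ} :
    ∫ _ in SS N T, c = c * ∫ _ in SS N T, (1:ℝ) := by
  rw [setIntegral_const, setIntegral_const]
  simp [smul_eq_mul, mul_comm]

lemma vol_SS : ∀ (N : ℕ) (T : ℝ), 0 < T → ∫ _ in SS N T, (1:ℝ) = T ^ N / N.factorial := by
  intro N
  induction N with
  | zero =>
    intro T hT
    have h : SS 0 T = Set.univ := by
      ext t; simp [SS, hT]
    rw [h, setIntegral_univ]
    simp [integral_const, vol_univ0]
    simp [measureReal_def, vol_univ0]
  | succ N ih =>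
    intro T hT
    rw [slice_SS N T _ continuous_const]
    rw [setIntegral_congr_fun measurableSet_Ioo
      (fun u hu => ih (T - u) (by simp only [Set.mem_Ioo] at hu; linarith [hu.2]))]
    rw [integral_div, int_base N T hT]
    have h1 : ((N:ℝ) + 1) ≠ 0 := by positivity
    have h2 : (N.factorial : ℝ) ≠ 0 := Nat.cast_ne_zero.2 N.factorial_ne_zero
    rw [Nat.factorial_succ]
    push_cast
    field_simp

lemma K_SS : ∀ (N : ℕ) (T : ℝ), 0 < T →
    ∫ t in SS N T, ((∑ i, (t i) ^ 2) + (T - ∑ i, t i) ^ 2)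
      = 2 * (N + 1) * T ^ (N + 2) / (N + 2).factorial := by
  intro N
  induction N with
  | zero =>
    intro T hT
    have h : SS 0 T = Set.univ := by
      ext t; simp [SS, hT]
    rw [h, setIntegral_univ]
    simp [integral_const, vol_univ0, Nat.factorial]
    simp [measureReal_def, vol_univ0]
  | succ N ih =>
    intro T hT
    have hf := cont_K (M := N+1) T
    rw [slice_SS N T _ hf]
    have hinner : ∀ u ∈ Set.Ioo (0:ℝ) T,
        (∫ y in SS N (T - u), ((∑ i, (Fin.cons u y : Fin (N+1) → ℝ) i ^ 2)
            + (T - ∑ i, (Fin.cons u y : Fin (N+1) → ℝ) i) ^ 2))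
          = (N.factorial : ℝ)⁻¹ * (u ^ 2 * (T - u) ^ N)
            + (2 * (N + 1) / (N + 2).factorial) * (T - u) ^ (N + 2) := by
      intro u hu
      simp only [Set.mem_Ioo] at hu
      have hTu : 0 < T - u := by linarith [hu.2]
      have hre : ∀ y : Fin N → ℝ,
          ((∑ i, (Fin.cons u y : Fin (N+1) → ℝ) i ^ 2)
            + (T - ∑ i, (Fin.cons u y : Fin (N+1) → ℝ) i) ^ 2)
          = u ^ 2 + ((∑ i, (y i) ^ 2) + ((T - u) - ∑ i, y i) ^ 2) := by
        intro y
        simp only [Fin.sum_univ_succ, Fin.cons_zero, Fin.cons_succ]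
        ring
      simp_rw [hre]
      rw [integral_add (integrableOn_SS continuous_const)
        (integrableOn_SS (cont_K (T - u)))]
      rw [setInt_const_SS, vol_SS N (T - u) hTu, ih (T - u) hTu]
      ring
    rw [setIntegral_congr_fun measurableSet_Ioo hinner]
    rw [integral_add (((integrableOn_Ioo_cont (by continuity) 0 T)).const_mul _)
      ((integrableOn_Ioo_cont (by continuity) 0 T).const_mul _)]
    rw [integral_const_mul, integral_const_mul, int_beta2 N T hT, int_base (N+2) T hT]
    simp only [show N + 1 + 2 = N + 3 from rfl]
    have h1 : ((N:ℝ) + 1) ≠ 0 := by positivity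
    have h2 : ((N:ℝ) + 2) ≠ 0 := by positivity
    have h3 : ((N:ℝ) + 3) ≠ 0 := by positivity
    have hfb : (N.factorial : ℝ) ≠ 0 := Nat.cast_ne_zero.2 N.factorial_ne_zero
    have e3 : ((N + 3).factorial : ℝ)
        = ((N:ℝ) + 3) * (((N:ℝ) + 2) * (((N:ℝ) + 1) * N.factorial)) := by
      rw [show N+3 = ((N+1)+1)+1 from rfl, Nat.factorial_succ, Nat.factorial_succ,
        Nat.factorial_succ]
      push_cast
      ring
    have e2 : ((N + 2).factorial : ℝ) = (((N:ℝ) + 2) * (((N:ℝ) + 1) * N.factorial)) := by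
      rw [show N+2 = (N+1)+1 from rfl, Nat.factorial_succ, Nat.factorial_succ]
      push_cast
      ring
    rw [e3, e2]
    push_cast
    field_simp
    ring

lemma J_SS : ∀ (N : ℕ) (T : ℝ), 0 < T →
    ∫ t in SS N T, ((∑ i, (t i) ^ 2) + (T - ∑ i, t i) ^ 2) ^ 2
      = 4 * (N + 1) * (N + 6) * T ^ (N + 4) / (N + 4).factorial := by
  intro N
  induction N with
  | zero =>
    intro T hT
    have h : SS 0 T = Set.univ := by
      ext t; simp [SS, hT]
    rw [h, setIntegral_univ]
    simp [integral_const, vol_univ0, Nat.factorial]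
    simp [measureReal_def, vol_univ0]
    ring
  | succ N ih =>
    intro T hT
    rw [slice_SS N T _ (cont_J (M := N+1) T)]
    have hinner : ∀ u ∈ Set.Ioo (0:ℝ) T,
        (∫ y in SS N (T - u), ((∑ i, (Fin.cons u y : Fin (N+1) → ℝ) i ^ 2)
            + (T - ∑ i, (Fin.cons u y : Fin (N+1) → ℝ) i) ^ 2) ^ 2)
          = (N.factorial : ℝ)⁻¹ * (u ^ 4 * (T - u) ^ N)
            + (4 * (N + 1) / (N + 2).factorial) * (u ^ 2 * (T - u) ^ (N + 2))
            + (4 * (N + 1) * (N + 6) / (N + 4).factorial) * (T - u) ^ (N + 4) := by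
      intro u hu
      simp only [Set.mem_Ioo] at hu
      have hTu : 0 < T - u := by linarith [hu.2]
      have hre : ∀ y : Fin N → ℝ,
          ((∑ i, (Fin.cons u y : Fin (N+1) → ℝ) i ^ 2)
            + (T - ∑ i, (Fin.cons u y : Fin (N+1) → ℝ) i) ^ 2) ^ 2
          = u ^ 4 + 2 * u ^ 2 * ((∑ i, (y i) ^ 2) + ((T - u) - ∑ i, y i) ^ 2)
            + ((∑ i, (y i) ^ 2) + ((T - u) - ∑ i, y i) ^ 2) ^ 2 := by
        intro y
        simp only [Fin.sum_univ_succ, Fin.cons_zero, Fin.cons_succ]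
        ring
      simp_rw [hre]
      have hI1 : IntegrableOn (fun y : Fin N → ℝ =>
          u ^ 4 + 2 * u ^ 2 * ((∑ i, (y i) ^ 2) + ((T - u) - ∑ i, y i) ^ 2))
          (SS N (T - u)) :=
        integrableOn_SS (continuous_const.add (continuous_const.mul (cont_K (T - u))))
      have hI2 : IntegrableOn (fun y : Fin N → ℝ =>
          ((∑ i, (y i) ^ 2) + ((T - u) - ∑ i, y i) ^ 2) ^ 2) (SS N (T - u)) :=
        integrableOn_SS (cont_J (T - u))
      have hI0 : IntegrableOn (fun _ : Fin N → ℝ => u ^ 4) (SS N (T - u)) :=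
        integrableOn_SS continuous_const
      have hI3 : IntegrableOn (fun y : Fin N → ℝ =>
          2 * u ^ 2 * ((∑ i, (y i) ^ 2) + ((T - u) - ∑ i, y i) ^ 2)) (SS N (T - u)) :=
        integrableOn_SS (continuous_const.mul (cont_K (T - u)))
      rw [integral_add hI1 hI2, integral_add hI0 hI3]
      rw [setInt_const_SS, integral_const_mul, vol_SS N (T - u) hTu, K_SS N (T - u) hTu,
        ih (T - u) hTu]
      ring
    rw [setIntegral_congr_fun measurableSet_Ioo hinner]
    have c1 : Continuous fun x : ℝ => (N.factorial : ℝ)⁻¹ * (x ^ 4 * (T - x) ^ N) :=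
      continuous_const.mul ((continuous_pow 4).mul ((continuous_const.sub continuous_id).pow N))
    have c2 : Continuous fun x : ℝ =>
        (4 * ((N:ℝ) + 1) / (N + 2).factorial) * (x ^ 2 * (T - x) ^ (N + 2)) :=
      continuous_const.mul ((continuous_pow 2).mul ((continuous_const.sub continuous_id).pow _))
    have c3 : Continuous fun x : ℝ =>
        (4 * ((N:ℝ) + 1) * ((N:ℝ) + 6) / (N + 4).factorial) * (T - x) ^ (N + 4) :=
      continuous_const.mul ((continuous_const.sub continuous_id).pow _)
    have hO1 : IntegrableOn (fun x : ℝ =>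
        (N.factorial : ℝ)⁻¹ * (x ^ 4 * (T - x) ^ N)
          + (4 * ((N:ℝ) + 1) / (N + 2).factorial) * (x ^ 2 * (T - x) ^ (N + 2)))
        (Set.Ioo 0 T) := integrableOn_Ioo_cont (c1.add c2) 0 T
    have hO2 : IntegrableOn (fun x : ℝ =>
        (4 * ((N:ℝ) + 1) * ((N:ℝ) + 6) / (N + 4).factorial) * (T - x) ^ (N + 4))
        (Set.Ioo 0 T) := integrableOn_Ioo_cont c3 0 T
    have hO3 : IntegrableOn (fun x : ℝ => (N.factorial : ℝ)⁻¹ * (x ^ 4 * (T - x) ^ N))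
        (Set.Ioo 0 T) := integrableOn_Ioo_cont c1 0 T
    have hO4 : IntegrableOn (fun x : ℝ =>
        (4 * ((N:ℝ) + 1) / (N + 2).factorial) * (x ^ 2 * (T - x) ^ (N + 2)))
        (Set.Ioo 0 T) := integrableOn_Ioo_cont c2 0 T
    rw [integral_add hO1 hO2, integral_add hO3 hO4]
    rw [integral_const_mul, integral_const_mul, integral_const_mul,
      int_beta4 N T hT, int_beta2 (N+2) T hT, int_base (N+4) T hT]
    simp only [show N + 2 + 3 = N + 5 from rfl, show N + 1 + 4 = N + 5 from rfl,
      show N + 4 + 1 = N + 5 from rfl]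
    have h1 : ((N:ℝ) + 1) ≠ 0 := by positivity
    have h2 : ((N:ℝ) + 2) ≠ 0 := by positivity
    have h3 : ((N:ℝ) + 3) ≠ 0 := by positivity
    have h4 : ((N:ℝ) + 4) ≠ 0 := by positivity
    have h5 : ((N:ℝ) + 5) ≠ 0 := by positivity
    have hfb : (N.factorial : ℝ) ≠ 0 := Nat.cast_ne_zero.2 N.factorial_ne_zero
    have e2 : ((N + 2).factorial : ℝ) = ((N:ℝ) + 2) * (((N:ℝ) + 1) * N.factorial) := by
      rw [show N+2 = (N+1)+1 from rfl, Nat.factorial_succ, Nat.factorial_succ]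
      push_cast; ring
    have e4 : ((N + 4).factorial : ℝ)
        = ((N:ℝ) + 4) * (((N:ℝ) + 3) * (((N:ℝ) + 2) * (((N:ℝ) + 1) * N.factorial))) := by
      rw [show N+4 = (((N+1)+1)+1)+1 from rfl, Nat.factorial_succ, Nat.factorial_succ,
        Nat.factorial_succ, Nat.factorial_succ]
      push_cast; ring
    have e5 : ((N + 5).factorial : ℝ)
        = ((N:ℝ) + 5) * (((N:ℝ) + 4) * (((N:ℝ) + 3) * (((N:ℝ) + 2)
          * (((N:ℝ) + 1) * N.factorial)))) := by
      rw [show N+5 = ((((N+1)+1)+1)+1)+1 from rfl, Nat.factorial_succ, Nat.factorial_succ,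
        Nat.factorial_succ, Nat.factorial_succ, Nat.factorial_succ]
      push_cast; ring
    rw [e2, e4, e5]
    push_cast
    field_simp
    ring

/-- For every `N ≥ 0` and `T > 0`, the integral over the open simplex
`{t ∈ ℝ^N : t_i > 0, t_1 + ⋯ + t_N < T}` of `(Σ t_k² + (T − Σ t_k)²)²` equals
`4(N+1)(N+6) T^(N+4) / (N+4)!`. -/
theorem simplex_integral_I2 (N : ℕ) (T : ℝ) (hT : 0 < T) :
    ∫ t in {t : Fin N → ℝ | (∀ i, 0 < t i) ∧ ∑ i, t i < T},
        ((∑ i, (t i) ^ 2) + (T - ∑ i, t i) ^ 2) ^ 2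
      = 4 * (N + 1) * (N + 6) * T ^ (N + 4) / (N + 4).factorial :=
  J_SS N T hT
end

section
/- Let d ≥ 1 and let U : ℝ^d → ℝ be twice continuously differentiable with m‖v‖² ≤ ⟨v, ∇²U(x)v⟩ ≤ L‖v‖² for all x, v ∈ ℝ^d, where 0 < m ≤ 1 ≤ L, U having its unique minimizer at x = 0 with U(0) = 0. Let μ be the probability measure on ℝ^d with density Z⁻¹ e^{−U(x)} with respect to Lebesgue measure, where Z = ∫_{ℝ^d} e^{−U(x)} dx. Then for every i ∈ {1,…,d} and every c > 0, μ({x ∈ ℝ^d : |∂_{x_i} U(x)| ≥ 2√L + 2c√L · log d}) ≤ 3 d^{−c}. -/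
open MeasureTheory Real

section aux
variable {E : Type*} [NormedAddCommGroup E] [NormedSpace ℝ E]

lemma aux_line {U : E → ℝ} (hU : ContDiff ℝ 2 U) (x v : E) (t : ℝ) :
    HasDerivAt (fun t : ℝ => U (x + t • v)) (fderiv ℝ U (x + t • v) v) t := by
  have hα : HasDerivAt (fun t : ℝ => x + t • v) v t := by
    simpa using ((hasDerivAt_id t).smul_const v).const_add x
  exact (hU.differentiable (by norm_num) (x + t • v)).hasFDerivAt.comp_hasDerivAt t hα

lemma aux_line2 {U : E → ℝ} (hU : ContDiff ℝ 2 U) (x v w : E) (t : ℝ) :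
    HasDerivAt (fun t : ℝ => fderiv ℝ U (x + t • v) w)
      (fderiv ℝ (fderiv ℝ U) (x + t • v) v w) t := by
  have hα : HasDerivAt (fun t : ℝ => x + t • v) v t := by
    simpa using ((hasDerivAt_id t).smul_const v).const_add x
  have hF : ContDiff ℝ 1 (fderiv ℝ U) := hU.fderiv_right (by norm_num)
  have h1 : HasDerivAt (fun t : ℝ => fderiv ℝ U (x + t • v))
      (fderiv ℝ (fderiv ℝ U) (x + t • v) v) t :=
    (hF.differentiable (by norm_num) _).hasFDerivAt.comp_hasDerivAt t hα
  exact (ContinuousLinearMap.apply ℝ ℝ w).hasFDerivAt.comp_hasDerivAt t h1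

lemma aux_line2' {U : E → ℝ} (hU : ContDiff ℝ 2 U) (x v : E) (t : ℝ) :
    HasDerivAt (fun t : ℝ => fderiv ℝ U (x + t • v) v)
      (iteratedFDeriv ℝ 2 U (x + t • v) ![v, v]) t := by
  have := aux_line2 hU x v v t
  rwa [show iteratedFDeriv ℝ 2 U (x + t • v) ![v, v]
      = fderiv ℝ (fderiv ℝ U) (x + t • v) v v by
    rw [iteratedFDeriv_two_apply]; rfl]

lemma aux_taylor_upper {U : E → ℝ} (hU : ContDiff ℝ 2 U) {C : ℝ} (x v : E)
    (hC : ∀ y, iteratedFDeriv ℝ 2 U y ![v, v] ≤ C) :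
    U (x + v) ≤ U x + fderiv ℝ U x v + C / 2 := by
  set g : ℝ → ℝ := fun t => U (x + t • v) with hg
  set g1 : ℝ → ℝ := fun t => fderiv ℝ U (x + t • v) v with hg1
  have hψd : ∀ t : ℝ, HasDerivAt (fun t => g1 t - C * t)
      (iteratedFDeriv ℝ 2 U (x + t • v) ![v, v] - C) t := fun t => by
    have := (aux_line2' hU x v t).fun_sub (by simpa using (hasDerivAt_id t).const_mul C)
    simpa using this
  have hψ : Antitone (fun t => g1 t - C * t) := by
    apply antitone_of_deriv_nonpos (fun t => (hψd t).differentiableAt)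
    intro t
    rw [(hψd t).deriv]
    simpa using sub_nonpos.2 (hC (x + t • v))
  set φ : ℝ → ℝ := fun t => g t - (g 0 + g1 0 * t + C * t ^ 2 / 2) with hφdef
  have hφd : ∀ t : ℝ, HasDerivAt φ (g1 t - (g1 0 + C * t)) t := fun t => by
    have a : HasDerivAt (fun t : ℝ => g1 0 * t) (g1 0) t := by
      simpa using (hasDerivAt_id t).const_mul (g1 0)
    have b : HasDerivAt (fun t : ℝ => C * t ^ 2 / 2) (C * t) t := by
      have := ((hasDerivAt_pow 2 t).const_mul C).div_const 2
      norm_num at this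
      rw [show C * t = C * (2 * t) / 2 by ring]; exact this
    exact (aux_line hU x v t).sub (by simpa [add_assoc] using (a.const_add (g 0)).fun_add b)
  have hφ : AntitoneOn φ (Set.Ici (0:ℝ)) := by
    apply antitoneOn_of_deriv_nonpos (convex_Ici 0)
    · exact Continuous.continuousOn
        (continuous_iff_continuousAt.2 fun t => (hφd t).differentiableAt.continuousAt)
    · exact fun t _ => (hφd t).differentiableAt.differentiableWithinAt
    · intro t ht
      rw [(hφd t).deriv]
      have := hψ (le_of_lt (by simpa [interior_Ici] using ht : (0:ℝ) < t))
      simp only [mul_zero, sub_zero] at this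
      linarith
  have h01 := hφ (Set.self_mem_Ici) (Set.mem_Ici.2 zero_le_one) zero_le_one
  have hg0 : g 0 = U x := by simp [hg]
  have hg11 : g 1 = U (x + v) := by simp [hg]
  have hg10 : g1 0 = fderiv ℝ U x v := by simp [hg1]
  simp only [hφdef, hg0, hg11, hg10] at h01
  norm_num at h01
  linarith
end aux

section aux2
variable {E : Type*} [NormedAddCommGroup E] [NormedSpace ℝ E]

lemma aux_taylor_lower {U : E → ℝ} (hU : ContDiff ℝ 2 U) {c : ℝ} (x v : E)
    (hc : ∀ y, c ≤ iteratedFDeriv ℝ 2 U y ![v, v]) :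
    U x + fderiv ℝ U x v + c / 2 ≤ U (x + v) := by
  have hneg : ContDiff ℝ 2 (fun y => -U y) := hU.neg
  have h := aux_taylor_upper hneg (C := -c) x v (fun y => by
    rw [show (fun y => -U y) = -U from rfl, iteratedFDeriv_neg_apply]
    simpa using hc y)
  rw [fderiv_fun_neg] at h
  simp only [ContinuousLinearMap.neg_apply] at h
  linarith

lemma aux_lip {U : E → ℝ} (hU : ContDiff ℝ 2 U) {K : ℝ} (x w : E)
    (hK : ∀ t : ℝ, |fderiv ℝ (fderiv ℝ U) ((0:E) + t • x) x w| ≤ K) :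
    |fderiv ℝ U x w - fderiv ℝ U 0 w| ≤ K := by
  set η : ℝ → ℝ := fun t => fderiv ℝ U ((0:E) + t • x) w with hη
  have hd : ∀ t : ℝ, HasDerivAt η (fderiv ℝ (fderiv ℝ U) ((0:E) + t • x) x w) t :=
    fun t => aux_line2 hU 0 x w t
  have h1 : Antitone (fun t => η t - K * t) := by
    apply antitone_of_deriv_nonpos
    · exact fun t => ((hd t).sub (by simpa using (hasDerivAt_id t).const_mul K)).differentiableAt
    · intro t
      rw [((hd t).fun_sub (by simpa using (hasDerivAt_id t).const_mul K)).deriv]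
      have := (abs_le.1 (hK t)).2; linarith
  have h2 : Monotone (fun t => η t + K * t) := by
    apply monotone_of_deriv_nonneg
    · exact fun t => ((hd t).add (by simpa using (hasDerivAt_id t).const_mul K)).differentiableAt
    · intro t
      rw [((hd t).fun_add (by simpa using (hasDerivAt_id t).const_mul K)).deriv]
      have := (abs_le.1 (hK t)).1; linarith
  have e1 := h1 (zero_le_one)
  have e2 := h2 (zero_le_one)
  have hη0 : η 0 = fderiv ℝ U 0 w := by simp [hη]
  have hη1 : η 1 = fderiv ℝ U x w := by simp [hη]
  simp only [mul_zero, mul_one, hη0, hη1] at e1 e2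
  rw [abs_le]; constructor <;> linarith
end aux2

section aux3
variable {E : Type*} [NormedAddCommGroup E] [NormedSpace ℝ E]

lemma aux_offdiag_le {U : E → ℝ} (hU : ContDiff ℝ 2 U) {m L : ℝ} (hm : 0 ≤ m)
    (hHess : ∀ y u, m * ‖u‖ ^ 2 ≤ iteratedFDeriv ℝ 2 U y ![u, u] ∧
      iteratedFDeriv ℝ 2 U y ![u, u] ≤ L * ‖u‖ ^ 2)
    (y v w : E) (hv : ‖v‖ = 1) (hw : ‖w‖ = 1) :
    fderiv ℝ (fderiv ℝ U) y v w ≤ L := by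
  set B := fderiv ℝ (fderiv ℝ U) y with hB
  have hsym : ∀ a b : E, B a b = B b a := fun a b =>
    second_derivative_symmetric (f := U) (f' := fderiv ℝ U)
      (fun z => (hU.differentiable (by norm_num) z).hasFDerivAt)
      (((hU.fderiv_right (m := 1) (by norm_num)).differentiable (by norm_num) y).hasFDerivAt) a b
  have hquad : ∀ u : E, iteratedFDeriv ℝ 2 U y ![u, u] = B u u := fun u => by
    rw [iteratedFDeriv_two_apply]; rfl
  have hL0 : 0 ≤ L := by
    have h := (hHess y v).1.trans (hHess y v).2
    rw [hv] at h; nlinarith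
  have expand : B (v + w) (v + w) - B (v - w) (v - w) = 4 * B v w := by
    have e1 : B (v + w) (v + w) = B v v + B v w + B w v + B w w := by
      rw [map_add]
      simp only [ContinuousLinearMap.add_apply, map_add]
      ring
    have e2 : B (v - w) (v - w) = B v v - B v w - B w v + B w w := by
      rw [map_sub]
      simp only [ContinuousLinearMap.sub_apply, map_sub]
      ring
    rw [e1, e2, hsym v w]; ring
  have hup : B (v + w) (v + w) ≤ 4 * L := by
    have := (hHess y (v + w)).2
    rw [hquad] at this
    have hn : ‖v + w‖ ≤ 2 := by
      calc ‖v + w‖ ≤ ‖v‖ + ‖w‖ := norm_add_le v w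
      _ = 2 := by rw [hv, hw]; norm_num
    have h4 : ‖v + w‖ ^ 2 ≤ 4 := by nlinarith [norm_nonneg (v + w)]
    nlinarith [mul_le_mul_of_nonneg_left h4 hL0]
  have hlo : 0 ≤ B (v - w) (v - w) := by
    have := (hHess y (v - w)).1
    rw [hquad] at this
    nlinarith [norm_nonneg (v - w), sq_nonneg ‖v - w‖]
  linarith [expand]

lemma aux_offdiag {U : E → ℝ} (hU : ContDiff ℝ 2 U) {m L : ℝ} (hm : 0 ≤ m)
    (hHess : ∀ y u, m * ‖u‖ ^ 2 ≤ iteratedFDeriv ℝ 2 U y ![u, u] ∧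
      iteratedFDeriv ℝ 2 U y ![u, u] ≤ L * ‖u‖ ^ 2)
    (y v w : E) (hv : ‖v‖ = 1) (hw : ‖w‖ = 1) :
    |fderiv ℝ (fderiv ℝ U) y v w| ≤ L := by
  rw [abs_le]
  constructor
  · have := aux_offdiag_le hU hm hHess y v (-w) hv (by rw [norm_neg]; exact hw)
    rw [map_neg] at this; linarith
  · exact aux_offdiag_le hU hm hHess y v w hv hw
end aux3

lemma aux_int_gauss {d : ℕ} {b : ℝ} (hb : 0 < b) :
    Integrable (fun x : EuclideanSpace ℝ (Fin d) => exp (-b * ‖x‖ ^ 2)) := by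
  have h := GaussianFourier.integrable_cexp_neg_mul_sq_norm_add (V := EuclideanSpace ℝ (Fin d))
    (b := (b : ℂ)) (by simpa using hb) 0 0
  have h2 := h.norm
  simp only [zero_mul, add_zero, Complex.norm_exp] at h2
  have h3 : (fun a : EuclideanSpace ℝ (Fin d) => rexp ((-(b:ℂ) * (‖a‖:ℂ) ^ 2).re))
      = (fun x : EuclideanSpace ℝ (Fin d) => exp (-b * ‖x‖ ^ 2)) := by
    funext a
    congr 1
    rw [show ((‖a‖:ℂ) ^ 2) = ((‖a‖ ^ 2 : ℝ) : ℂ) by push_cast; ring]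
    rw [show (-(b:ℂ) * ((‖a‖ ^ 2 : ℝ) : ℂ)) = (((-b * ‖a‖ ^ 2 : ℝ)) : ℂ) by push_cast; ring]
    exact Complex.ofReal_re _
  rwa [h3] at h2

lemma aux_transl {d : ℕ} (g : EuclideanSpace ℝ (Fin d) → ℝ) (w : EuclideanSpace ℝ (Fin d)) :
    ∫ x : EuclideanSpace ℝ (Fin d), g (x + w) = ∫ x, g x :=
  integral_add_right_eq_self g w

lemma aux_int_dom {d : ℕ} {g : EuclideanSpace ℝ (Fin d) → ℝ} (hg : Continuous g)
    {C b : ℝ} (hb : 0 < b) (h : ∀ x, g x ≤ C - b * ‖x‖ ^ 2) :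
    Integrable (fun x => exp (g x)) := by
  apply Integrable.mono' ((aux_int_gauss hb).const_mul (exp C))
    (hg.rexp.aestronglyMeasurable)
  refine Filter.Eventually.of_forall fun x => ?_
  have h2 : exp (g x) ≤ exp (C + -b * ‖x‖ ^ 2) := exp_le_exp.2 (by linarith [h x])
  simpa [Real.exp_add, Real.norm_eq_abs, abs_of_pos (exp_pos _)] using h2

set_option maxHeartbeats 2000000 in
/-- concentration of partial derivatives, Lemma 5 of the paper: under
Assumption 1 (`m·Id ≤ ∇²U ≤ L·Id`, `0 < m ≤ 1 ≤ L`, unique minimizer `0`, `U(0) = 0`),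
with `μ = Z⁻¹ e^{−U} dx`, for every coordinate `i` and every `c > 0`,
`μ(|∂_{x_i}U| ≥ 2√L + 2c√L log d) ≤ 3 d^{−c}`. -/
theorem concentration_partial_deriv (d : ℕ) (hd : 1 ≤ d) (m L : ℝ)
    (hm : 0 < m) (hm1 : m ≤ 1) (hL : 1 ≤ L)
    (U : EuclideanSpace ℝ (Fin d) → ℝ)
    (hU : ContDiff ℝ 2 U)
    (hHess : ∀ x v : EuclideanSpace ℝ (Fin d),
      m * ‖v‖ ^ 2 ≤ iteratedFDeriv ℝ 2 U x ![v, v] ∧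
      iteratedFDeriv ℝ 2 U x ![v, v] ≤ L * ‖v‖ ^ 2)
    (hU0 : U 0 = 0) (hUmin : ∀ x ≠ 0, 0 < U x)
    (μ : Measure (EuclideanSpace ℝ (Fin d)))
    (hμ : μ = volume.withDensity (fun x =>
      ENNReal.ofReal ((∫ y, Real.exp (-U y))⁻¹ * Real.exp (-U x))))
    (i : Fin d) (c : ℝ) (hc : 0 < c) :
    μ {x | 2 * Real.sqrt L + 2 * c * Real.sqrt L * Real.log d
            ≤ |fderiv ℝ U x (EuclideanSpace.single i 1)|}
      ≤ ENNReal.ofReal (3 * (d : ℝ) ^ (-c)) := by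
  have hL0 : (0:ℝ) < L := lt_of_lt_of_le one_pos hL
  set e : EuclideanSpace ℝ (Fin d) := EuclideanSpace.single i 1 with he_def
  have he : ‖e‖ = 1 := by
    rw [he_def, EuclideanSpace.norm_single]; norm_num
  set s : ℝ := 2 * Real.sqrt L + 2 * c * Real.sqrt L * Real.log d with hs_def
  have hsqrtL : 1 ≤ Real.sqrt L := by
    rw [show (1:ℝ) = Real.sqrt 1 from Real.sqrt_one.symm]
    exact Real.sqrt_le_sqrt hL
  have hlogd : 0 ≤ Real.log d := Real.log_nonneg (by exact_mod_cast hd)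
  have hs : 0 < s := by
    have h1 : 0 ≤ 2 * c * Real.sqrt L * Real.log d := by positivity
    nlinarith
  set l : ℝ := s / L with hl_def
  have hl : 0 < l := div_pos hs hL0
  clear_value e s l
  -- gradient vanishes at 0
  have hUdiff : Differentiable ℝ U := hU.differentiable (by norm_num)
  have grad0 : fderiv ℝ U 0 = 0 := by
    have hmin : IsLocalMin U 0 := Filter.Eventually.of_forall fun y => by
      rcases eq_or_ne y 0 with rfl | hy
      · exact le_refl _
      · rw [hU0]; exact (hUmin y hy).le
    exact hmin.fderiv_eq_zero
  -- lower quadratic bound on U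
  have hUlb : ∀ x : EuclideanSpace ℝ (Fin d), m / 2 * ‖x‖ ^ 2 ≤ U x := by
    intro x
    have h := aux_taylor_lower hU (c := m * ‖x‖ ^ 2) 0 x (fun y => (hHess y x).1)
    rw [hU0, grad0] at h
    simp only [ContinuousLinearMap.zero_apply, zero_add] at h
    linarith
  -- linear growth of directional derivatives
  have hlinear : ∀ v : EuclideanSpace ℝ (Fin d), ‖v‖ = 1 → ∀ x : EuclideanSpace ℝ (Fin d), |fderiv ℝ U x v| ≤ L * ‖x‖ := by
    intro v hv x
    rcases eq_or_ne x 0 with rfl | hx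
    · rw [grad0]; simp
    · have hxn : (0:ℝ) < ‖x‖ := norm_pos_iff.2 hx
      set xh : EuclideanSpace ℝ (Fin d) := ‖x‖⁻¹ • x with hxh_def
      have hxh : ‖xh‖ = 1 := by
        rw [hxh_def, norm_smul, norm_inv, norm_norm, inv_mul_cancel₀ hxn.ne']
      have hxeq : x = ‖x‖ • xh := by
        rw [hxh_def, smul_smul, mul_inv_cancel₀ hxn.ne', one_smul]
      have hK : ∀ t : ℝ, |fderiv ℝ (fderiv ℝ U) ((0:EuclideanSpace ℝ (Fin d)) + t • x) x v| ≤ L * ‖x‖ := by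
        intro t
        have hb := aux_offdiag hU hm.le hHess ((0:EuclideanSpace ℝ (Fin d)) + t • x) xh v hxh hv
        have hsmul : fderiv ℝ (fderiv ℝ U) ((0:EuclideanSpace ℝ (Fin d)) + t • x) (‖x‖ • xh) v
            = ‖x‖ * (fderiv ℝ (fderiv ℝ U) ((0:EuclideanSpace ℝ (Fin d)) + t • x) xh v) := by
          rw [_root_.map_smul, ContinuousLinearMap.smul_apply, smul_eq_mul]
        rw [← hxeq] at hsmul
        rw [hsmul, abs_mul, abs_of_pos hxn]
        calc ‖x‖ * |fderiv ℝ (fderiv ℝ U) ((0:EuclideanSpace ℝ (Fin d)) + t • x) xh v|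
            ≤ ‖x‖ * L := mul_le_mul_of_nonneg_left hb hxn.le
          _ = L * ‖x‖ := mul_comm _ _
      have h := aux_lip hU x v hK
      rw [grad0] at h
      simpa using h
  -- continuity facts
  have hUcont : Continuous U := hU.continuous
  have hfd_cont : ∀ v : EuclideanSpace ℝ (Fin d), Continuous (fun x => fderiv ℝ U x v) := fun v =>
    (ContinuousLinearMap.apply ℝ ℝ v).continuous.comp (hU.continuous_fderiv (by norm_num))
  -- normalization constant
  set Z : ℝ := ∫ y, Real.exp (-U y) with hZ_def
  clear_value Z
  have hZint : Integrable (fun y : EuclideanSpace ℝ (Fin d) => Real.exp (-U y)) :=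
    aux_int_dom hUcont.neg (C := 0) (b := m / 2) (half_pos hm)
      (fun x => by have := hUlb x; linarith)
  have hZpos : 0 < Z := by
    rw [hZ_def, integral_pos_iff_support_of_nonneg (fun x => (Real.exp_pos _).le) hZint]
    have hsupp : Function.support (fun y : EuclideanSpace ℝ (Fin d) => Real.exp (-U y)) = Set.univ :=
      Set.eq_univ_of_forall fun y => Real.exp_ne_zero _
    rw [hsupp]
    exact isOpen_univ.measure_pos volume ⟨0, trivial⟩
  -- the key Chernoff bound for a unit direction
  have key : ∀ v : EuclideanSpace ℝ (Fin d), ‖v‖ = 1 →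
      (∫⁻ x in {x : EuclideanSpace ℝ (Fin d) | s ≤ fderiv ℝ U x v}, ENNReal.ofReal (Real.exp (-U x)))
        ≤ ENNReal.ofReal (Real.exp (-(s ^ 2 / (2 * L))) * Z) := by
    intro v hv
    set w : EuclideanSpace ℝ (Fin d) := (-l) • v with hw_def
    have hwn : ‖w‖ = l := by
      rw [hw_def, norm_smul, hv, mul_one, Real.norm_eq_abs, abs_neg, abs_of_pos hl]
    clear_value w
    -- Taylor upper bound pointwise
    have hpt : ∀ x : EuclideanSpace ℝ (Fin d), l * fderiv ℝ U x v - l * s - U x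
        ≤ -(s ^ 2 / (2 * L)) + -U (x + w) := by
      intro x
      have hTay := aux_taylor_upper hU (C := L * l ^ 2) x w (fun y => by
        have := (hHess y w).2
        rwa [hwn] at this)
      have hfw : fderiv ℝ U x w = -l * fderiv ℝ U x v := by
        rw [hw_def, _root_.map_smul, smul_eq_mul]
      rw [hfw] at hTay
      have hls : L * l ^ 2 / 2 - l * s = -(s ^ 2 / (2 * L)) := by
        rw [hl_def]; field_simp; ring
      nlinarith [hTay]
    -- integrability of the tilted integrand
    have hgcont : Continuous (fun x : EuclideanSpace ℝ (Fin d) => l * fderiv ℝ U x v - l * s - U x) :=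
      ((continuous_const.mul (hfd_cont v)).sub continuous_const).sub hUcont
    have int_left : Integrable (fun x : EuclideanSpace ℝ (Fin d) => Real.exp (l * fderiv ℝ U x v - l * s - U x)) := by
      apply aux_int_dom hgcont (C := (l * L) ^ 2 / m) (b := m / 4) (by positivity)
      intro x
      have h1 : l * fderiv ℝ U x v ≤ l * (L * ‖x‖) := by
        have := (abs_le.1 (hlinear v hv x)).2
        exact mul_le_mul_of_nonneg_left this hl.le
      have h2 := hUlb x
      have h3 : l * (L * ‖x‖) ≤ (l * L) ^ 2 / m + m / 4 * ‖x‖ ^ 2 := by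
        have h4 : m * (l * (L * ‖x‖)) ≤ (l * L) ^ 2 + m ^ 2 / 4 * ‖x‖ ^ 2 := by
          nlinarith [sq_nonneg (l * L - m / 2 * ‖x‖)]
        have h6 : l * (L * ‖x‖) = m * (l * (L * ‖x‖)) / m := by field_simp
        rw [h6, div_le_iff₀ hm]
        have h7 : ((l * L) ^ 2 / m + m / 4 * ‖x‖ ^ 2) * m
            = (l * L) ^ 2 + m ^ 2 / 4 * ‖x‖ ^ 2 := by field_simp
        rw [h7]; exact h4
      nlinarith [mul_nonneg hl.le hs.le]
    have int_right : Integrable (fun x : EuclideanSpace ℝ (Fin d) => Real.exp (-U (x + w))) := by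
      apply aux_int_dom (g := fun x => -U (x + w))
        (Continuous.neg (hUcont.comp (continuous_id.add continuous_const)))
        (C := m / 2 * ‖w‖ ^ 2) (b := m / 4) (by positivity)
      intro x
      have h1 := hUlb (x + w)
      have h2 : ‖x‖ ≤ ‖x + w‖ + ‖w‖ := by
        calc ‖x‖ = ‖(x + w) + (-w)‖ := by rw [add_neg_cancel_right]
        _ ≤ ‖x + w‖ + ‖-w‖ := norm_add_le _ _
        _ = ‖x + w‖ + ‖w‖ := by rw [norm_neg]
      have h3 : ‖x‖ ^ 2 ≤ 2 * ‖x + w‖ ^ 2 + 2 * ‖w‖ ^ 2 := by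
        nlinarith [norm_nonneg x, norm_nonneg (x + w), norm_nonneg w, sq_nonneg (‖x + w‖ - ‖w‖)]
      linarith [mul_le_mul_of_nonneg_left h3 hm.le]
    -- real integral bound
    have hreal : (∫ x : EuclideanSpace ℝ (Fin d), Real.exp (l * fderiv ℝ U x v - l * s - U x))
        ≤ Real.exp (-(s ^ 2 / (2 * L))) * Z := by
      have hmono := integral_mono int_left (int_right.const_mul (Real.exp (-(s ^ 2 / (2 * L)))))
        (fun x => by
          rw [← Real.exp_add]
          exact Real.exp_le_exp.2 (hpt x))
      rw [integral_const_mul] at hmono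
      rwa [aux_transl (fun y => Real.exp (-U y)) w, ← hZ_def] at hmono
    -- pass to lintegral
    have hmeas_exp : Measurable (fun x : EuclideanSpace ℝ (Fin d) => ENNReal.ofReal (Real.exp (l * fderiv ℝ U x v - l * s - U x))) :=
      hgcont.rexp.measurable.ennreal_ofReal
    calc (∫⁻ x in {x : EuclideanSpace ℝ (Fin d) | s ≤ fderiv ℝ U x v}, ENNReal.ofReal (Real.exp (-U x)))
        ≤ ∫⁻ x in {x : EuclideanSpace ℝ (Fin d) | s ≤ fderiv ℝ U x v},
            ENNReal.ofReal (Real.exp (l * fderiv ℝ U x v - l * s - U x)) := by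
          apply setLIntegral_mono hmeas_exp
          intro x hx
          apply ENNReal.ofReal_le_ofReal
          apply Real.exp_le_exp.2
          have : s ≤ fderiv ℝ U x v := hx
          nlinarith
      _ ≤ ∫⁻ x, ENNReal.ofReal (Real.exp (l * fderiv ℝ U x v - l * s - U x)) :=
          lintegral_mono' Measure.restrict_le_self le_rfl
      _ = ENNReal.ofReal (∫ x : EuclideanSpace ℝ (Fin d), Real.exp (l * fderiv ℝ U x v - l * s - U x)) :=
          (ofReal_integral_eq_lintegral_ofReal int_left
            (Filter.Eventually.of_forall fun x => (Real.exp_pos _).le)).symm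
      _ ≤ ENNReal.ofReal (Real.exp (-(s ^ 2 / (2 * L))) * Z) :=
          ENNReal.ofReal_le_ofReal hreal
  -- measurability of the target set
  set S : Set (EuclideanSpace ℝ (Fin d)) := {x | s ≤ |fderiv ℝ U x e|} with hS_def
  have hSmeas : MeasurableSet S :=
    measurableSet_le measurable_const (hfd_cont e).abs.measurable
  have hAmeas : ∀ v : EuclideanSpace ℝ (Fin d), MeasurableSet {x : EuclideanSpace ℝ (Fin d) | s ≤ fderiv ℝ U x v} := fun v =>
    measurableSet_le measurable_const (hfd_cont v).measurable
  -- compute μ S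
  have hμS : μ S = ∫⁻ x in S, ENNReal.ofReal (Z⁻¹ * Real.exp (-U x)) := by
    rw [hμ, withDensity_apply _ hSmeas]
  have hsplit : ∀ x : EuclideanSpace ℝ (Fin d), ENNReal.ofReal (Z⁻¹ * Real.exp (-U x))
      = ENNReal.ofReal Z⁻¹ * ENNReal.ofReal (Real.exp (-U x)) := fun x =>
    ENNReal.ofReal_mul (inv_nonneg.2 hZpos.le)
  have hsub : S ⊆ {x : EuclideanSpace ℝ (Fin d) | s ≤ fderiv ℝ U x e} ∪ {x : EuclideanSpace ℝ (Fin d) | s ≤ fderiv ℝ U x (-e)} := by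
    intro x hx
    have hx' : s ≤ |fderiv ℝ U x e| := hx
    rcases le_abs.1 hx' with h | h
    · exact Or.inl h
    · right
      show s ≤ fderiv ℝ U x (-e)
      rw [_root_.map_neg]
      linarith
  have hne : ‖(-e : EuclideanSpace ℝ (Fin d))‖ = 1 := by rw [norm_neg]; exact he
  have hbound : μ S ≤ ENNReal.ofReal Z⁻¹ *
      (ENNReal.ofReal (Real.exp (-(s ^ 2 / (2 * L))) * Z)
        + ENNReal.ofReal (Real.exp (-(s ^ 2 / (2 * L))) * Z)) := by
    rw [hμS]
    simp_rw [hsplit]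
    rw [lintegral_const_mul' _ _ ENNReal.ofReal_ne_top]
    apply mul_le_mul_right
    calc (∫⁻ x in S, ENNReal.ofReal (Real.exp (-U x)))
        ≤ ∫⁻ x in {x : EuclideanSpace ℝ (Fin d) | s ≤ fderiv ℝ U x e} ∪ {x : EuclideanSpace ℝ (Fin d) | s ≤ fderiv ℝ U x (-e)},
            ENNReal.ofReal (Real.exp (-U x)) := lintegral_mono_set hsub
      _ ≤ (∫⁻ x in {x : EuclideanSpace ℝ (Fin d) | s ≤ fderiv ℝ U x e}, ENNReal.ofReal (Real.exp (-U x)))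
            + ∫⁻ x in {x : EuclideanSpace ℝ (Fin d) | s ≤ fderiv ℝ U x (-e)}, ENNReal.ofReal (Real.exp (-U x)) :=
          lintegral_union_le _ _ _
      _ ≤ _ := add_le_add (key e he) (key (-e) hne)
  -- combine the constants
  have hcomb : ENNReal.ofReal Z⁻¹ *
      (ENNReal.ofReal (Real.exp (-(s ^ 2 / (2 * L))) * Z)
        + ENNReal.ofReal (Real.exp (-(s ^ 2 / (2 * L))) * Z))
      = ENNReal.ofReal (2 * Real.exp (-(s ^ 2 / (2 * L)))) := by
    rw [← ENNReal.ofReal_add (by positivity) (by positivity),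
      ← ENNReal.ofReal_mul (inv_nonneg.2 hZpos.le)]
    congr 1
    field_simp
    ring
  -- final numeric inequality
  have hnum : 2 * Real.exp (-(s ^ 2 / (2 * L))) ≤ 3 * (d : ℝ) ^ (-c) := by
    set a : ℝ := c * Real.log d with ha_def
    have ha : 0 ≤ a := mul_nonneg hc.le hlogd
    have hseq : s = 2 * Real.sqrt L * (1 + a) := by rw [hs_def, ha_def]; ring
    have hsqL : Real.sqrt L ^ 2 = L := Real.sq_sqrt hL0.le
    have hsq : s ^ 2 = 4 * L * (1 + a) ^ 2 := by rw [hseq]; nlinarith [hsqL]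
    have hdiv : s ^ 2 / (2 * L) = 2 * (1 + a) ^ 2 := by
      rw [hsq]; field_simp; ring
    have hrpow : (d : ℝ) ^ (-c) = Real.exp (-a) := by
      rw [Real.rpow_def_of_pos (by exact_mod_cast hd), ha_def]
      congr 1
      ring
    rw [hdiv, hrpow]
    have hexp : Real.exp (-(2 * (1 + a) ^ 2)) ≤ Real.exp (-a) :=
      Real.exp_le_exp.2 (by nlinarith)
    nlinarith [Real.exp_pos (-(2 * (1 + a) ^ 2)), Real.exp_pos (-a)]
  calc μ S ≤ _ := hbound
    _ = ENNReal.ofReal (2 * Real.exp (-(s ^ 2 / (2 * L)))) := hcomb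
    _ ≤ ENNReal.ofReal (3 * (d : ℝ) ^ (-c)) := ENNReal.ofReal_le_ofReal hnum
end

section
/- For all reals A, B > 0, ∫_0^∞ s(A + 2Bs) e^{−As − Bs²} ds ≥ 1/(4A) + B/(2A³) − (3A/(2B) + 5/(4A) + B/(2A³)) e^{−2A²/B}. In particular, this integral is the expectation of a random variable with survival function P(t ≥ s) = exp(−As − Bs²) for s ≥ 0. -/
open MeasureTheory

/-- For all `A, B > 0`,
`∫_0^∞ s(A + 2Bs) e^{−As − Bs²} ds ≥ 1/(4A) + B/(2A³) − (3A/(2B) + 5/(4A) + B/(2A³)) e^{−2A²/B}`.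
This integral is the expectation of a random variable with survival function
`exp(−As − Bs²)`. -/
theorem expectation_lower_bound (A B : ℝ) (hA : 0 < A) (hB : 0 < B) :
    (∫ s in Set.Ioi (0 : ℝ), s * (A + 2 * B * s) * Real.exp (-A * s - B * s ^ 2))
      ≥ 1 / (4 * A) + B / (2 * A ^ 3)
        - (3 * A / (2 * B) + 5 / (4 * A) + B / (2 * A ^ 3)) * Real.exp (-2 * A ^ 2 / B) := by
  have hA' : A ≠ 0 := hA.ne'
  have hB' : B ≠ 0 := hB.ne'
  set T : ℝ := A / B with hT
  have hT0 : 0 < T := div_pos hA hB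
  set f : ℝ → ℝ := fun s => s * (A + 2 * B * s) * Real.exp (-A * s - B * s ^ 2) with hf
  set g : ℝ → ℝ := fun s => s * (A + 2 * B * s) * Real.exp (-2 * A * s) with hg
  have hfc : Continuous f := by fun_prop
  have hgc : Continuous g := by fun_prop
  -- Integrability of f on Ioi 0
  have hint : IntegrableOn f (Set.Ioi 0) := by
    have h1 : IntegrableOn (fun x : ℝ => x ^ ((1 : ℝ)) * Real.exp (-B * x ^ 2))
        (Set.Ioi 0) := integrableOn_rpow_mul_exp_neg_mul_sq hB (by norm_num)
    have h2 : IntegrableOn (fun x : ℝ => x ^ ((2 : ℝ)) * Real.exp (-B * x ^ 2))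
        (Set.Ioi 0) := integrableOn_rpow_mul_exp_neg_mul_sq hB (by norm_num)
    have hGint : IntegrableOn
        (fun x : ℝ => A * (x ^ ((1 : ℝ)) * Real.exp (-B * x ^ 2))
          + 2 * B * (x ^ ((2 : ℝ)) * Real.exp (-B * x ^ 2))) (Set.Ioi 0) :=
      (h1.const_mul A).add (h2.const_mul (2 * B))
    refine Integrable.mono' hGint (hfc.aestronglyMeasurable.restrict) ?_
    rw [ae_restrict_iff' measurableSet_Ioi]
    filter_upwards with s hs
    have hs0 : 0 < s := hs
    have e1 : s ^ ((1 : ℝ)) = s := Real.rpow_one s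
    have e2 : s ^ ((2 : ℝ)) = s ^ 2 := by
      rw [← Real.rpow_natCast s 2]; norm_num
    rw [e1, e2]
    have hfn : 0 ≤ f s := by
      apply mul_nonneg (mul_nonneg hs0.le (by positivity)) (Real.exp_pos _).le
    rw [Real.norm_eq_abs, abs_of_nonneg hfn]
    have hexp : Real.exp (-A * s - B * s ^ 2) ≤ Real.exp (-B * s ^ 2) := by
      apply Real.exp_le_exp.2; nlinarith
    calc f s ≤ s * (A + 2 * B * s) * Real.exp (-B * s ^ 2) := by
            apply mul_le_mul_of_nonneg_left hexp (by positivity)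
      _ = A * (s * Real.exp (-B * s ^ 2)) + 2 * B * (s ^ 2 * Real.exp (-B * s ^ 2)) := by ring
  -- Step A: restrict to Ioc 0 T
  have stepA : (∫ s in Set.Ioc (0 : ℝ) T, f s) ≤ ∫ s in Set.Ioi (0 : ℝ), f s := by
    apply setIntegral_mono_set hint
    · filter_upwards [ae_restrict_mem measurableSet_Ioi] with s hs
      have hs0 : (0:ℝ) < s := hs
      simpa using mul_nonneg (mul_nonneg hs0.le (by positivity)) (Real.exp_pos _).le
    · exact HasSubset.Subset.eventuallyLE Set.Ioc_subset_Ioi_self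
  -- Step B: pointwise bound on Ioc 0 T
  have stepB : (∫ s in Set.Ioc (0 : ℝ) T, g s) ≤ ∫ s in Set.Ioc (0 : ℝ) T, f s := by
    apply setIntegral_mono_on (hgc.integrableOn_Ioc) (hint.mono_set Set.Ioc_subset_Ioi_self)
      measurableSet_Ioc
    intro s hs
    obtain ⟨hs0, hsT⟩ := hs
    have hBs : B * s ≤ A := by
      rw [hT, le_div_iff₀ hB] at hsT; linarith [hsT]
    have hexp : Real.exp (-2 * A * s) ≤ Real.exp (-A * s - B * s ^ 2) := by
      apply Real.exp_le_exp.2; nlinarith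
    exact mul_le_mul_of_nonneg_left hexp (by positivity)
  -- Step C: explicit computation of ∫ g over Ioc 0 T
  set F : ℝ → ℝ := fun s => Real.exp (-2 * A * s) *
      (-B / A * s ^ 2 + (-B / A ^ 2 - 1 / 2) * s + (-B / (2 * A ^ 3) - 1 / (4 * A))) with hF
  have hderiv : ∀ s : ℝ, HasDerivAt F (g s) s := by
    intro s
    have h1 : HasDerivAt (fun s : ℝ => -2 * A * s) (-2 * A) s := by
      simpa using (hasDerivAt_id s).const_mul (-2 * A)
    have h2 := h1.exp
    have h3 : HasDerivAt (fun s : ℝ => -B / A * s ^ 2 + (-B / A ^ 2 - 1 / 2) * s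
        + (-B / (2 * A ^ 3) - 1 / (4 * A)))
        (-B / A * (2 * s) + (-B / A ^ 2 - 1 / 2)) s := by
      have hp : HasDerivAt (fun s : ℝ => s ^ 2) (2 * s) s := by
        simpa using hasDerivAt_pow 2 s
      have := ((hp.const_mul (-B / A)).add
        (((hasDerivAt_id s).const_mul (-B / A ^ 2 - 1 / 2)))).add_const
        (-B / (2 * A ^ 3) - 1 / (4 * A))
      simpa using this
    have := h2.mul h3
    convert this using 1
    · rfl
    · rfl
    · rfl
    simp only [hg]
    field_simp
    ring
  have stepC : (∫ s in Set.Ioc (0 : ℝ) T, g s) = F T - F 0 := by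
    rw [← intervalIntegral.integral_of_le hT0.le]
    exact intervalIntegral.integral_eq_sub_of_hasDerivAt (fun s _ => hderiv s)
      (hgc.intervalIntegrable 0 T)
  have hval : F T - F 0 = 1 / (4 * A) + B / (2 * A ^ 3)
      - (3 * A / (2 * B) + 5 / (4 * A) + B / (2 * A ^ 3)) * Real.exp (-2 * A ^ 2 / B) := by
    have hTe : -2 * A * T = -2 * A ^ 2 / B := by
      rw [hT]; ring
    have h0 : F 0 = -B / (2 * A ^ 3) - 1 / (4 * A) := by
      simp [hF]
    have hTv : F T = Real.exp (-2 * A ^ 2 / B) *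
        (-B / A * T ^ 2 + (-B / A ^ 2 - 1 / 2) * T + (-B / (2 * A ^ 3) - 1 / (4 * A))) := by
      simp only [hF, hTe]
    rw [h0, hTv, hT]
    field_simp
    ring
  calc (∫ s in Set.Ioi (0 : ℝ), f s) ≥ ∫ s in Set.Ioc (0 : ℝ) T, f s := stepA
    _ ≥ ∫ s in Set.Ioc (0 : ℝ) T, g s := stepB
    _ = _ := stepC.trans hval
end

section
/- Let d ≥ 1 and let U : ℝ^d → ℝ be twice continuously differentiable with m‖v‖² ≤ ⟨v, ∇²U(x)v⟩ ≤ L‖v‖² for all x, v ∈ ℝ^d, where 0 < m ≤ 1 ≤ L, U having its unique minimizer at x = 0 with U(0) = 0. Let μ be the probability measure with density Z⁻¹ e^{−U(x)} with respect to Lebesgue measure, Z = ∫ e^{−U}, and let μ₀ be the Gaussian measure on ℝ^d with density (L/(2π))^{d/2} e^{−L‖x‖²/2}. Then the Kullback–Leibler divergence satisfies KL(μ₀ ‖ μ) ≤ (d/2) · log(L/m). -/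
open MeasureTheory Real


lemma integrable_rexp_neg_mul_sq_norm {d : ℕ} {b : ℝ} (hb : 0 < b) :
    Integrable (fun x : EuclideanSpace ℝ (Fin d) => rexp (-b * ‖x‖ ^ 2)) := by
  have h := (GaussianFourier.integrable_cexp_neg_mul_sq_norm_add
    (V := EuclideanSpace ℝ (Fin d)) (b := (b : ℂ)) (by simpa using hb) 0 0).norm
  simp only [zero_mul, add_zero] at h
  apply h.congr
  filter_upwards with x
  rw [show (-(b : ℂ) * (‖x‖ : ℂ) ^ 2) = ((-b * ‖x‖ ^ 2 : ℝ) : ℂ) by push_cast; ring,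
    Complex.norm_exp, Complex.ofReal_re]

lemma integral_rexp_neg_mul_sq_norm' {d : ℕ} {b : ℝ} (hb : 0 < b) :
    ∫ x : EuclideanSpace ℝ (Fin d), rexp (-b * ‖x‖ ^ 2) = (π / b) ^ ((d : ℝ) / 2) := by
  rw [GaussianFourier.integral_rexp_neg_mul_sq_norm hb]
  norm_num [finrank_euclideanSpace_fin]

lemma quad_aux {g g' g'' : ℝ → ℝ} (hg : ∀ t, HasDerivAt g (g' t) t)
    (hg' : ∀ t, HasDerivAt g' (g'' t) t) (h0 : g 0 = 0) (h0' : g' 0 = 0)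
    (hpos : ∀ t, 0 ≤ g'' t) : 0 ≤ g 1 := by
  have mono' : Monotone g' :=
    monotone_of_deriv_nonneg (fun t => (hg' t).differentiableAt)
      (fun t => by rw [(hg' t).deriv]; exact hpos t)
  have mono : MonotoneOn g (Set.Icc 0 1) := by
    apply monotoneOn_of_deriv_nonneg (convex_Icc 0 1)
      (Continuous.continuousOn (by
        exact Differentiable.continuous (fun t => (hg t).differentiableAt)))
      (fun t ht => ((hg t).differentiableAt).differentiableWithinAt)
    intro t ht
    rw [(hg t).deriv]
    rw [interior_Icc] at ht
    calc (0:ℝ) = g' 0 := h0'.symm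
    _ ≤ g' t := mono' ht.1.le
  calc (0:ℝ) = g 0 := h0.symm
  _ ≤ g 1 := mono (by norm_num) (by norm_num) zero_le_one

variable {d : ℕ}

lemma line_deriv1 {U : EuclideanSpace ℝ (Fin d) → ℝ} (hU : ContDiff ℝ 2 U)
    (x : EuclideanSpace ℝ (Fin d)) (t : ℝ) :
    HasDerivAt (fun s : ℝ => U (s • x)) (fderiv ℝ U (t • x) x) t := by
  have hline : HasDerivAt (fun s : ℝ => s • x) x t := by
    simpa using (hasDerivAt_id t).smul_const x
  exact ((hU.differentiable two_ne_zero (t • x)).hasFDerivAt).comp_hasDerivAt t hline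

lemma line_deriv2 {U : EuclideanSpace ℝ (Fin d) → ℝ} (hU : ContDiff ℝ 2 U)
    (x : EuclideanSpace ℝ (Fin d)) (t : ℝ) :
    HasDerivAt (fun s : ℝ => fderiv ℝ U (s • x) x)
      (iteratedFDeriv ℝ 2 U (t • x) ![x, x]) t := by
  have hline : HasDerivAt (fun s : ℝ => s • x) x t := by
    simpa using (hasDerivAt_id t).smul_const x
  have hD : Differentiable ℝ (fderiv ℝ U) :=
    (hU.fderiv_right (m := 1) (le_refl 2)).differentiable one_ne_zero
  have h1 : HasDerivAt (fun s : ℝ => fderiv ℝ U (s • x))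
      (fderiv ℝ (fderiv ℝ U) (t • x) x) t :=
    ((hD (t • x)).hasFDerivAt).comp_hasDerivAt t hline
  have h2 := h1.clm_apply (hasDerivAt_const t x)
  simp only [add_zero, map_zero] at h2
  rw [iteratedFDeriv_two_apply]
  simpa using h2

lemma U_quad_bounds {m L : ℝ} {U : EuclideanSpace ℝ (Fin d) → ℝ}
    (hU : ContDiff ℝ 2 U)
    (hHess : ∀ x v : EuclideanSpace ℝ (Fin d),
      m * ‖v‖ ^ 2 ≤ iteratedFDeriv ℝ 2 U x ![v, v] ∧
      iteratedFDeriv ℝ 2 U x ![v, v] ≤ L * ‖v‖ ^ 2)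
    (hU0 : U 0 = 0) (hgrad0 : fderiv ℝ U 0 = 0) (x : EuclideanSpace ℝ (Fin d)) :
    m * ‖x‖ ^ 2 / 2 ≤ U x ∧ U x ≤ L * ‖x‖ ^ 2 / 2 := by
  constructor
  · have := quad_aux (g := fun t => U (t • x) - m * ‖x‖ ^ 2 * t ^ 2 / 2)
      (g' := fun t => fderiv ℝ U (t • x) x - m * ‖x‖ ^ 2 * t)
      (g'' := fun t => iteratedFDeriv ℝ 2 U (t • x) ![x, x] - m * ‖x‖ ^ 2)
      (fun t => by
        have h := (line_deriv1 hU x t).sub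
          (((hasDerivAt_pow 2 t).const_mul (m * ‖x‖ ^ 2)).div_const 2)
        convert h using 1 <;> [rfl; rfl; rfl; ring])
      (fun t => by
        have h := (line_deriv2 hU x t).sub ((hasDerivAt_id t).const_mul (m * ‖x‖ ^ 2))
        simpa [Pi.sub_def] using h)
      (by simp [hU0]) (by simp [hgrad0])
      (fun t => by simpa using (hHess (t • x) x).1)
    simpa using this
  · have := quad_aux (g := fun t => L * ‖x‖ ^ 2 * t ^ 2 / 2 - U (t • x))
      (g' := fun t => L * ‖x‖ ^ 2 * t - fderiv ℝ U (t • x) x)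
      (g'' := fun t => L * ‖x‖ ^ 2 - iteratedFDeriv ℝ 2 U (t • x) ![x, x])
      (fun t => by
        have h := (((hasDerivAt_pow 2 t).const_mul (L * ‖x‖ ^ 2)).div_const 2).sub
          (line_deriv1 hU x t)
        convert h using 1 <;> [rfl; rfl; rfl; ring])
      (fun t => by
        have h := ((hasDerivAt_id t).const_mul (L * ‖x‖ ^ 2)).sub (line_deriv2 hU x t)
        simpa [Pi.sub_def] using h)
      (by simp [hU0]) (by simp [hgrad0])
      (fun t => by simpa using (hHess (t • x) x).2)
    simp at this
    linarith

/-- under Assumption 1, for the target `μ = Z⁻¹ e^{−U} dx` and the Gaussian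
`μ₀ = N(0, L⁻¹·Id)`, the Kullback–Leibler divergence satisfies
`KL(μ₀ ‖ μ) = ∫ log(dμ₀/dμ) dμ₀ ≤ (d/2)·log(L/m)`. -/
theorem kl_gaussian_start (d : ℕ) (hd : 1 ≤ d) (m L : ℝ)
    (hm : 0 < m) (hm1 : m ≤ 1) (hL : 1 ≤ L)
    (U : EuclideanSpace ℝ (Fin d) → ℝ)
    (hU : ContDiff ℝ 2 U)
    (hHess : ∀ x v : EuclideanSpace ℝ (Fin d),
      m * ‖v‖ ^ 2 ≤ iteratedFDeriv ℝ 2 U x ![v, v] ∧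
      iteratedFDeriv ℝ 2 U x ![v, v] ≤ L * ‖v‖ ^ 2)
    (hU0 : U 0 = 0) (hUmin : ∀ x ≠ 0, 0 < U x)
    (μ μ₀ : Measure (EuclideanSpace ℝ (Fin d)))
    (hμ : μ = volume.withDensity (fun x =>
      ENNReal.ofReal ((∫ y, Real.exp (-U y))⁻¹ * Real.exp (-U x))))
    (hμ₀ : μ₀ = volume.withDensity (fun x =>
      ENNReal.ofReal ((L / (2 * π)) ^ ((d : ℝ) / 2) * Real.exp (-L * ‖x‖ ^ 2 / 2)))) :
    (∫ x, Real.log ((μ₀.rnDeriv μ x).toReal) ∂μ₀) ≤ (d / 2 : ℝ) * Real.log (L / m) := by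
  have hLpos : (0:ℝ) < L := lt_of_lt_of_le one_pos hL
  have hπ : (0:ℝ) < π := Real.pi_pos
  -- gradient vanishes at 0
  have hgrad0 : fderiv ℝ U 0 = 0 := by
    apply IsLocalMin.fderiv_eq_zero
    apply Filter.Eventually.of_forall
    intro x
    rcases eq_or_ne x 0 with rfl | hx
    · exact le_rfl
    · rw [hU0]; exact (hUmin x hx).le
  have hquad := U_quad_bounds hU hHess hU0 hgrad0
  -- notation
  set Z : ℝ := ∫ y, Real.exp (-U y) with hZdef
  set c : ℝ := (L / (2 * π)) ^ ((d : ℝ) / 2) with hcdef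
  have hc_pos : 0 < c := Real.rpow_pos_of_pos (by positivity) _
  -- integrability
  have hcontU : Continuous U := hU.continuous
  have hmeas_exp : AEStronglyMeasurable (fun x : EuclideanSpace ℝ (Fin d) =>
      Real.exp (-U x)) volume :=
    (Real.continuous_exp.comp hcontU.neg).aestronglyMeasurable
  have hintL : Integrable (fun x : EuclideanSpace ℝ (Fin d) => rexp (-(L/2) * ‖x‖ ^ 2)) :=
    integrable_rexp_neg_mul_sq_norm (by positivity)
  have hintm : Integrable (fun x : EuclideanSpace ℝ (Fin d) => rexp (-(m/2) * ‖x‖ ^ 2)) :=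
    integrable_rexp_neg_mul_sq_norm (by positivity)
  have hintU : Integrable (fun x : EuclideanSpace ℝ (Fin d) => Real.exp (-U x)) := by
    apply hintm.mono hmeas_exp
    filter_upwards with x
    rw [Real.norm_eq_abs, Real.norm_eq_abs, Real.abs_exp, Real.abs_exp, Real.exp_le_exp]
    have := (hquad x).1; nlinarith
  -- bounds on Z
  have hZ_lb : (π / (L/2)) ^ ((d:ℝ)/2) ≤ Z := by
    rw [← integral_rexp_neg_mul_sq_norm' (d := d) (by positivity : (0:ℝ) < L/2)]
    apply integral_mono hintL hintU
    intro x
    rw [Real.exp_le_exp]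
    have := (hquad x).2; nlinarith
  have hZpos : 0 < Z := lt_of_lt_of_le (Real.rpow_pos_of_pos (by positivity) _) hZ_lb
  have hZ_ub : Z ≤ (π / (m/2)) ^ ((d:ℝ)/2) := by
    rw [← integral_rexp_neg_mul_sq_norm' (d := d) (by positivity : (0:ℝ) < m/2)]
    apply integral_mono hintU hintm
    intro x
    rw [Real.exp_le_exp]
    have := (hquad x).1; nlinarith
  -- densities
  set f : EuclideanSpace ℝ (Fin d) → ENNReal :=
    fun x => ENNReal.ofReal (Z⁻¹ * Real.exp (-U x)) with hfdef
  set f₀ : EuclideanSpace ℝ (Fin d) → ENNReal :=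
    fun x => ENNReal.ofReal (c * Real.exp (-L * ‖x‖ ^ 2 / 2)) with hf0def
  have hf_meas : Measurable f :=
    ((continuous_const.mul (Real.continuous_exp.comp hcontU.neg)).measurable).ennreal_ofReal
  have hf0_meas : Measurable f₀ := by
    apply Measurable.ennreal_ofReal
    apply Continuous.measurable
    exact continuous_const.mul (Real.continuous_exp.comp
      (((continuous_const.mul ((continuous_norm (E := EuclideanSpace ℝ (Fin d))).pow 2)).div_const 2)))
  have hg_meas : Measurable (fun x => f₀ x * (f x)⁻¹) := hf0_meas.mul hf_meas.inv
  have hf_ne_zero : ∀ x, f x ≠ 0 := fun x =>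
    (ENNReal.ofReal_pos.2 (by positivity)).ne'
  have hf_ne_top : ∀ x, f x ≠ ⊤ := fun x => ENNReal.ofReal_ne_top
  -- μ₀ as withDensity over μ
  have hμ0' : μ₀ = μ.withDensity (fun x => f₀ x * (f x)⁻¹) := by
    rw [hμ₀, hμ, ← withDensity_mul volume hf_meas hg_meas]
    congr 1
    funext x
    show f₀ x = f x * (f₀ x * (f x)⁻¹)
    rw [mul_left_comm, ENNReal.mul_inv_cancel (hf_ne_zero x) (hf_ne_top x), mul_one]
  -- probability measures
  have hμuniv : μ Set.univ = 1 := by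
    rw [hμ, withDensity_apply _ MeasurableSet.univ, Measure.restrict_univ,
      ← ofReal_integral_eq_lintegral_ofReal (hintU.const_mul _)
        (Filter.Eventually.of_forall fun x => by positivity)]
    rw [integral_const_mul, ← hZdef, inv_mul_cancel₀ hZpos.ne', ENNReal.ofReal_one]
  have hμ0univ : μ₀ Set.univ = 1 := by
    rw [hμ₀, withDensity_apply _ MeasurableSet.univ, Measure.restrict_univ,
      ← ofReal_integral_eq_lintegral_ofReal (hintL.const_mul c |>.congr ?_)
        (Filter.Eventually.of_forall fun x => by positivity)]
    · rw [show (fun x : EuclideanSpace ℝ (Fin d) =>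
          (L / (2 * π)) ^ ((d : ℝ) / 2) * Real.exp (-L * ‖x‖ ^ 2 / 2)) =
          (fun x => c * rexp (-(L/2) * ‖x‖ ^ 2)) by
            funext x; rw [hcdef]; ring_nf]
      rw [integral_const_mul, integral_rexp_neg_mul_sq_norm' (by positivity : (0:ℝ) < L/2)]
      rw [hcdef, ← Real.mul_rpow (by positivity) (by positivity)]
      rw [show L / (2 * π) * (π / (L/2)) = 1 by field_simp, Real.one_rpow,
        ENNReal.ofReal_one]
    · filter_upwards with x
      rw [hcdef]; ring_nf
  haveI : IsProbabilityMeasure μ := ⟨hμuniv⟩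
  haveI : IsProbabilityMeasure μ₀ := ⟨hμ0univ⟩
  -- Radon-Nikodym derivative
  have hac : μ₀ ≪ μ := hμ0' ▸ withDensity_absolutelyContinuous μ _
  have hrn : μ₀.rnDeriv μ =ᵐ[μ₀] fun x => f₀ x * (f x)⁻¹ := by
    have h4 : μ₀.rnDeriv μ =ᵐ[μ] fun x => f₀ x * (f x)⁻¹ := by
      rw [hμ0']
      exact Measure.rnDeriv_withDensity μ hg_meas
    exact hac.ae_le h4
  -- rewrite the integral
  have hpt : ∀ x, Real.log ((f₀ x * (f x)⁻¹).toReal)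
      = Real.log c - L * ‖x‖ ^ 2 / 2 + (Real.log Z + U x) := by
    intro x
    rw [ENNReal.toReal_mul, ENNReal.toReal_inv, ENNReal.toReal_ofReal (by positivity),
      ENNReal.toReal_ofReal (by positivity)]
    rw [Real.log_mul (by positivity) (by positivity), Real.log_inv,
      Real.log_mul (by positivity) (by positivity), Real.log_mul (by positivity) (by positivity),
      Real.log_exp, Real.log_exp, Real.log_inv]
    ring
  have hcongr : (∫ x, Real.log ((μ₀.rnDeriv μ x).toReal) ∂μ₀)
      = ∫ x, (Real.log c - L * ‖x‖ ^ 2 / 2 + (Real.log Z + U x)) ∂μ₀ := by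
    apply integral_congr_ae
    filter_upwards [hrn] with x hx
    rw [hx, hpt x]
  rw [hcongr]
  -- the integrand is bounded by log c + log Z
  have hbound : ∀ x : EuclideanSpace ℝ (Fin d),
      Real.log c - L * ‖x‖ ^ 2 / 2 + (Real.log Z + U x) ≤ Real.log c + Real.log Z := by
    intro x
    have := (hquad x).2
    linarith
  have hCle : Real.log c + Real.log Z ≤ (d / 2 : ℝ) * Real.log (L / m) := by
    have h1 : Real.log c = ((d:ℝ)/2) * Real.log (L / (2 * π)) := by
      rw [hcdef, Real.log_rpow (by positivity)]
    have h2 : Real.log Z ≤ ((d:ℝ)/2) * Real.log (π / (m/2)) := by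
      calc Real.log Z ≤ Real.log ((π / (m/2)) ^ ((d:ℝ)/2)) :=
            Real.log_le_log hZpos hZ_ub
      _ = ((d:ℝ)/2) * Real.log (π / (m/2)) := Real.log_rpow (by positivity) _
    have h3 : Real.log (L / (2 * π)) + Real.log (π / (m/2)) = Real.log (L / m) := by
      rw [← Real.log_mul (by positivity) (by positivity)]
      congr 1
      field_simp
    calc Real.log c + Real.log Z ≤ ((d:ℝ)/2) * Real.log (L / (2 * π))
          + ((d:ℝ)/2) * Real.log (π / (m/2)) := by rw [h1]; linarith
    _ = ((d:ℝ)/2) * Real.log (L / m) := by rw [← h3]; ring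
  by_cases hint : Integrable
      (fun x : EuclideanSpace ℝ (Fin d) =>
        Real.log c - L * ‖x‖ ^ 2 / 2 + (Real.log Z + U x)) μ₀
  · calc (∫ x, (Real.log c - L * ‖x‖ ^ 2 / 2 + (Real.log Z + U x)) ∂μ₀)
        ≤ ∫ _, (Real.log c + Real.log Z) ∂μ₀ :=
          integral_mono hint (integrable_const _) hbound
    _ = Real.log c + Real.log Z := by simp
    _ ≤ _ := hCle
  · rw [integral_undef hint]
    apply mul_nonneg (by positivity)
    apply Real.log_nonneg
    rw [le_div_iff₀ hm]
    nlinarith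
end

section
/- There exists a universal constant C with the following property. Let d ≥ 1, 0 < m ≤ 1 ≤ L, κ = L/m, T > 0 with κ ≤ √L·T, and let U : ℝ^d → ℝ be twice continuously differentiable with m‖w‖² ≤ ⟨w, ∇²U(x)w⟩ ≤ L‖w‖² for all x, w ∈ ℝ^d, with unique minimizer at 0 and U(0) = 0. Let N ≥ 1, let 0 = T_0 < T_1 < ⋯ < T_N ≤ T be given times, and let X : [0,T] → ℝ^d be Lipschitz and piecewise linear with piecewise constant velocity V(t) = X'(t) such that: (i) for every k = 0,…,N and every t in [T_k, T_{k+1}) ∩ [0,T] (with T_{N+1} := T), each component of V(t) equals ±(V_k)_i where V_k := V(T_k); (ii) at every discontinuity time s of V inside such an interval, lim_{t↓s} V(t)·∇U(X(s)) ≤ lim_{t↑s} V(t)·∇U(X(s)). Assume moreover: (a) (1/2)√L·T ≤ N ≤ (3/2)√L·T; (b) |V_k·∇U(X(T_k))| ≤ (d/(√L·T))^{1/2}·‖∇U(X(T_k))‖ for every k = 0,…,N; (c) ‖V_k‖ ≤ 2√d for every k = 0,…,N; (d) U(X(0)) ≤ κ·d; (e) Σ_{k=1}^{N+1} (T_k −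 T_{k−1})² ≤ 4T/√L, where T_{N+1} := T. Then sup_{t∈[0,T]} U(X(t)) ≤ C·√L·T·d. -/
open MeasureTheory Filter Set
open scoped RealInnerProductSpace

section ZigzagAux

variable {d : ℕ}

lemma inner_grad (U : EuclideanSpace ℝ (Fin d) → ℝ) (x v : EuclideanSpace ℝ (Fin d)) :
    ⟪v, gradient U x⟫ = fderiv ℝ U x v := by
  rw [real_inner_comm]
  simp only [gradient]
  exact InnerProductSpace.toDual_symm_apply

lemma norm_eq_of_pm (v w : EuclideanSpace ℝ (Fin d))
    (h : ∀ i, v i = w i ∨ v i = -(w i)) : ‖v‖ = ‖w‖ := by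
  rw [EuclideanSpace.norm_eq, EuclideanSpace.norm_eq]
  congr 1
  refine Finset.sum_congr rfl fun i _ => ?_
  rcases h i with h' | h' <;> rw [h'] <;> simp

lemma hasDeriv_U_comp {U : EuclideanSpace ℝ (Fin d) → ℝ} (hU : ContDiff ℝ 2 U)
    {X : ℝ → EuclideanSpace ℝ (Fin d)} {r : ℝ} {v : EuclideanSpace ℝ (Fin d)} {s : Set ℝ}
    (hX : HasDerivWithinAt X v s r) :
    HasDerivWithinAt (fun u => U (X u)) (fderiv ℝ U (X r) v) s r :=
  ((hU.differentiable (by norm_num) (X r)).hasFDerivAt).comp_hasDerivWithinAt r hX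

lemma hasDeriv_fderiv_comp {U : EuclideanSpace ℝ (Fin d) → ℝ} (hU : ContDiff ℝ 2 U)
    {X : ℝ → EuclideanSpace ℝ (Fin d)} {r : ℝ} {v : EuclideanSpace ℝ (Fin d)} {s : Set ℝ}
    (hX : HasDerivWithinAt X v s r) (w : EuclideanSpace ℝ (Fin d)) :
    HasDerivWithinAt (fun u => fderiv ℝ U (X u) w)
      (fderiv ℝ (fderiv ℝ U) (X r) v w) s r := by
  have h1 : ContDiff ℝ 1 (fderiv ℝ U) := hU.fderiv_right (by norm_num)
  have h2 : HasFDerivAt (fderiv ℝ U) (fderiv ℝ (fderiv ℝ U) (X r)) (X r) :=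
    (h1.differentiable one_ne_zero (X r)).hasFDerivAt
  have h3 : HasDerivWithinAt (fun u => fderiv ℝ U (X u))
      (fderiv ℝ (fderiv ℝ U) (X r) v) s r := h2.comp_hasDerivWithinAt r hX
  have h4 := h3.clm_apply (hasDerivWithinAt_const r s w)
  simpa using h4

lemma taylor_upper {U : EuclideanSpace ℝ (Fin d) → ℝ} (hU : ContDiff ℝ 2 U) {L : ℝ}
    (hform : ∀ x w : EuclideanSpace ℝ (Fin d), iteratedFDeriv ℝ 2 U x ![w, w] ≤ L * ‖w‖ ^ 2)
    (x h : EuclideanSpace ℝ (Fin d)) :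
    U (x + h) ≤ U x + fderiv ℝ U x h + L * ‖h‖ ^ 2 / 2 := by
  set c : ℝ → EuclideanSpace ℝ (Fin d) := fun t => x + t • h with hc
  have hcd : ∀ t : ℝ, HasDerivAt c h t := by
    intro t
    have : HasDerivAt (fun t : ℝ => t • h) ((1:ℝ) • h) t := (hasDerivAt_id t).smul_const h
    have h' : HasDerivAt (fun t : ℝ => t • h) h t := by simpa using this
    exact h'.const_add x
  have hccont : Continuous c :=
    Differentiable.continuous (fun t => (hcd t).differentiableAt)
  set φ : ℝ → ℝ := fun t => U (c t) with hφ
  set φ' : ℝ → ℝ := fun t => fderiv ℝ U (c t) h with hφ'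
  set φ'' : ℝ → ℝ := fun t => fderiv ℝ (fderiv ℝ U) (c t) h h with hφ''
  have hd1 : ∀ t : ℝ, HasDerivAt φ (φ' t) t := fun t =>
    ((hU.differentiable (by norm_num) (c t)).hasFDerivAt).comp_hasDerivAt t (hcd t)
  have hd2 : ∀ t : ℝ, HasDerivAt φ' (φ'' t) t := by
    intro t
    have h1 : ContDiff ℝ 1 (fderiv ℝ U) := hU.fderiv_right (by norm_num)
    have h2 : HasFDerivAt (fderiv ℝ U) (fderiv ℝ (fderiv ℝ U) (c t)) (c t) :=
      (h1.differentiable one_ne_zero (c t)).hasFDerivAt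
    have h3 := (h2.comp_hasDerivAt t (hcd t)).clm_apply (hasDerivAt_const t h)
    simpa using h3
  have hbound : ∀ t : ℝ, φ'' t ≤ L * ‖h‖ ^ 2 := by
    intro t
    have := hform (c t) h
    rw [iteratedFDeriv_two_apply] at this
    simpa using this
  -- step 1 : φ' t ≤ φ' 0 + (L‖h‖²) t on [0,1]
  have step1 : ∀ t ∈ Icc (0:ℝ) 1, φ' t ≤ φ' 0 + (L * ‖h‖ ^ 2) * t := by
    have hBd : ∀ t : ℝ, HasDerivAt (fun t => φ' 0 + (L * ‖h‖ ^ 2) * t) (L * ‖h‖ ^ 2) t := by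
      intro t
      simpa using ((hasDerivAt_id t).const_mul (L * ‖h‖ ^ 2)).const_add (φ' 0)
    refine image_le_of_deriv_right_le_deriv_boundary
      (fun t _ => ((hd2 t).continuousAt).continuousWithinAt)
      (fun t _ => (hd2 t).hasDerivWithinAt) (by simp)
      (fun t _ => ((hBd t).continuousAt).continuousWithinAt)
      (fun t _ => (hBd t).hasDerivWithinAt)
      (fun t _ => hbound t)
  have step2 : φ 1 ≤ φ 0 + φ' 0 * 1 + (L * ‖h‖ ^ 2) * 1 ^ 2 / 2 := by
    have hBd : ∀ t : ℝ, HasDerivAt (fun t => φ 0 + φ' 0 * t + (L * ‖h‖ ^ 2) * t ^ 2 / 2)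
        (φ' 0 + (L * ‖h‖ ^ 2) * t) t := by
      intro t
      have h1 : HasDerivAt (fun t : ℝ => t) 1 t := hasDerivAt_id t
      have h2 : HasDerivAt (fun t : ℝ => t ^ 2) (2 * t) t := by simpa using h1.fun_pow 2
      have := ((h1.const_mul (φ' 0)).const_add (φ 0)).fun_add
        ((h2.const_mul (L * ‖h‖ ^ 2 / 2)))
      refine (this.congr_deriv (by ring)).congr_of_eventuallyEq
        (Filter.Eventually.of_forall fun s => ?_)
      dsimp only; ring
    have := image_le_of_deriv_right_le_deriv_boundary
      (f := φ) (f' := φ') (B := fun t => φ 0 + φ' 0 * t + (L * ‖h‖ ^ 2) * t ^ 2 / 2)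
      (B' := fun t => φ' 0 + (L * ‖h‖ ^ 2) * t)
      (fun t _ => ((hd1 t).continuousAt).continuousWithinAt)
      (fun t ht => (hd1 t).hasDerivWithinAt) (by simp)
      (fun t _ => ((hBd t).continuousAt).continuousWithinAt)
      (fun t _ => (hBd t).hasDerivWithinAt)
      (fun t ht => step1 t ⟨ht.1, ht.2.le⟩)
      (right_mem_Icc.2 zero_le_one)
    simpa using this
  have h0 : φ 0 = U x := by simp [hφ, hc]
  have h1 : φ 1 = U (x + h) := by simp [hφ, hc]
  have h2 : φ' 0 = fderiv ℝ U x h := by simp [hφ', hc]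
  rw [h0, h1, h2] at step2
  linarith

lemma sq_norm_grad_le {U : EuclideanSpace ℝ (Fin d) → ℝ} (hU : ContDiff ℝ 2 U) {L : ℝ}
    (hL : 0 < L)
    (hform : ∀ x w : EuclideanSpace ℝ (Fin d), iteratedFDeriv ℝ 2 U x ![w, w] ≤ L * ‖w‖ ^ 2)
    (hpos : ∀ y, 0 ≤ U y) (x : EuclideanSpace ℝ (Fin d)) :
    ‖gradient U x‖ ^ 2 ≤ 2 * L * U x := by
  set gx := gradient U x with hgx
  have ht := taylor_upper hU hform x (-(L⁻¹ • gx))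
  have h1 : fderiv ℝ U x (-(L⁻¹ • gx)) = -(L⁻¹ * ‖gx‖ ^ 2) := by
    rw [← inner_grad]
    rw [inner_neg_left, real_inner_smul_left, real_inner_self_eq_norm_sq]
  have h2 : ‖-(L⁻¹ • gx)‖ ^ 2 = (L⁻¹) ^ 2 * ‖gx‖ ^ 2 := by
    rw [norm_neg, norm_smul]
    simp [abs_of_pos (inv_pos.2 hL), mul_pow]
  rw [h1, h2] at ht
  have h3 := hpos (x + -(L⁻¹ • gx))
  have hL' : L ≠ 0 := ne_of_gt hL
  have : U x - ‖gx‖ ^ 2 / (2 * L) = U x + -(L⁻¹ * ‖gx‖ ^ 2) + L * ((L⁻¹) ^ 2 * ‖gx‖ ^ 2) / 2 := by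
    field_simp
    ring
  have h4 : ‖gx‖ ^ 2 / (2 * L) ≤ U x := by linarith
  rw [div_le_iff₀ (by positivity)] at h4
  linarith

end ZigzagAux
section ZigzagAux2

variable {d : ℕ}

set_option maxHeartbeats 1000000 in
lemma claimG (V F : ℝ → EuclideanSpace ℝ (Fin d)) {a b R : ℝ}
    (hFc : Continuous F)
    (hrc : ∀ s ∈ Ico a b, ∃ ε > 0, ∀ u ∈ Ico s (s + ε), V u = V s)
    (hjump : ∀ s ∈ Ioo a b, ∀ p q : ℝ,
      Tendsto (fun u => ⟪V u, F s⟫) (nhdsWithin s (Ioi s)) (nhds p) →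
      Tendsto (fun u => ⟪V u, F s⟫) (nhdsWithin s (Iio s)) (nhds q) → p ≤ q) :
    ∀ n : ℕ, ∀ S : Finset (EuclideanSpace ℝ (Fin d)), S.card ≤ n →
      (∀ w ∈ S, ‖w‖ ≤ R) →
      ∀ s δ : ℝ, a < s → s < b → 0 < δ → a ≤ s - δ →
      (∀ u ∈ Ioo (s - δ) s, V u ∈ S) →
      ∀ γ > 0, ∃ u ∈ Ioo (s - δ) s, ⟪V s, F s⟫ ≤ ⟪V u, F s⟫ + γ := by
  letI : DecidableEq (EuclideanSpace ℝ (Fin d)) := Classical.decEq _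
  intro n
  induction n with
  | zero =>
    intro S hcard _ s δ has hsb hδ haδ hwin γ hγ
    exfalso
    have hu : s - δ / 2 ∈ Ioo (s - δ) s := ⟨by linarith, by linarith⟩
    have := hwin _ hu
    have hS0 : S = ∅ := Finset.card_eq_zero.1 (Nat.le_zero.1 hcard)
    simp [hS0] at this
  | succ n IH =>
    intro S hcard hnorm s δ has hsb hδ haδ hwin γ hγ
    have hSne : S.Nonempty := ⟨V (s - δ / 2), hwin _ ⟨by linarith, by linarith⟩⟩
    by_cases hrem : ∃ p ∈ S, ∃ δ₁, 0 < δ₁ ∧ δ₁ ≤ δ ∧ ∀ u ∈ Ioo (s - δ₁) s, V u ≠ p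
    · obtain ⟨p, hp, δ₁, hδ₁, hδ₁δ, hnot⟩ := hrem
      have hcard' : (S.erase p).card ≤ n := by
        rw [Finset.card_erase_of_mem hp]
        omega
      obtain ⟨u, hu, hle⟩ := IH (S.erase p) hcard'
        (fun w hw => hnorm w (Finset.mem_of_mem_erase hw)) s δ₁ has hsb hδ₁
        (by linarith)
        (fun u hu => Finset.mem_erase.2 ⟨hnot u hu, hwin u ⟨by
          have := hu.1; linarith, hu.2⟩⟩) γ hγ
      exact ⟨u, ⟨by have := hu.1; linarith, hu.2⟩, hle⟩
    push_neg at hrem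
    by_cases heq : ∀ p ∈ S, ∀ q ∈ S, ⟪p, F s⟫ = (⟪q, F s⟫ : ℝ)
    · -- all cluster values equal : use the jump hypothesis
      obtain ⟨ε₅, hε₅, hconst⟩ := hrc s ⟨has.le, hsb⟩
      set u₀ := s - δ / 2 with hu₀def
      have hu₀ : u₀ ∈ Ioo (s - δ) s := ⟨by simp [hu₀def]; linarith, by simp [hu₀def]; linarith⟩
      have hβ : ∀ u ∈ Ioo (s - δ) s, ⟪V u, F s⟫ = (⟪V u₀, F s⟫ : ℝ) :=
        fun u hu => heq _ (hwin u hu) _ (hwin u₀ hu₀)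
      have hright : Tendsto (fun u => (⟪V u, F s⟫ : ℝ)) (nhdsWithin s (Ioi s))
          (nhds ⟪V s, F s⟫) := by
        have hmem : Ioo s (s + ε₅) ∈ nhdsWithin s (Ioi s) :=
          Ioo_mem_nhdsGT_of_mem ⟨le_refl s, by linarith⟩
        have heq' : (fun u => (⟪V u, F s⟫ : ℝ)) =ᶠ[nhdsWithin s (Ioi s)]
            fun _ => ⟪V s, F s⟫ := by
          filter_upwards [hmem] with u hu
          rw [hconst u ⟨hu.1.le, hu.2⟩]
        exact Tendsto.congr' heq'.symm tendsto_const_nhds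
      have hleft : Tendsto (fun u => (⟪V u, F s⟫ : ℝ)) (nhdsWithin s (Iio s))
          (nhds ⟪V u₀, F s⟫) := by
        have hmem : Ioo (s - δ) s ∈ nhdsWithin s (Iio s) :=
          Ioo_mem_nhdsLT_of_mem ⟨by linarith, le_refl s⟩
        have heq' : (fun u => (⟪V u, F s⟫ : ℝ)) =ᶠ[nhdsWithin s (Iio s)]
            fun _ => ⟪V u₀, F s⟫ := by
          filter_upwards [hmem] with u hu
          exact hβ u hu
        exact Tendsto.congr' heq'.symm tendsto_const_nhds
      have hle := hjump s ⟨has, hsb⟩ _ _ hright hleft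
      exact ⟨u₀, hu₀, by linarith⟩
    · -- two distinct cluster values : derive a contradiction
      exfalso
      push_neg at heq
      obtain ⟨p₁, hp₁, q₁, hq₁, hne⟩ := heq
      set φ : EuclideanSpace ℝ (Fin d) → ℝ := fun w => ⟪w, F s⟫ with hφdef
      have hA'ne : (S.image φ).Nonempty := ⟨φ p₁, Finset.mem_image_of_mem _ hp₁⟩
      obtain ⟨M, hMmem, hMmax⟩ : ∃ M ∈ S.image φ, ∀ y ∈ S.image φ, y ≤ M :=
        ⟨(S.image φ).max' hA'ne, (S.image φ).max'_mem hA'ne,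
          fun y hy => Finset.le_max' _ y hy⟩
      have hleM : ∀ w ∈ S, φ w ≤ M := fun w hw => hMmax _ (Finset.mem_image_of_mem _ hw)
      have hex_low : ∃ p₀ ∈ S, φ p₀ < M := by
        rcases lt_or_ge (φ p₁) (φ q₁) with h | h
        · exact ⟨p₁, hp₁, lt_of_lt_of_le h (hleM _ hq₁)⟩
        · rcases lt_or_eq_of_le h with h' | h'
          · exact ⟨q₁, hq₁, lt_of_lt_of_le h' (hleM _ hp₁)⟩
          · exact absurd h'.symm hne
      obtain ⟨p₀, hp₀S, hp₀M⟩ := hex_low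
      have hA''ne : ((S.image φ).filter (fun y => y < M)).Nonempty :=
        ⟨φ p₀, Finset.mem_filter.2 ⟨Finset.mem_image_of_mem _ hp₀S, hp₀M⟩⟩
      obtain ⟨M₂, hM₂mem, hM₂max⟩ : ∃ M₂ ∈ (S.image φ).filter (fun y => y < M),
          ∀ y ∈ (S.image φ).filter (fun y => y < M), y ≤ M₂ :=
        ⟨_, Finset.max'_mem _ hA''ne, fun y hy => Finset.le_max' _ y hy⟩
      have hM₂ : M₂ < M := (Finset.mem_filter.1 hM₂mem).2
      set γ₁ := M - M₂ with hγ₁def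
      have hγ₁pos : 0 < γ₁ := by simp only [hγ₁def]; linarith
      have hlow_le : ∀ w ∈ S, φ w < M → φ w ≤ M₂ := fun w hw hwM =>
        hM₂max _ (Finset.mem_filter.2 ⟨Finset.mem_image_of_mem _ hw, hwM⟩)
      obtain ⟨qs, hqsS, hqsM⟩ : ∃ q ∈ S, φ q = M := Finset.mem_image.1 hMmem
      -- continuity control
      have hcont : Tendsto (fun u => R * ‖F u - F s‖) (nhds s) (nhds 0) := by
        have h1 : Tendsto (fun u => ‖F u - F s‖) (nhds s) (nhds ‖F s - F s‖) :=
          ((hFc.tendsto s).sub tendsto_const_nhds).norm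
        simpa using h1.const_mul R
      have hev : ∀ᶠ u in nhds s, R * ‖F u - F s‖ < γ₁ / 4 :=
        hcont.eventually_lt_const (by linarith)
      obtain ⟨δ₂', hδ₂', hball⟩ := Metric.eventually_nhds_iff.1 hev
      have herr : ∀ w ∈ S, ∀ u : ℝ, dist u s < δ₂' → |φ w - ⟪w, F u⟫| ≤ γ₁ / 4 := by
        intro w hw u hu
        have h1 : φ w - ⟪w, F u⟫ = ⟪w, F s - F u⟫ := by
          simp only [hφdef, inner_sub_right]
        rw [h1]
        have h2 := abs_real_inner_le_norm w (F s - F u)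
        have h3 : ‖F s - F u‖ = ‖F u - F s‖ := by rw [norm_sub_rev]
        have h4 : ‖w‖ * ‖F s - F u‖ ≤ R * ‖F u - F s‖ := by
          rw [h3]; exact mul_le_mul_of_nonneg_right (hnorm w hw) (norm_nonneg _)
        have h5 := hball hu
        linarith
      set δ₂ := min δ₂' δ with hδ₂def
      have hδ₂pos : 0 < δ₂ := lt_min hδ₂' hδ
      -- u₁ with pattern p₀ (low), close to s
      obtain ⟨u₁, hu₁win, hu₁p⟩ := hrem p₀ hp₀S δ₂ hδ₂pos (min_le_right _ _)
      -- u₂ with pattern qs (high), in (u₁, s)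
      obtain ⟨u₂, hu₂win, hu₂q⟩ := hrem qs hqsS (s - u₁) (by have := hu₁win.2; linarith)
        (by have := hu₁win.1; have : s - δ₂ < u₁ := this; have h6 : s - δ ≤ s - δ₂ := by
              have := min_le_right δ₂' δ; simp only [hδ₂def] at *; linarith
            linarith)
      have hu₂ : u₂ ∈ Ioo u₁ s := by
        have h1 := hu₂win.1; have h2 := hu₂win.2
        constructor
        · linarith [sub_sub_cancel s u₁ ▸ h1]
        · exact h2
      -- the crossing point
      set T₀ := {u : ℝ | u ∈ Icc u₁ u₂ ∧ M ≤ ⟪V u, F s⟫} with hT₀def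
      have hu₂T₀ : u₂ ∈ T₀ := by
        refine ⟨⟨hu₂.1.le, le_refl _⟩, ?_⟩
        rw [hu₂q]
        exact hqsM.ge
      have hbddT : BddBelow T₀ := ⟨u₁, fun t ht => ht.1.1⟩
      have hT₀ne : T₀.Nonempty := ⟨u₂, hu₂T₀⟩
      set c := sInf T₀ with hcdef
      have hc_le : c ≤ u₂ := csInf_le hbddT hu₂T₀
      have hc_ge : u₁ ≤ c := le_csInf hT₀ne fun t ht => ht.1.1
      -- basic window facts
      have hsδ₂ : s - δ ≤ s - δ₂ := by
        have := min_le_right δ₂' δ; simp only [hδ₂def] at *; linarith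
      have hu₁gt : s - δ₂ < u₁ := hu₁win.1
      have hau₁ : a < u₁ := by linarith
      have hwin' : ∀ u : ℝ, u₁ ≤ u → u < s → V u ∈ S := fun u h1 h2 =>
        hwin u ⟨by linarith, h2⟩
      have hdist : ∀ u : ℝ, u₁ ≤ u → u < s → dist u s < δ₂' := by
        intro u h1 h2
        rw [Real.dist_eq, abs_of_neg (by linarith)]
        have := min_le_left δ₂' δ
        simp only [hδ₂def] at hu₁gt ⊢
        have : s - min δ₂' δ < u := by linarith
        have := min_le_left δ₂' δ
        linarith [min_le_left δ₂' δ]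
      -- (A) V c is a high pattern
      have hcIco : c ∈ Ico a b := ⟨by linarith, by linarith [hu₂.2, hsb]⟩
      obtain ⟨ε₃, hε₃, hconst₃⟩ := hrc c hcIco
      obtain ⟨t, htT₀, htlt⟩ := (csInf_lt_iff hbddT hT₀ne).1
        (show sInf T₀ < c + ε₃ by rw [← hcdef]; linarith)
      have htc : c ≤ t := csInf_le hbddT htT₀
      have hVtc : V t = V c := hconst₃ t ⟨htc, by linarith⟩
      have hA : M ≤ ⟪V c, F s⟫ := by rw [← hVtc]; exact htT₀.2
      -- (B) u₁ < c
      have hu₁Ico : u₁ ∈ Ico a b := ⟨hau₁.le, by linarith [hu₂.2, hu₂.1, hsb]⟩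
      obtain ⟨ε₄, hε₄, hconst₄⟩ := hrc u₁ hu₁Ico
      have hcu₁ : u₁ < c := by
        have hlb : ∀ t ∈ T₀, u₁ + min ε₄ (u₂ - u₁) ≤ t := by
          intro t ht
          by_contra hlt
          push_neg at hlt
          have ht1 : u₁ ≤ t := ht.1.1
          have hVt : V t = V u₁ := hconst₄ t ⟨ht1, by
            have := min_le_left ε₄ (u₂ - u₁); linarith⟩
          have : M ≤ ⟪V t, F s⟫ := ht.2
          rw [hVt, hu₁p] at this
          exact absurd this (not_le.2 hp₀M)
        have := le_csInf hT₀ne hlb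
        have hmin : 0 < min ε₄ (u₂ - u₁) := lt_min hε₄ (by linarith [hu₂.1])
        rw [← hcdef] at this
        linarith
      -- (C) IH at c with the low patterns
      have hqs_not : qs ∉ S.filter (fun w => φ w < M) := by
        intro hmem
        have := (Finset.mem_filter.1 hmem).2
        rw [hqsM] at this
        exact lt_irrefl _ this
      have hScard : (S.filter (fun w => φ w < M)).card ≤ n := by
        have hsub : S.filter (fun w => φ w < M) ⊆ S.erase qs := by
          intro w hw
          rcases Finset.mem_filter.1 hw with ⟨hwS, hwM⟩
          refine Finset.mem_erase.2 ⟨?_, hwS⟩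
          intro hwq
          rw [hwq, hqsM] at hwM
          exact lt_irrefl _ hwM
        have := Finset.card_le_card hsub
        rw [Finset.card_erase_of_mem hqsS] at this
        omega
      have hwinc : ∀ u ∈ Ioo (c - (c - u₁)) c, V u ∈ S.filter (fun w => φ w < M) := by
        intro u hu
        have hu1 : u₁ < u := by have := hu.1; linarith [sub_sub_cancel c u₁]
        have hus : u < s := by linarith [hu.2, hc_le, hu₂.2]
        have hVS : V u ∈ S := hwin' u hu1.le hus
        refine Finset.mem_filter.2 ⟨hVS, ?_⟩
        by_contra hge
        push_neg at hge
        have huT₀ : u ∈ T₀ := ⟨⟨hu1.le, by linarith [hu.2, hc_le]⟩, hge⟩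
        have := csInf_le hbddT huT₀
        rw [← hcdef] at this
        linarith [hu.2]
      obtain ⟨u₃, hu₃, hu₃le⟩ := IH (S.filter (fun w => φ w < M)) hScard
        (fun w hw => hnorm w (Finset.mem_filter.1 hw).1) c (c - u₁)
        (by linarith) (by linarith [hu₂.2, hsb]) (by linarith)
        (by linarith [sub_sub_cancel c u₁]) hwinc (γ₁ / 4) (by linarith)
      -- assemble the contradiction
      have hu₃1 : u₁ < u₃ := by have := hu₃.1; linarith [sub_sub_cancel c u₁]
      have hu₃s : u₃ < s := by linarith [hu₃.2, hc_le, hu₂.2]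
      have hVu₃S : V u₃ ∈ S := hwin' u₃ hu₃1.le hu₃s
      have hVu₃M : φ (V u₃) < M := (Finset.mem_filter.1 (hwinc u₃ hu₃)).2
      have hVu₃M₂ : φ (V u₃) ≤ M₂ := hlow_le _ hVu₃S hVu₃M
      have hVcS : V c ∈ S := hwin' c hc_ge (by linarith [hu₂.2])
      have herrc := herr (V c) hVcS c (hdist c hc_ge (by linarith [hu₂.2]))
      have herru₃ := herr (V u₃) hVu₃S c (hdist c hc_ge (by linarith [hu₂.2]))
      -- φ (V c) ≥ M ; ⟪V c, F c⟫ ≥ M - γ₁/4 ; ⟪V u₃, F c⟫ ≥ ⟪V c, F c⟫ - γ₁/4 ;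
      -- φ (V u₃) ≥ ⟪V u₃, F c⟫ - γ₁/4 ≥ M - 3γ₁/4 > M₂ : contradiction
      have e1 : |φ (V c) - ⟪V c, F c⟫| ≤ γ₁ / 4 := herrc
      have e2 : |φ (V u₃) - ⟪V u₃, F c⟫| ≤ γ₁ / 4 := herru₃
      have e1' := abs_le.1 e1
      have e2' := abs_le.1 e2
      have hAc : M ≤ φ (V c) := hA
      simp only [hγ₁def] at hγ₁pos e1' e2' hu₃le ⊢
      linarith [e1'.1, e1'.2, e2'.1, e2'.2]

end ZigzagAux2

section ZigzagAux3

variable {d : ℕ}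

lemma jumpLemma (V F : ℝ → EuclideanSpace ℝ (Fin d)) {a b R : ℝ} (hR : 0 ≤ R)
    (hFc : Continuous F)
    (hrc : ∀ s ∈ Ico a b, ∃ ε > 0, ∀ u ∈ Ico s (s + ε), V u = V s)
    (hjump : ∀ s ∈ Ioo a b, ∀ p q : ℝ,
      Tendsto (fun u => ⟪V u, F s⟫) (nhdsWithin s (Ioi s)) (nhds p) →
      Tendsto (fun u => ⟪V u, F s⟫) (nhdsWithin s (Iio s)) (nhds q) → p ≤ q)
    (S₀ : Finset (EuclideanSpace ℝ (Fin d))) (hS₀ : ∀ u ∈ Ioo a b, V u ∈ S₀)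
    (hnorm : ∀ w ∈ S₀, ‖w‖ ≤ R) :
    ∀ s ∈ Ioo a b, ∀ γ > 0, ∃ u ∈ Ioo a s, ⟪V s, F s⟫ ≤ ⟪V u, F u⟫ + γ := by
  intro s hs γ hγ
  have hcont : Tendsto (fun u => R * ‖F u - F s‖) (nhds s) (nhds 0) := by
    have h1 : Tendsto (fun u => ‖F u - F s‖) (nhds s) (nhds ‖F s - F s‖) :=
      ((hFc.tendsto s).sub tendsto_const_nhds).norm
    simpa using h1.const_mul R
  have hev : ∀ᶠ u in nhds s, R * ‖F u - F s‖ < γ / 4 :=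
    hcont.eventually_lt_const (by linarith)
  obtain ⟨δ₁, hδ₁, hball⟩ := Metric.eventually_nhds_iff.1 hev
  set δ := min δ₁ (s - a) with hδdef
  have hδpos : 0 < δ := lt_min hδ₁ (by linarith [hs.1])
  have haδ : a ≤ s - δ := by
    have := min_le_right δ₁ (s - a); simp only [hδdef]; linarith
  obtain ⟨u, hu, hle⟩ := claimG V F hFc hrc hjump S₀.card S₀ le_rfl hnorm s δ hs.1 hs.2
    hδpos haδ (fun u hu => hS₀ u ⟨by linarith [hu.1], lt_trans hu.2 hs.2⟩) (γ / 2)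
    (by linarith)
  refine ⟨u, ⟨by linarith [hu.1], hu.2⟩, ?_⟩
  have hVuS : V u ∈ S₀ := hS₀ u ⟨by linarith [hu.1], lt_trans hu.2 hs.2⟩
  have hdist : dist u s < δ₁ := by
    rw [Real.dist_eq, abs_of_neg (by linarith [hu.2])]
    have h1 := hu.1
    have := min_le_left δ₁ (s - a)
    simp only [hδdef] at h1
    linarith
  have herr : |(⟪V u, F s⟫ : ℝ) - ⟪V u, F u⟫| ≤ γ / 4 := by
    have h1 : (⟪V u, F s⟫ : ℝ) - ⟪V u, F u⟫ = ⟪V u, F s - F u⟫ := by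
      rw [inner_sub_right]
    rw [h1]
    have h2 := abs_real_inner_le_norm (V u) (F s - F u)
    have h3 : ‖F s - F u‖ = ‖F u - F s‖ := norm_sub_rev _ _
    have h4 : ‖V u‖ * ‖F s - F u‖ ≤ R * ‖F u - F s‖ := by
      rw [h3]; exact mul_le_mul_of_nonneg_right (hnorm _ hVuS) (norm_nonneg _)
    have h5 := hball hdist
    linarith
  have := abs_le.1 herr
  linarith [this.1, this.2]

lemma lemmaC {lam : ℝ → ℝ} {a b K : ℝ} (hab : a < b) (hK : 0 ≤ K)
    (hP3 : ∀ s ∈ Ico a b, ∃ ε > 0, ∀ u, s ≤ u → u < s + ε → u < b →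
      lam u ≤ lam s + K * (u - s))
    (hJ : ∀ s ∈ Ioo a b, ∀ γ > 0, ∃ u ∈ Ioo a s, lam s ≤ lam u + γ) :
    ∀ ε > 0, ∀ u ∈ Ico a b, lam u ≤ lam a + K * (u - a) + ε := by
  intro ε hε
  by_contra hcon
  push_neg at hcon
  obtain ⟨u₀, hu₀, hviol⟩ := hcon
  set Sv := {u : ℝ | u ∈ Ico a b ∧ lam a + K * (u - a) + ε < lam u} with hSvdef
  have hSvne : Sv.Nonempty := ⟨u₀, hu₀, hviol⟩
  have hbdd : BddBelow Sv := ⟨a, fun t ht => ht.1.1⟩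
  set c := sInf Sv with hcdef
  have hca : a ≤ c := le_csInf hSvne fun t ht => ht.1.1
  have hcu₀ : c ≤ u₀ := csInf_le hbdd ⟨hu₀, hviol⟩
  have hcb : c < b := lt_of_le_of_lt hcu₀ hu₀.2
  have hgood : ∀ u, a ≤ u → u < c → lam u ≤ lam a + K * (u - a) + ε := by
    intro u h1 h2
    by_contra hh
    push_neg at hh
    have : u ∈ Sv := ⟨⟨h1, lt_trans h2 hcb⟩, hh⟩
    have := csInf_le hbdd this
    rw [← hcdef] at this
    linarith
  have hgtc : lam a + K * (c - a) + ε < lam c := by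
    by_contra hle
    push_neg at hle
    obtain ⟨ε₀, hε₀, hub⟩ := hP3 c ⟨hca, hcb⟩
    obtain ⟨v, hvSv, hvlt⟩ := (csInf_lt_iff hbdd hSvne).1
      (show sInf Sv < c + ε₀ by rw [← hcdef]; linarith)
    have hvc : c ≤ v := csInf_le hbdd hvSv
    have h1 := hub v hvc hvlt hvSv.1.2
    have h2 : K * (v - a) = K * (c - a) + K * (v - c) := by ring
    have h3 := hvSv.2
    linarith
  have hac : a < c := by
    rcases eq_or_lt_of_le hca with h | h
    · exfalso
      rw [← h] at hgtc
      simp at hgtc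
      linarith
    · exact h
  have hlim : lam c ≤ lam a + K * (c - a) + ε := by
    refine le_of_forall_pos_le_add ?_
    intro γ hγ
    obtain ⟨u, hu, hle⟩ := hJ c ⟨hac, hcb⟩ γ hγ
    have h1 := hgood u hu.1.le hu.2
    have h2 : K * (u - a) ≤ K * (c - a) :=
      mul_le_mul_of_nonneg_left (by linarith [hu.2]) hK
    linarith
  linarith

lemma lemmaA {g lam : ℝ → ℝ} {a b K : ℝ} (hab : a ≤ b) (hK : 0 ≤ K)
    (hg : ContinuousOn g (Icc a b))
    (hg' : ∀ x ∈ Ico a b, HasDerivWithinAt g (lam x) (Ici x) x)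
    (hlam : ∀ ε > 0, ∀ u ∈ Ico a b, lam u ≤ lam a + K * (u - a) + ε) :
    ∀ t ∈ Icc a b, g t ≤ g a + lam a * (t - a) + K / 2 * (t - a) ^ 2 := by
  intro t ht
  rcases eq_or_lt_of_le ht.1 with h | hta
  · rw [← h]; simp
  have key : ∀ ε > 0, g t ≤ g a + lam a * (t - a) + K / 2 * (t - a) ^ 2 + ε * (t - a) := by
    intro ε hε
    have hBd : ∀ x : ℝ, HasDerivAt
        (fun y => g a + lam a * (y - a) + K / 2 * (y - a) ^ 2 + ε * (y - a))
        (lam a + K * (x - a) + ε) x := by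
      intro x
      have hid : HasDerivAt (fun y : ℝ => y - a) 1 x := (hasDerivAt_id x).sub_const a
      have h2 : HasDerivAt (fun y : ℝ => (y - a) ^ 2) (2 * (x - a)) x := by
        simpa using hid.fun_pow 2
      have h3 := (((hid.const_mul (lam a)).const_add (g a)).fun_add
        (h2.const_mul (K / 2))).fun_add (hid.const_mul ε)
      refine (h3.congr_deriv (by ring)).congr_of_eventuallyEq
        (Filter.Eventually.of_forall fun s => ?_)
      dsimp only
    have := image_le_of_deriv_right_le_deriv_boundary
      (f := g) (f' := lam)
      (B := fun y => g a + lam a * (y - a) + K / 2 * (y - a) ^ 2 + ε * (y - a))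
      (B' := fun x => lam a + K * (x - a) + ε)
      hg hg' (by simp)
      (fun x _ => ((hBd x).continuousAt).continuousWithinAt)
      (fun x _ => (hBd x).hasDerivWithinAt)
      (fun x hx => hlam ε hε x hx) ht
    linarith
  have htpos : 0 < t - a := by linarith
  have : ∀ γ > (0:ℝ), g t ≤ g a + lam a * (t - a) + K / 2 * (t - a) ^ 2 + γ := by
    intro γ hγ
    have := key (γ / (t - a)) (by positivity)
    have h1 : γ / (t - a) * (t - a) = γ := by field_simp
    linarith [this, h1.ge, h1.le]
  refine le_of_forall_pos_le_add fun γ hγ => ?_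
  linarith [this γ hγ]

end ZigzagAux3

section ZigzagAux4

variable {d : ℕ}

lemma P3 {U : EuclideanSpace ℝ (Fin d) → ℝ} (hU : ContDiff ℝ 2 U) {L T : ℝ}
    (hform : ∀ x w : EuclideanSpace ℝ (Fin d), iteratedFDeriv ℝ 2 U x ![w, w] ≤ L * ‖w‖ ^ 2)
    {X V : ℝ → EuclideanSpace ℝ (Fin d)} (hXc : Continuous X)
    (hX : ∀ s ∈ Ico (0:ℝ) T, HasDerivWithinAt X (V s) (Ici s) s)
    (hrc : ∀ s ∈ Ico (0:ℝ) T, ∃ ε > 0, ∀ u ∈ Ico s (s + ε), V u = V s)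
    {s : ℝ} (hs : s ∈ Ico (0:ℝ) T) :
    ∃ ε > 0, ∀ u, s ≤ u → u < s + ε → u < T →
      fderiv ℝ U (X u) (V u) ≤ fderiv ℝ U (X s) (V s) + (L * ‖V s‖ ^ 2) * (u - s) := by
  obtain ⟨ε, hε, hconst⟩ := hrc s hs
  refine ⟨ε, hε, fun u hsu huε huT => ?_⟩
  have hVu : V u = V s := hconst u ⟨hsu, huε⟩
  have hfc : Continuous fun r => fderiv ℝ U (X r) (V s) := by
    have h1 : Continuous (fderiv ℝ U) := hU.continuous_fderiv (by norm_num)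
    exact (h1.comp hXc).clm_apply continuous_const
  have hf' : ∀ r ∈ Ico s u, HasDerivWithinAt (fun r => fderiv ℝ U (X r) (V s))
      (fderiv ℝ (fderiv ℝ U) (X r) (V r) (V s)) (Ici r) r := fun r hr =>
    hasDeriv_fderiv_comp hU (hX r ⟨le_trans hs.1 hr.1, lt_trans hr.2 huT⟩) (V s)
  have hbound : ∀ r ∈ Ico s u, fderiv ℝ (fderiv ℝ U) (X r) (V r) (V s) ≤ L * ‖V s‖ ^ 2 := by
    intro r hr
    have hVr : V r = V s := hconst r ⟨hr.1, lt_trans hr.2 huε⟩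
    rw [hVr]
    have := hform (X r) (V s)
    rw [iteratedFDeriv_two_apply] at this
    simpa using this
  have hBd : ∀ x : ℝ, HasDerivAt
      (fun r => fderiv ℝ U (X s) (V s) + (L * ‖V s‖ ^ 2) * (r - s)) (L * ‖V s‖ ^ 2) x := by
    intro x
    simpa using (((hasDerivAt_id x).sub_const s).const_mul (L * ‖V s‖ ^ 2)).const_add
      (fderiv ℝ U (X s) (V s))
  have := image_le_of_deriv_right_le_deriv_boundary
    (f := fun r => fderiv ℝ U (X r) (V s))
    (f' := fun r => fderiv ℝ (fderiv ℝ U) (X r) (V r) (V s))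
    (B := fun r => fderiv ℝ U (X s) (V s) + (L * ‖V s‖ ^ 2) * (r - s))
    (B' := fun _ => L * ‖V s‖ ^ 2)
    hfc.continuousOn hf' (by simp)
    (fun x _ => ((hBd x).continuousAt).continuousWithinAt)
    (fun x _ => (hBd x).hasDerivWithinAt)
    hbound (right_mem_Icc.2 hsu)
  rw [hVu]
  exact this

end ZigzagAux4

section ZigzagAux5

variable {d : ℕ}

lemma stepBound {U : EuclideanSpace ℝ (Fin d) → ℝ} (hU : ContDiff ℝ 2 U) {L T : ℝ}
    (hL0 : 0 < L)
    (hform : ∀ x w : EuclideanSpace ℝ (Fin d), iteratedFDeriv ℝ 2 U x ![w, w] ≤ L * ‖w‖ ^ 2)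
    {X V : ℝ → EuclideanSpace ℝ (Fin d)} (hXc : Continuous X)
    (hX : ∀ s ∈ Ico (0:ℝ) T, HasDerivWithinAt X (V s) (Ici s) s)
    (hrc : ∀ s ∈ Ico (0:ℝ) T, ∃ ε > 0, ∀ u ∈ Ico s (s + ε), V u = V s)
    {a b : ℝ} (hab : a ≤ b) (ha0 : 0 ≤ a) (hbT : b ≤ T)
    (hpm : ∀ u, a ≤ u → u < b → u < T → ∀ i, V u i = V a i ∨ V u i = -(V a i))
    (hjump : ∀ s ∈ Ioo a b, ∀ p q : ℝ,
      Tendsto (fun u => ⟪V u, gradient U (X s)⟫) (nhdsWithin s (Ioi s)) (nhds p) →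
      Tendsto (fun u => ⟪V u, gradient U (X s)⟫) (nhdsWithin s (Iio s)) (nhds q) → p ≤ q)
    (hVa : ‖V a‖ ≤ 2 * Real.sqrt d) :
    ∀ t ∈ Icc a b, U (X t) ≤ U (X a) + (fderiv ℝ U (X a) (V a)) * (t - a)
      + 2 * L * d * (t - a) ^ 2 := by
  intro t ht
  rcases eq_or_lt_of_le hab with heq | hlt
  · have hta : t = a := le_antisymm (heq ▸ ht.2) ht.1
    rw [hta]
    simp
  -- nondegenerate interval
  letI : DecidableEq (EuclideanSpace ℝ (Fin d)) := Classical.decEq _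
  have hnormV : ∀ u, a ≤ u → u < b → u < T → ‖V u‖ ≤ 2 * Real.sqrt d := by
    intro u h1 h2 h3
    rw [norm_eq_of_pm (V u) (V a) (hpm u h1 h2 h3)]
    exact hVa
  -- pattern finset
  set W : Finset (EuclideanSpace ℝ (Fin d)) := Finset.image
    (fun f : Fin d → Bool => (WithLp.equiv 2 (Fin d → ℝ)).symm
      (fun i => if f i then V a i else -(V a i))) Finset.univ with hWdef
  have hS₀ : ∀ u ∈ Ioo a b, V u ∈ W := by
    intro u hu
    have huT : u < T := lt_of_lt_of_le hu.2 hbT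
    have hpmu := hpm u hu.1.le hu.2 huT
    rw [hWdef]
    refine Finset.mem_image.2 ⟨fun i => decide (V u i = V a i), Finset.mem_univ _, ?_⟩
    rw [Equiv.symm_apply_eq]
    funext i
    rw [WithLp.equiv_apply]
    by_cases h : V u i = V a i
    · simp [h]
    · have h2 : V u i = -(V a i) := (hpmu i).resolve_left h
      rw [if_neg (by simpa using h)]
      exact h2.symm
  have hnormW : ∀ w ∈ W, ‖w‖ ≤ 2 * Real.sqrt d := by
    intro w hw
    rw [hWdef] at hw
    obtain ⟨f, _, hfw⟩ := Finset.mem_image.1 hw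
    have hnw : ‖w‖ = ‖V a‖ := by
      apply norm_eq_of_pm
      intro i
      rw [← hfw]
      rcases Bool.eq_false_or_eq_true (f i) with h | h <;>
        simp [WithLp.equiv_symm_apply, h]
    rw [hnw]
    exact hVa
  have hrc' : ∀ s ∈ Ico a b, ∃ ε > 0, ∀ u ∈ Ico s (s + ε), V u = V s :=
    fun s hs => hrc s ⟨le_trans ha0 hs.1, lt_of_lt_of_le hs.2 hbT⟩
  have hFc : Continuous (fun u => gradient U (X u)) := by
    have h1 : Continuous (fderiv ℝ U) := hU.continuous_fderiv (by norm_num)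
    exact ((InnerProductSpace.toDual ℝ
      (EuclideanSpace ℝ (Fin d))).symm.continuous.comp h1).comp hXc
  have hsd : (0:ℝ) ≤ 2 * Real.sqrt d := by positivity
  -- jump property for lam
  have hJ : ∀ s ∈ Ioo a b, ∀ γ > 0, ∃ u ∈ Ioo a s,
      fderiv ℝ U (X s) (V s) ≤ fderiv ℝ U (X u) (V u) + γ := by
    intro s hs γ hγ
    obtain ⟨u, hu, hle⟩ := jumpLemma V (fun u => gradient U (X u)) hsd hFc hrc' hjump
      W hS₀ hnormW s hs γ hγ
    refine ⟨u, hu, ?_⟩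
    rw [← inner_grad U (X s) (V s), ← inner_grad U (X u) (V u)]
    exact hle
  -- local growth property for lam
  have hP3' : ∀ s ∈ Ico a b, ∃ ε > 0, ∀ u, s ≤ u → u < s + ε → u < b →
      fderiv ℝ U (X u) (V u) ≤ fderiv ℝ U (X s) (V s) + (4 * L * d) * (u - s) := by
    intro s hs
    obtain ⟨ε, hε, hbd⟩ := P3 hU hform hXc hX hrc
      (s := s) ⟨le_trans ha0 hs.1, lt_of_lt_of_le hs.2 hbT⟩
    refine ⟨ε, hε, fun u h1 h2 h3 => ?_⟩
    have h4 := hbd u h1 h2 (lt_of_lt_of_le h3 hbT)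
    have hVs : ‖V s‖ ≤ 2 * Real.sqrt d :=
      hnormV s hs.1 hs.2 (lt_of_lt_of_le hs.2 hbT)
    have h7 : (2 * Real.sqrt d) ^ 2 = 4 * d := by
      rw [mul_pow, Real.sq_sqrt (by positivity : (0:ℝ) ≤ (d:ℝ))]
      norm_num
    have h5 : L * ‖V s‖ ^ 2 ≤ 4 * L * d := by
      have h6 : ‖V s‖ ^ 2 ≤ (2 * Real.sqrt d) ^ 2 := by
        nlinarith [norm_nonneg (V s)]
      nlinarith
    have h8 : (L * ‖V s‖ ^ 2) * (u - s) ≤ (4 * L * d) * (u - s) :=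
      mul_le_mul_of_nonneg_right h5 (by linarith)
    linarith
  have hd40 : (0:ℝ) ≤ 4 * L * d := by positivity
  have hlamb := lemmaC (lam := fun u => fderiv ℝ U (X u) (V u)) hlt hd40 hP3' hJ
  have hgc : ContinuousOn (fun u => U (X u)) (Icc a b) :=
    ((hU.continuous).comp hXc).continuousOn
  have hg' : ∀ x ∈ Ico a b, HasDerivWithinAt (fun u => U (X u))
      (fderiv ℝ U (X x) (V x)) (Ici x) x := fun x hx =>
    hasDeriv_U_comp hU (hX x ⟨le_trans ha0 hx.1, lt_of_lt_of_le hx.2 hbT⟩)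
  have hfin := lemmaA (lam := fun u => fderiv ℝ U (X u) (V u)) hab hd40 hgc hg' hlamb t ht
  have h42 : (4 * L * (d:ℝ)) / 2 * (t - a) ^ 2 = 2 * L * d * (t - a) ^ 2 := by ring
  linarith

end ZigzagAux5


set_option maxHeartbeats 1000000 in
/-- Lemma 1 of the paper: there is a universal constant `C` such that for any
zigzag-type trajectory `X` with piecewise constant velocity `V` on `[0, T]`, refresh times
`0 = T_0 < T_1 < ⋯ < T_N ≤ T` (`T_{N+1} := T`), whose velocity components between refresh
times only flip signs and whose flips do not increase `t ↦ V(t)·∇U(X(t))`, under Assumption 1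
on `U` together with conditions (a)–(e), one has `sup_{t∈[0,T]} U(X(t)) ≤ C√L·T·d`. -/
theorem sup_U_along_zigzag_trajectory :
    ∃ C : ℝ, 0 < C ∧
      ∀ (d : ℕ), 1 ≤ d →
      ∀ (m L T : ℝ), 0 < m → m ≤ 1 → 1 ≤ L → 0 < T → L / m ≤ Real.sqrt L * T →
      ∀ (U : EuclideanSpace ℝ (Fin d) → ℝ), ContDiff ℝ 2 U →
      (∀ x w : EuclideanSpace ℝ (Fin d),
        m * ‖w‖ ^ 2 ≤ iteratedFDeriv ℝ 2 U x ![w, w] ∧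
        iteratedFDeriv ℝ 2 U x ![w, w] ≤ L * ‖w‖ ^ 2) →
      U 0 = 0 → (∀ y ≠ 0, 0 < U y) →
      ∀ (N : ℕ), 1 ≤ N →
      ∀ (Ts : ℕ → ℝ), Ts 0 = 0 → (∀ k < N, Ts k < Ts (k + 1)) → Ts N ≤ T → Ts (N + 1) = T →
      ∀ (X : ℝ → EuclideanSpace ℝ (Fin d)) (V : ℝ → EuclideanSpace ℝ (Fin d)),
      -- X is Lipschitz and piecewise linear with right derivative V, V piecewise constant
      (∃ K : NNReal, LipschitzWith K X) →
      (∀ s ∈ Set.Ico (0 : ℝ) T, HasDerivWithinAt X (V s) (Set.Ici s) s) →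
      (∀ s ∈ Set.Ico (0 : ℝ) T, ∃ ε > 0, ∀ u ∈ Set.Ico s (s + ε), V u = V s) →
      -- (i) between refresh times each velocity component only flips its sign
      (∀ k ≤ N, ∀ t ∈ Set.Ico (Ts k) (Ts (k + 1)) ∩ Set.Ico (0 : ℝ) T, ∀ i : Fin d,
        V t i = V (Ts k) i ∨ V t i = -(V (Ts k) i)) →
      -- (ii) at every discontinuity of V strictly between refresh times,
      -- V·∇U(X(s)) does not increase
      (∀ k ≤ N, ∀ s ∈ Set.Ioo (Ts k) (Ts (k + 1)), ∀ a b : ℝ,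
        Tendsto (fun u => ⟪V u, gradient U (X s)⟫) (nhdsWithin s (Set.Ioi s)) (nhds a) →
        Tendsto (fun u => ⟪V u, gradient U (X s)⟫) (nhdsWithin s (Set.Iio s)) (nhds b) →
        a ≤ b) →
      -- (a) the number of refreshments is comparable to √L·T
      (1 / 2 * (Real.sqrt L * T) ≤ N ∧ (N : ℝ) ≤ 3 / 2 * (Real.sqrt L * T)) →
      -- (b) refreshed velocities are nearly orthogonal to the gradient
      (∀ k ≤ N, |⟪V (Ts k), gradient U (X (Ts k))⟫|
        ≤ Real.sqrt (d / (Real.sqrt L * T)) * ‖gradient U (X (Ts k))‖) →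
      -- (c) refreshed velocities have norm at most 2√d
      (∀ k ≤ N, ‖V (Ts k)‖ ≤ 2 * Real.sqrt d) →
      -- (d) initial potential bound
      U (X 0) ≤ (L / m) * d →
      -- (e) sum of squares of inter-refresh durations
      (∑ k ∈ Finset.range (N + 1), (Ts (k + 1) - Ts k) ^ 2) ≤ 4 * T / Real.sqrt L →
      ∀ t ∈ Set.Icc (0 : ℝ) T, U (X t) ≤ C * Real.sqrt L * T * d := by
  classical
  refine ⟨18, by norm_num, ?_⟩
  intro d hd m L T hm hm1 hL hT hκ U hU hform hU0 hUposne N hN Ts hTs0 hTsinc hTsN hTsN1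
    X V hlip hX hrc hi hii haN hbN hcN hdN heN t ht
  obtain ⟨Klip, hKlip⟩ := hlip
  have hXc : Continuous X := hKlip.continuous
  have hL0 : (0:ℝ) < L := lt_of_lt_of_le one_pos hL
  have hsL : (0:ℝ) < Real.sqrt L := Real.sqrt_pos.2 hL0
  have hd0 : (1:ℝ) ≤ (d:ℝ) := by exact_mod_cast hd
  have hUpos : ∀ y, 0 ≤ U y := by
    intro y
    rcases eq_or_ne y 0 with h | h
    · rw [h, hU0]
    · exact (hUposne y h).le
  have hformU : ∀ x w, iteratedFDeriv ℝ 2 U x ![w, w] ≤ L * ‖w‖ ^ 2 :=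
    fun x w => (hform x w).2
  have hstep : ∀ k ≤ N, Ts k ≤ Ts (k + 1) := by
    intro k hk
    rcases lt_or_eq_of_le hk with h | h
    · exact (hTsinc k h).le
    · subst h; rw [hTsN1]; exact hTsN
  have hmono : ∀ k, k ≤ N + 1 → ∀ j, j ≤ k → Ts j ≤ Ts k := by
    intro k
    induction k with
    | zero => intro _ j hj; rw [Nat.le_zero.1 hj]
    | succ k ih =>
      intro hk j hj
      rcases Nat.eq_or_lt_of_le hj with h | h
      · rw [h]
      · exact le_trans (ih (by omega) j (by omega)) (hstep k (by omega))
  have hTs_nonneg : ∀ k, k ≤ N + 1 → 0 ≤ Ts k := by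
    intro k hk; rw [← hTs0]; exact hmono k hk 0 (by omega)
  have hTs_le_T : ∀ k, k ≤ N + 1 → Ts k ≤ T := by
    intro k hk; rw [← hTsN1]; exact hmono (N+1) le_rfl k hk
  -- per-interval bound
  have hstepk : ∀ k, k ≤ N → ∀ t' ∈ Icc (Ts k) (Ts (k+1)),
      U (X t') ≤ U (X (Ts k)) + (fderiv ℝ U (X (Ts k)) (V (Ts k))) * (t' - Ts k)
        + 2 * L * d * (t' - Ts k) ^ 2 := by
    intro k hk
    refine stepBound hU hL0 hformU hXc hX hrc (hstep k hk) (hTs_nonneg k (by omega))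
      (hTs_le_T (k+1) (by omega)) ?_ (hii k hk) (hcN k hk)
    intro u h1 h2 h3
    exact hi k hk u ⟨⟨h1, h2⟩, ⟨le_trans (hTs_nonneg k (by omega)) h1, h3⟩⟩
  -- max of potential at refresh times
  obtain ⟨Mx, hEleM, jstar, hjstar, hjeq⟩ : ∃ Mx : ℝ,
      (∀ j, j ≤ N → U (X (Ts j)) ≤ Mx) ∧ ∃ j, j ≤ N ∧ U (X (Ts j)) = Mx := by
    have hne : ((Finset.range (N+1)).image fun j => U (X (Ts j))).Nonempty :=
      ⟨U (X (Ts 0)), Finset.mem_image_of_mem _ (Finset.mem_range.2 (Nat.succ_pos N))⟩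
    refine ⟨((Finset.range (N+1)).image fun j => U (X (Ts j))).max' hne, ?_, ?_⟩
    · intro j hj
      exact Finset.le_max' _ _ (Finset.mem_image_of_mem (fun j => U (X (Ts j)))
        (Finset.mem_range.2 (Nat.lt_succ_of_le hj)))
    · obtain ⟨j, hj, hjeq⟩ := Finset.mem_image.1 (Finset.max'_mem _ hne)
      exact ⟨j, Nat.lt_succ_iff.1 (Finset.mem_range.1 hj), hjeq⟩
  have hM0 : 0 ≤ Mx := le_trans (hUpos _) (hEleM 0 (Nat.zero_le N))
  have hq0 : (0:ℝ) ≤ Real.sqrt ((d:ℝ) / (Real.sqrt L * T)) := Real.sqrt_nonneg _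
  have hqs0 : (0:ℝ) ≤ Real.sqrt ((d:ℝ) / (Real.sqrt L * T)) * Real.sqrt (2 * L * Mx) :=
    mul_nonneg hq0 (Real.sqrt_nonneg _)
  have hlamb : ∀ k, k ≤ N → |fderiv ℝ U (X (Ts k)) (V (Ts k))|
      ≤ Real.sqrt ((d:ℝ) / (Real.sqrt L * T)) * Real.sqrt (2 * L * Mx) := by
    intro k hk
    have h1 := hbN k hk
    rw [inner_grad U (X (Ts k)) (V (Ts k))] at h1
    have h2 : ‖gradient U (X (Ts k))‖ ≤ Real.sqrt (2 * L * Mx) := by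
      have h3 := sq_norm_grad_le hU hL0 hformU hUpos (X (Ts k))
      have h4 : ‖gradient U (X (Ts k))‖ ^ 2 ≤ 2 * L * Mx := by
        have h5 := hEleM k hk
        nlinarith [mul_le_mul_of_nonneg_left h5 (by linarith : (0:ℝ) ≤ 2 * L)]
      calc ‖gradient U (X (Ts k))‖ = Real.sqrt (‖gradient U (X (Ts k))‖ ^ 2) :=
            (Real.sqrt_sq (norm_nonneg _)).symm
        _ ≤ Real.sqrt (2 * L * Mx) := Real.sqrt_le_sqrt h4
    exact le_trans h1 (mul_le_mul_of_nonneg_left h2 hq0)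
  have hstep2 : ∀ k, k ≤ N → ∀ t' ∈ Icc (Ts k) (Ts (k+1)),
      U (X t') ≤ U (X (Ts k))
        + (Real.sqrt ((d:ℝ) / (Real.sqrt L * T)) * Real.sqrt (2 * L * Mx)) * (t' - Ts k)
        + 2 * L * d * (t' - Ts k) ^ 2 := by
    intro k hk t' ht'
    have h1 := hstepk k hk t' ht'
    have h3 : fderiv ℝ U (X (Ts k)) (V (Ts k)) * (t' - Ts k)
        ≤ (Real.sqrt ((d:ℝ) / (Real.sqrt L * T)) * Real.sqrt (2 * L * Mx)) * (t' - Ts k) :=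
      mul_le_mul_of_nonneg_right (le_trans (le_abs_self _) (hlamb k hk))
        (by linarith [ht'.1])
    linarith
  have hEbound : ∀ j, j ≤ N + 1 → U (X (Ts j)) ≤ U (X 0) +
      ∑ i ∈ Finset.range j,
        ((Real.sqrt ((d:ℝ) / (Real.sqrt L * T)) * Real.sqrt (2 * L * Mx)) * (Ts (i+1) - Ts i)
          + 2 * L * d * (Ts (i+1) - Ts i) ^ 2) := by
    intro j
    induction j with
    | zero => intro _; simp [hTs0]
    | succ j ih =>
      intro hj
      have h1 := ih (by omega)
      have h2 := hstep2 j (by omega) (Ts (j+1)) ⟨hstep j (by omega), le_refl _⟩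
      rw [Finset.sum_range_succ]
      linarith
  have hsq_part : ∀ j, j ≤ N + 1 →
      ∑ i ∈ Finset.range j, (Ts (i+1) - Ts i) ^ 2 ≤ 4 * T / Real.sqrt L := by
    intro j hj
    refine le_trans (Finset.sum_le_sum_of_subset_of_nonneg
      (Finset.range_subset_range.2 (by omega)) (fun i _ _ => sq_nonneg _)) heN
  have hLd0 : (0:ℝ) ≤ 2 * L * d := by positivity
  have hboundE : ∀ j, j ≤ N + 1 → U (X (Ts j)) ≤ U (X 0)
      + (Real.sqrt ((d:ℝ) / (Real.sqrt L * T)) * Real.sqrt (2 * L * Mx)) * T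
      + 2 * L * (d:ℝ) * (4 * T / Real.sqrt L) := by
    intro j hj
    have h1 := hEbound j hj
    have h2 : ∑ i ∈ Finset.range j,
        ((Real.sqrt ((d:ℝ) / (Real.sqrt L * T)) * Real.sqrt (2 * L * Mx)) * (Ts (i+1) - Ts i)
          + 2 * L * d * (Ts (i+1) - Ts i) ^ 2)
        = (Real.sqrt ((d:ℝ) / (Real.sqrt L * T)) * Real.sqrt (2 * L * Mx))
            * (∑ i ∈ Finset.range j, (Ts (i+1) - Ts i))
          + 2 * L * d * (∑ i ∈ Finset.range j, (Ts (i+1) - Ts i) ^ 2) := by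
      rw [Finset.sum_add_distrib, Finset.mul_sum, Finset.mul_sum]
    rw [h2, Finset.sum_range_sub, hTs0, sub_zero] at h1
    have h3 : (Real.sqrt ((d:ℝ) / (Real.sqrt L * T)) * Real.sqrt (2 * L * Mx)) * Ts j
        ≤ (Real.sqrt ((d:ℝ) / (Real.sqrt L * T)) * Real.sqrt (2 * L * Mx)) * T :=
      mul_le_mul_of_nonneg_left (hTs_le_T j hj) hqs0
    have h4 : 2 * L * (d:ℝ) * (∑ i ∈ Finset.range j, (Ts (i+1) - Ts i) ^ 2)
        ≤ 2 * L * d * (4 * T / Real.sqrt L) :=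
      mul_le_mul_of_nonneg_left (hsq_part j hj) hLd0
    linarith
  -- bound at the arbitrary time t
  have hgt : U (X t) ≤ U (X 0)
      + (Real.sqrt ((d:ℝ) / (Real.sqrt L * T)) * Real.sqrt (2 * L * Mx)) * T
      + 2 * L * (d:ℝ) * (4 * T / Real.sqrt L) := by
    have hP0 : Ts 0 ≤ t := by rw [hTs0]; exact ht.1
    set k := Nat.findGreatest (fun j => Ts j ≤ t) N with hkdef
    have hk : k ≤ N := Nat.findGreatest_le N
    have hk1 : Ts k ≤ t := by
      rw [hkdef]
      exact Nat.findGreatest_spec (P := fun j => Ts j ≤ t) (Nat.zero_le N) hP0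
    have hk2 : t ≤ Ts (k+1) := by
      rcases Nat.lt_or_ge k N with h | h
      · by_contra hlt2
        push_neg at hlt2
        exact (Nat.findGreatest_is_greatest (P := fun j => Ts j ≤ t) (n := N)
          (by omega) (by omega)) hlt2.le
      · have hkN : k = N := le_antisymm hk h
        rw [hkN, hTsN1]; exact ht.2
    have h1 := hstep2 k hk t ⟨hk1, hk2⟩
    have h2 := hEbound k (by omega)
    have h3 : ∑ i ∈ Finset.range k,
        ((Real.sqrt ((d:ℝ) / (Real.sqrt L * T)) * Real.sqrt (2 * L * Mx)) * (Ts (i+1) - Ts i)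
          + 2 * L * d * (Ts (i+1) - Ts i) ^ 2)
        = (Real.sqrt ((d:ℝ) / (Real.sqrt L * T)) * Real.sqrt (2 * L * Mx)) * Ts k
          + 2 * L * d * (∑ i ∈ Finset.range k, (Ts (i+1) - Ts i) ^ 2) := by
      rw [Finset.sum_add_distrib, ← Finset.mul_sum, ← Finset.mul_sum,
        Finset.sum_range_sub, hTs0, sub_zero]
    rw [h3] at h2
    have h4 : (Real.sqrt ((d:ℝ) / (Real.sqrt L * T)) * Real.sqrt (2 * L * Mx)) * Ts k
        + (Real.sqrt ((d:ℝ) / (Real.sqrt L * T)) * Real.sqrt (2 * L * Mx)) * (t - Ts k)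
        = (Real.sqrt ((d:ℝ) / (Real.sqrt L * T)) * Real.sqrt (2 * L * Mx)) * t := by ring
    have h5 : (Real.sqrt ((d:ℝ) / (Real.sqrt L * T)) * Real.sqrt (2 * L * Mx)) * t
        ≤ (Real.sqrt ((d:ℝ) / (Real.sqrt L * T)) * Real.sqrt (2 * L * Mx)) * T :=
      mul_le_mul_of_nonneg_left ht.2 hqs0
    have h6 : (t - Ts k) ^ 2 ≤ (Ts (k+1) - Ts k) ^ 2 := by nlinarith
    have h8 : ∑ i ∈ Finset.range (k+1), (Ts (i+1) - Ts i) ^ 2 ≤ 4 * T / Real.sqrt L :=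
      hsq_part (k+1) (by omega)
    rw [Finset.sum_range_succ] at h8
    have h9 : 2 * L * (d:ℝ) * (∑ i ∈ Finset.range k, (Ts (i+1) - Ts i) ^ 2)
        + 2 * L * (d:ℝ) * (t - Ts k) ^ 2 ≤ 2 * L * d * (4 * T / Real.sqrt L) := by
      have := mul_le_mul_of_nonneg_left
        (show (∑ i ∈ Finset.range k, (Ts (i+1) - Ts i) ^ 2) + (t - Ts k) ^ 2
          ≤ 4 * T / Real.sqrt L by linarith) hLd0
      linarith [this, mul_add (2 * L * (d:ℝ))
        (∑ i ∈ Finset.range k, (Ts (i+1) - Ts i) ^ 2) ((t - Ts k) ^ 2)]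
    linarith
  -- numeric endgame
  have hA0 : (0:ℝ) < Real.sqrt L * T * d := by
    have : (0:ℝ) < (d:ℝ) := by linarith
    exact mul_pos (mul_pos hsL hT) this
  have hE0A : U (X 0) ≤ Real.sqrt L * T * d := by
    calc U (X 0) ≤ (L/m) * d := hdN
      _ ≤ (Real.sqrt L * T) * d := mul_le_mul_of_nonneg_right hκ (by linarith)
      _ = Real.sqrt L * T * d := by ring
  have hLs : Real.sqrt L * Real.sqrt L = L := Real.mul_self_sqrt hL0.le
  have h8A : 2 * L * (d:ℝ) * (4 * T / Real.sqrt L) = 8 * (Real.sqrt L * T * d) := by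
    field_simp
    linear_combination (-8) * hLs
  have hqsT : (Real.sqrt ((d:ℝ) / (Real.sqrt L * T)) * Real.sqrt (2 * L * Mx)) * T
      = Real.sqrt (2 * (Real.sqrt L * T * d) * Mx) := by
    have h1 : (0:ℝ) ≤ (d:ℝ) / (Real.sqrt L * T) := by positivity
    rw [← Real.sqrt_mul h1, ← Real.sqrt_sq hT.le]
    rw [← Real.sqrt_mul (by positivity)]
    congr 1
    field_simp
    linear_combination (-(T ^ 2 * Mx)) * hLs - Mx * Real.sqrt L ^ 2 * Real.sq_sqrt (sq_nonneg T)
  rw [hqsT, h8A] at hgt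
  have hMxb : Mx ≤ U (X 0) + Real.sqrt (2 * (Real.sqrt L * T * d) * Mx)
      + 8 * (Real.sqrt L * T * d) := by
    have := hboundE jstar (by omega)
    rw [hqsT, h8A] at this
    rw [hjeq] at this
    exact this
  have hMx18 : Mx ≤ 18 * (Real.sqrt L * T * d) := by
    by_contra hcon
    push_neg at hcon
    have hsq2 : Real.sqrt (2 * (Real.sqrt L * T * d) * Mx) ≤ Mx / 3 := by
      have h1 : 2 * (Real.sqrt L * T * d) * Mx ≤ (Mx / 3) ^ 2 := by nlinarith
      calc Real.sqrt (2 * (Real.sqrt L * T * d) * Mx)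
          ≤ Real.sqrt ((Mx / 3) ^ 2) := Real.sqrt_le_sqrt h1
        _ = Mx / 3 := Real.sqrt_sq (by nlinarith)
    linarith
  have hsqf : Real.sqrt (2 * (Real.sqrt L * T * d) * Mx) ≤ 6 * (Real.sqrt L * T * d) := by
    have h1 : 2 * (Real.sqrt L * T * d) * Mx ≤ (6 * (Real.sqrt L * T * d)) ^ 2 := by nlinarith
    calc Real.sqrt (2 * (Real.sqrt L * T * d) * Mx)
        ≤ Real.sqrt ((6 * (Real.sqrt L * T * d)) ^ 2) := Real.sqrt_le_sqrt h1
      _ = 6 * (Real.sqrt L * T * d) := Real.sqrt_sq (by linarith)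
  have hfinal : U (X t) ≤ 15 * (Real.sqrt L * T * d) := by linarith
  have : (18:ℝ) * Real.sqrt L * T * d = 18 * (Real.sqrt L * T * d) := by ring
  linarith
end
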